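/- arXiv:2301.04300 — 11 statements merged into one kernel-verified Lean document; each statement's English description precedes it below -/
import Mathlib

section
/- Let n, k be positive natural numbers and let Y : [0,∞) × ℝ^n → ℝ^k be any map (thought of as the output trajectory t ↦ Y(t,x₀) of a forward complete system started from initial state x₀). Then the following are equivalent. (1) Y satisfies: (i) Lagrange output stability: for every R > 0 the set { |Y(t,x₀)| : x₀ ∈ ℝ^n, |x₀| < R, t ≥ 0 } is bounded; (ii) Lyapunov output stability: for every ε > 0 there exists δ > 0 such that |Y(t,x₀)| ≤ ε for all t ≥ 0 whenever |x₀| < δ; (iii) uniform global output attractivity: for every ε > 0 and every R > 0 there exists T > 0 such that |Y(t,x₀)| ≤ ε for all t ≥ T whenever |x₀| < R. (2) There exists a class KL function σ such that |Y(t,x₀)| ≤ σ(|x₀|, t) for all x₀ ∈ ℝ^n and all t ≥ 0. (Here |·| denotes the Euclidean norm.) -/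
noncomputable section

/-- A function `σ : [0,∞) × [0,∞) → [0,∞)` is of class KL if for each fixed `t ≥ 0` the map
`s ↦ σ s t` is continuous, strictly increasing and vanishes at `0`, and for each fixed `s ≥ 0`
the map `t ↦ σ s t` is non-increasing and tends to `0` at infinity. -/
def IsClassKL (σ : ℝ → ℝ → ℝ) : Prop :=
  (∀ s t, 0 ≤ s → 0 ≤ t → 0 ≤ σ s t) ∧
  (∀ t, 0 ≤ t → ContinuousOn (fun s => σ s t) (Set.Ici 0) ∧
    StrictMonoOn (fun s => σ s t) (Set.Ici 0) ∧ σ 0 t = 0) ∧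
  (∀ s, 0 ≤ s → AntitoneOn (fun t => σ s t) (Set.Ici 0) ∧
    Filter.Tendsto (fun t => σ s t) Filter.atTop (nhds 0))

namespace UGAOSProof

open Real Set Filter MeasureTheory intervalIntegral

variable {n k : ℕ} (Y : ℝ → EuclideanSpace ℝ (Fin n) → EuclideanSpace ℝ (Fin k))

def SS (s : ℝ) : Set ℝ :=
  {r | ∃ x₀ : EuclideanSpace ℝ (Fin n), ∃ t : ℝ, ‖x₀‖ ≤ s ∧ 0 ≤ t ∧ r = ‖Y t x₀‖}

def TT (s τ : ℝ) : Set ℝ :=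
  {r | ∃ x₀ : EuclideanSpace ℝ (Fin n), ∃ t : ℝ, ‖x₀‖ ≤ s ∧ τ ≤ t ∧ 0 ≤ t ∧ r = ‖Y t x₀‖}

noncomputable def gg (s : ℝ) : ℝ := sSup (SS Y s)
noncomputable def gm (s : ℝ) : ℝ := gg Y (max s 0)
noncomputable def hh (s τ : ℝ) : ℝ := sSup (TT Y s τ)
noncomputable def ww (x : ℝ) : ℝ := (Real.sqrt (gm Y x) + gm Y x) * Real.exp x
noncomputable def wInt (s : ℝ) : ℝ := ∫ v in (1:ℝ)..2, ww Y (s * v)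
noncomputable def al (s : ℝ) : ℝ := s + wInt Y s
noncomputable def LL (t : ℝ) : Set ℝ :=
  insert 0 {r | ∃ s : ℝ, 0 < s ∧ r = hh Y s t / al Y s}
noncomputable def lam0 (t : ℝ) : ℝ := sSup (LL Y t)
noncomputable def lam (t : ℝ) : ℝ := lam0 Y t + Real.exp (-t)
noncomputable def sig (s t : ℝ) : ℝ := al Y s * min 1 (lam Y t)

section Lemmas

variable (hLag : ∀ R : ℝ, 0 < R → ∃ C : ℝ, ∀ x₀ : EuclideanSpace ℝ (Fin n),
    ‖x₀‖ < R → ∀ t : ℝ, 0 ≤ t → ‖Y t x₀‖ ≤ C)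
variable (hLya : ∀ ε : ℝ, 0 < ε → ∃ δ : ℝ, 0 < δ ∧ ∀ x₀ : EuclideanSpace ℝ (Fin n),
    ‖x₀‖ < δ → ∀ t : ℝ, 0 ≤ t → ‖Y t x₀‖ ≤ ε)
variable (hAttr : ∀ ε R : ℝ, 0 < ε → 0 < R → ∃ T : ℝ, 0 < T ∧
    ∀ x₀ : EuclideanSpace ℝ (Fin n), ‖x₀‖ < R → ∀ t : ℝ, T ≤ t → ‖Y t x₀‖ ≤ ε)

include hLag hLya hAttr

lemma SS_nonempty {s : ℝ} (hs : 0 ≤ s) : (SS Y s).Nonempty :=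
  ⟨‖Y 0 0‖, 0, 0, by simpa using hs, le_refl 0, rfl⟩

lemma SS_bdd {s : ℝ} (hs : 0 ≤ s) : BddAbove (SS Y s) := by
  obtain ⟨C, hC⟩ := hLag (s + 1) (by linarith)
  refine ⟨C, ?_⟩
  rintro r ⟨x₀, t, h1, h2, rfl⟩
  exact hC x₀ (by linarith) t h2

lemma le_gg {x₀ : EuclideanSpace ℝ (Fin n)} {s t : ℝ} (hx : ‖x₀‖ ≤ s) (ht : 0 ≤ t) :
    ‖Y t x₀‖ ≤ gg Y s :=
  le_csSup (SS_bdd Y hLag hLya hAttr ((norm_nonneg _).trans hx)) ⟨x₀, t, hx, ht, rfl⟩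

lemma gg_nonneg {s : ℝ} (hs : 0 ≤ s) : 0 ≤ gg Y s :=
  (norm_nonneg _).trans (le_gg Y hLag hLya hAttr (by simpa using hs) le_rfl (x₀ := 0) (t := 0))

lemma gg_mono {s₁ s₂ : ℝ} (hs : 0 ≤ s₁) (h12 : s₁ ≤ s₂) : gg Y s₁ ≤ gg Y s₂ := by
  refine csSup_le_csSup (SS_bdd Y hLag hLya hAttr (hs.trans h12)) (SS_nonempty Y hLag hLya hAttr hs) ?_
  rintro r ⟨x₀, t, h1, h2, rfl⟩
  exact ⟨x₀, t, h1.trans h12, h2, rfl⟩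

lemma gm_eq {s : ℝ} (hs : 0 ≤ s) : gm Y s = gg Y s := by rw [gm, max_eq_left hs]

lemma gm_mono : Monotone (gm Y) := fun a b hab =>
  gg_mono Y hLag hLya hAttr (le_max_right _ _) (max_le_max hab le_rfl)

lemma gm_nonneg (s : ℝ) : 0 ≤ gm Y s := gg_nonneg Y hLag hLya hAttr (le_max_right _ _)

lemma gg_small : ∀ ε : ℝ, 0 < ε → ∃ δ : ℝ, 0 < δ ∧ ∀ s, 0 ≤ s → s < δ → gg Y s ≤ ε := by
  intro ε hε
  obtain ⟨δ, hδ, hδ'⟩ := hLya ε hε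
  refine ⟨δ, hδ, fun s hs hsδ => csSup_le (SS_nonempty Y hLag hLya hAttr hs) ?_⟩
  rintro r ⟨x₀, t, h1, h2, rfl⟩
  exact hδ' x₀ (lt_of_le_of_lt h1 hsδ) t h2

lemma gg_zero : gg Y 0 = 0 := by
  refine le_antisymm ?_ (gg_nonneg Y hLag hLya hAttr le_rfl)
  refine le_of_forall_pos_le_add (fun ε hε => ?_)
  obtain ⟨δ, hδ, hδ'⟩ := gg_small Y hLag hLya hAttr ε hε
  have := hδ' 0 le_rfl hδ
  linarith

lemma ww_nonneg (x : ℝ) : 0 ≤ ww Y x :=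
  mul_nonneg (add_nonneg (Real.sqrt_nonneg _) (gm_nonneg Y hLag hLya hAttr x)) (Real.exp_pos _).le

lemma ww_mono : Monotone (ww Y) := by
  intro a b hab
  have h1 : gm Y a ≤ gm Y b := gm_mono Y hLag hLya hAttr hab
  exact mul_le_mul (add_le_add (Real.sqrt_le_sqrt h1) h1) (Real.exp_le_exp.2 hab)
    (Real.exp_pos _).le (add_nonneg (Real.sqrt_nonneg _) (gm_nonneg Y hLag hLya hAttr b))

lemma ww_zero : ww Y 0 = 0 := by
  simp [ww, gm, gg_zero Y hLag hLya hAttr]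

lemma ww_comp_integrable {s : ℝ} (hs : 0 ≤ s) :
    IntervalIntegrable (fun v => ww Y (s * v)) volume 1 2 :=
  ((ww_mono Y hLag hLya hAttr).comp (monotone_mul_left_of_nonneg hs)).intervalIntegrable

lemma wInt_nonneg {s : ℝ} (hs : 0 ≤ s) : 0 ≤ wInt Y s :=
  intervalIntegral.integral_nonneg (by norm_num) (fun u _ => ww_nonneg Y hLag hLya hAttr _)

lemma wInt_mono {s₁ s₂ : ℝ} (hs : 0 ≤ s₁) (h12 : s₁ ≤ s₂) : wInt Y s₁ ≤ wInt Y s₂ := by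
  refine intervalIntegral.integral_mono_on (by norm_num)
    (ww_comp_integrable Y hLag hLya hAttr hs) (ww_comp_integrable Y hLag hLya hAttr (hs.trans h12)) (fun v hv => ?_)
  exact ww_mono Y hLag hLya hAttr (mul_le_mul_of_nonneg_right h12 (le_trans zero_le_one hv.1))

lemma ww_le_wInt {s : ℝ} (hs : 0 ≤ s) : ww Y s ≤ wInt Y s := by
  have h : ww Y s = ∫ _ in (1:ℝ)..2, ww Y s := by
    rw [intervalIntegral.integral_const]; norm_num
  rw [h]
  refine intervalIntegral.integral_mono_on (by norm_num)
    intervalIntegrable_const (ww_comp_integrable Y hLag hLya hAttr hs) (fun v hv => ?_)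
  exact ww_mono Y hLag hLya hAttr (le_mul_of_one_le_right hs hv.1)

lemma wInt_le {s : ℝ} (hs : 0 ≤ s) : wInt Y s ≤ ww Y (2 * s) := by
  have h : ww Y (2 * s) = ∫ _ in (1:ℝ)..2, ww Y (2 * s) := by
    rw [intervalIntegral.integral_const]; norm_num
  rw [h]
  refine intervalIntegral.integral_mono_on (by norm_num)
    (ww_comp_integrable Y hLag hLya hAttr hs) intervalIntegrable_const (fun v hv => ?_)
  refine ww_mono Y hLag hLya hAttr ?_
  calc s * v ≤ s * 2 := mul_le_mul_of_nonneg_left hv.2 hs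
  _ = 2 * s := mul_comm s 2

lemma wInt_zero : wInt Y 0 = 0 := by
  simp [wInt, ww_zero Y hLag hLya hAttr]

lemma al_zero : al Y 0 = 0 := by simp [al, wInt_zero Y hLag hLya hAttr]

lemma al_nonneg {s : ℝ} (hs : 0 ≤ s) : 0 ≤ al Y s :=
  add_nonneg hs (wInt_nonneg Y hLag hLya hAttr hs)

lemma al_pos {s : ℝ} (hs : 0 < s) : 0 < al Y s :=
  lt_of_lt_of_le hs (le_add_of_nonneg_right (wInt_nonneg Y hLag hLya hAttr hs.le))

lemma al_strict : StrictMonoOn (al Y) (Set.Ici 0) := fun a ha _ _ hab =>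
  add_lt_add_of_lt_of_le hab (wInt_mono Y hLag hLya hAttr ha hab.le)

lemma ww_le_al {s : ℝ} (hs : 0 ≤ s) : ww Y s ≤ al Y s :=
  (ww_le_wInt Y hLag hLya hAttr hs).trans (le_add_of_nonneg_left hs)

lemma gg_le_al {s : ℝ} (hs : 0 ≤ s) : gg Y s ≤ al Y s := by
  have h1 : gg Y s ≤ ww Y s := by
    rw [← gm_eq Y hLag hLya hAttr hs]
    calc gm Y s = gm Y s * 1 := (mul_one _).symm
    _ ≤ (Real.sqrt (gm Y s) + gm Y s) * Real.exp s :=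
      mul_le_mul (le_add_of_nonneg_left (Real.sqrt_nonneg _)) (Real.one_le_exp hs)
        zero_le_one (add_nonneg (Real.sqrt_nonneg _) (gm_nonneg Y hLag hLya hAttr s))
  exact h1.trans (ww_le_al Y hLag hLya hAttr hs)

lemma sqrt_gg_le_al {s : ℝ} (hs : 0 ≤ s) : Real.sqrt (gg Y s) ≤ al Y s := by
  have h1 : Real.sqrt (gg Y s) ≤ ww Y s := by
    rw [← gm_eq Y hLag hLya hAttr hs]
    calc Real.sqrt (gm Y s) = Real.sqrt (gm Y s) * 1 := (mul_one _).symm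
    _ ≤ (Real.sqrt (gm Y s) + gm Y s) * Real.exp s :=
      mul_le_mul (le_add_of_nonneg_right (gm_nonneg Y hLag hLya hAttr s)) (Real.one_le_exp hs)
        zero_le_one (add_nonneg (Real.sqrt_nonneg _) (gm_nonneg Y hLag hLya hAttr s))
  exact h1.trans (ww_le_al Y hLag hLya hAttr hs)

lemma TT_nonempty {s τ : ℝ} (hs : 0 ≤ s) : (TT Y s τ).Nonempty :=
  ⟨‖Y (max τ 0) 0‖, 0, max τ 0, by simpa using hs, le_max_left _ _, le_max_right _ _, rfl⟩

lemma TT_bdd {s τ : ℝ} (hs : 0 ≤ s) : BddAbove (TT Y s τ) := by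
  obtain ⟨C, hC⟩ := hLag (s + 1) (by linarith)
  refine ⟨C, ?_⟩
  rintro r ⟨x₀, t, h1, h2, h3, rfl⟩
  exact hC x₀ (by linarith) t h3

lemma le_hh {x₀ : EuclideanSpace ℝ (Fin n)} {s τ t : ℝ} (hx : ‖x₀‖ ≤ s) (hτ : τ ≤ t)
    (ht : 0 ≤ t) : ‖Y t x₀‖ ≤ hh Y s τ :=
  le_csSup (TT_bdd Y hLag hLya hAttr ((norm_nonneg _).trans hx)) ⟨x₀, t, hx, hτ, ht, rfl⟩

lemma hh_nonneg {s τ : ℝ} (hs : 0 ≤ s) : 0 ≤ hh Y s τ :=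
  (norm_nonneg _).trans
    (le_hh Y hLag hLya hAttr (by simpa using hs) (le_max_left _ _) (le_max_right _ _)
      (x₀ := 0) (t := max τ 0))

lemma hh_le_gg {s τ : ℝ} (hs : 0 ≤ s) : hh Y s τ ≤ gg Y s := by
  refine csSup_le (TT_nonempty Y hLag hLya hAttr hs) ?_
  rintro r ⟨x₀, t, h1, h2, h3, rfl⟩
  exact le_gg Y hLag hLya hAttr h1 h3

lemma hh_anti {s τ₁ τ₂ : ℝ} (hs : 0 ≤ s) (h : τ₁ ≤ τ₂) : hh Y s τ₂ ≤ hh Y s τ₁ := by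
  refine csSup_le_csSup (TT_bdd Y hLag hLya hAttr hs) (TT_nonempty Y hLag hLya hAttr hs) ?_
  rintro r ⟨x₀, t, h1, h2, h3, rfl⟩
  exact ⟨x₀, t, h1, h.trans h2, h3, rfl⟩

lemma hh_mono {s₁ s₂ τ : ℝ} (hs : 0 ≤ s₁) (h12 : s₁ ≤ s₂) : hh Y s₁ τ ≤ hh Y s₂ τ := by
  refine csSup_le_csSup (TT_bdd Y hLag hLya hAttr (hs.trans h12)) (TT_nonempty Y hLag hLya hAttr hs) ?_
  rintro r ⟨x₀, t, h1, h2, h3, rfl⟩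
  exact ⟨x₀, t, h1.trans h12, h2, h3, rfl⟩

lemma hh_small {s ε : ℝ} (hs : 0 ≤ s) (hε : 0 < ε) :
    ∃ T : ℝ, 0 < T ∧ ∀ τ, T ≤ τ → hh Y s τ ≤ ε := by
  obtain ⟨T, hT, hT'⟩ := hAttr ε (s + 1) hε (by linarith)
  refine ⟨T, hT, fun τ hτ => csSup_le (TT_nonempty Y hLag hLya hAttr hs) ?_⟩
  rintro r ⟨x₀, t, h1, h2, h3, rfl⟩
  exact hT' x₀ (by linarith) t (hτ.trans h2)

lemma key1 {s t : ℝ} (hs : 0 < s) : hh Y s t ≤ Real.exp (-s) * al Y s := by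
  have hexp : Real.exp (-s) * Real.exp s = 1 := by rw [← Real.exp_add]; simp
  calc hh Y s t ≤ gg Y s := hh_le_gg Y hLag hLya hAttr hs.le
  _ = gm Y s := (gm_eq Y hLag hLya hAttr hs.le).symm
  _ ≤ Real.sqrt (gm Y s) + gm Y s := le_add_of_nonneg_left (Real.sqrt_nonneg _)
  _ = Real.exp (-s) * ww Y s := by
    rw [ww, Real.exp_neg]
    field_simp
  _ ≤ Real.exp (-s) * al Y s :=
    mul_le_mul_of_nonneg_left (ww_le_al Y hLag hLya hAttr hs.le) (Real.exp_pos _).le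

lemma ratio1 {s t : ℝ} (hs : 0 < s) : hh Y s t / al Y s ≤ Real.exp (-s) := by
  rw [div_le_iff₀ (al_pos Y hLag hLya hAttr hs)]
  exact key1 Y hLag hLya hAttr hs

lemma ratio2 {s t : ℝ} (hs : 0 < s) : hh Y s t / al Y s ≤ Real.sqrt (hh Y s t) := by
  rw [div_le_iff₀ (al_pos Y hLag hLya hAttr hs)]
  calc hh Y s t = Real.sqrt (hh Y s t) * Real.sqrt (hh Y s t) :=
    (Real.mul_self_sqrt (hh_nonneg Y hLag hLya hAttr hs.le)).symm
  _ ≤ Real.sqrt (hh Y s t) * Real.sqrt (gg Y s) :=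
    mul_le_mul_of_nonneg_left (Real.sqrt_le_sqrt (hh_le_gg Y hLag hLya hAttr hs.le)) (Real.sqrt_nonneg _)
  _ ≤ Real.sqrt (hh Y s t) * al Y s :=
    mul_le_mul_of_nonneg_left (sqrt_gg_le_al Y hLag hLya hAttr hs.le) (Real.sqrt_nonneg _)

lemma LL_bdd (t : ℝ) : BddAbove (LL Y t) := by
  refine ⟨1, ?_⟩
  rintro r (rfl | ⟨s, hs, rfl⟩)
  · exact zero_le_one
  · exact (ratio1 Y hLag hLya hAttr hs).trans (Real.exp_le_one_iff.2 (by linarith))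

lemma lam0_nonneg (t : ℝ) : 0 ≤ lam0 Y t :=
  le_csSup (LL_bdd Y hLag hLya hAttr t) (Set.mem_insert _ _)

lemma lam0_ge {s t : ℝ} (hs : 0 < s) : hh Y s t / al Y s ≤ lam0 Y t :=
  le_csSup (LL_bdd Y hLag hLya hAttr t) (Set.mem_insert_iff.2 (Or.inr ⟨s, hs, rfl⟩))

lemma lam0_anti {t₁ t₂ : ℝ} (h : t₁ ≤ t₂) : lam0 Y t₂ ≤ lam0 Y t₁ := by
  refine csSup_le ⟨0, Set.mem_insert _ _⟩ ?_
  rintro r (rfl | ⟨s, hs, rfl⟩)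
  · exact lam0_nonneg Y hLag hLya hAttr t₁
  · refine le_trans ?_ (lam0_ge Y hLag hLya hAttr hs (t := t₁))
    exact (div_le_div_iff_of_pos_right (al_pos Y hLag hLya hAttr hs)).2 (hh_anti Y hLag hLya hAttr hs.le h)

lemma lam0_small {ε : ℝ} (hε : 0 < ε) :
    ∃ T : ℝ, 0 < T ∧ ∀ t, T ≤ t → lam0 Y t ≤ ε := by
  set N := max 1 (-Real.log ε) with hNdef
  have hN : (0:ℝ) < N := lt_of_lt_of_le one_pos (le_max_left _ _)
  have hexp : Real.exp (-N) ≤ ε := by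
    have h1 : -Real.log ε ≤ N := le_max_right _ _
    calc Real.exp (-N) ≤ Real.exp (Real.log ε) := Real.exp_le_exp.2 (by linarith)
    _ = ε := Real.exp_log hε
  obtain ⟨T, hT, hT'⟩ := hh_small Y hLag hLya hAttr (s := N) hN.le (ε := ε ^ 2) (by positivity)
  refine ⟨T, hT, fun t ht => csSup_le ⟨0, Set.mem_insert _ _⟩ ?_⟩
  rintro r (rfl | ⟨s, hs, rfl⟩)
  · exact hε.le
  by_cases hsN : s ≤ N
  · calc hh Y s t / al Y s ≤ Real.sqrt (hh Y s t) := ratio2 Y hLag hLya hAttr hs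
    _ ≤ Real.sqrt (hh Y N t) := Real.sqrt_le_sqrt (hh_mono Y hLag hLya hAttr hs.le hsN)
    _ ≤ Real.sqrt (ε ^ 2) := Real.sqrt_le_sqrt (hT' t ht)
    _ = ε := by rw [Real.sqrt_sq hε.le]
  · calc hh Y s t / al Y s ≤ Real.exp (-s) := ratio1 Y hLag hLya hAttr hs
    _ ≤ Real.exp (-N) := Real.exp_le_exp.2 (by linarith [le_of_not_ge hsN])
    _ ≤ ε := hexp

lemma lam_pos (t : ℝ) : 0 < lam Y t :=
  add_pos_of_nonneg_of_pos (lam0_nonneg Y hLag hLya hAttr t) (Real.exp_pos _)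

lemma lam_anti {t₁ t₂ : ℝ} (h : t₁ ≤ t₂) : lam Y t₂ ≤ lam Y t₁ :=
  add_le_add (lam0_anti Y hLag hLya hAttr h) (Real.exp_le_exp.2 (by linarith))

lemma lam_tendsto : Filter.Tendsto (lam Y) Filter.atTop (nhds 0) := by
  have h1 : Filter.Tendsto (lam0 Y) Filter.atTop (nhds 0) := by
    rw [Metric.tendsto_atTop]
    intro ε hε
    obtain ⟨T, hT, hT'⟩ := lam0_small Y hLag hLya hAttr (half_pos hε)
    refine ⟨T, fun t ht => ?_⟩
    rw [Real.dist_eq, sub_zero, abs_of_nonneg (lam0_nonneg Y hLag hLya hAttr t)]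
    linarith [hT' t ht]
  have h2 : Filter.Tendsto (fun t : ℝ => Real.exp (-t)) Filter.atTop (nhds 0) :=
    Real.tendsto_exp_neg_atTop_nhds_zero
  have h3 := h1.add h2; rw [add_zero] at h3; exact h3

noncomputable def FF (x : ℝ) : ℝ := ∫ u in (0:ℝ)..x, ww Y u

lemma FF_cont : Continuous (FF Y) :=
  intervalIntegral.continuous_primitive
    (fun a b => (ww_mono Y hLag hLya hAttr).intervalIntegrable) 0

lemma wInt_eq {s : ℝ} (hs : 0 < s) : wInt Y s = s⁻¹ * (FF Y (2 * s) - FF Y s) := by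
  have hint : ∀ a b : ℝ, IntervalIntegrable (ww Y) volume a b :=
    fun a b => (ww_mono Y hLag hLya hAttr).intervalIntegrable
  have h1 : wInt Y s = s⁻¹ • ∫ x in (s * 1)..(s * 2), ww Y x :=
    intervalIntegral.integral_comp_mul_left (ww Y) hs.ne'
  rw [h1, smul_eq_mul]
  congr 1
  have h2 : ((∫ x in (0:ℝ)..(2 * s), ww Y x) - ∫ x in (0:ℝ)..s, ww Y x)
      = ∫ x in s..(2 * s), ww Y x :=
    intervalIntegral.integral_interval_sub_left (hint 0 (2 * s)) (hint 0 s)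
  rw [FF, FF, h2]
  norm_num [mul_comm]

lemma wInt_contOn : ContinuousOn (wInt Y) (Set.Ici 0) := by
  intro s hs
  rcases eq_or_lt_of_le (Set.mem_Ici.1 hs) with h0 | h0
  · -- s = 0
    subst h0
    rw [ContinuousWithinAt, wInt_zero Y hLag hLya hAttr]
    have hg : Filter.Tendsto (fun x => gm Y (2 * x)) (nhdsWithin 0 (Set.Ici 0)) (nhds 0) := by
      rw [Metric.tendsto_nhdsWithin_nhds]
      intro ε hε
      obtain ⟨δ, hδ, hδ'⟩ := gg_small Y hLag hLya hAttr (ε / 2) (half_pos hε)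
      refine ⟨δ / 2, by positivity, fun {x} hx hdist => ?_⟩
      have hx0 : (0:ℝ) ≤ x := hx
      rw [Real.dist_eq, sub_zero, abs_of_nonneg hx0] at hdist
      have h2x : gg Y (2 * x) ≤ ε / 2 := hδ' (2 * x) (by linarith) (by linarith)
      rw [Real.dist_eq, sub_zero, gm_eq Y hLag hLya hAttr (by linarith : (0:ℝ) ≤ 2 * x),
        abs_of_nonneg (gg_nonneg Y hLag hLya hAttr (by linarith : (0:ℝ) ≤ 2 * x))]
      linarith
    have hsq : Filter.Tendsto (fun x => Real.sqrt (gm Y (2 * x)))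
        (nhdsWithin 0 (Set.Ici 0)) (nhds 0) := by
      have := (Real.continuous_sqrt.tendsto 0).comp hg
      rw [Real.sqrt_zero] at this; exact this
    have hexp : Filter.Tendsto (fun x : ℝ => Real.exp (2 * x))
        (nhdsWithin 0 (Set.Ici 0)) (nhds 1) := by
      have hc : Continuous (fun x : ℝ => Real.exp (2 * x)) := by fun_prop
      have h := hc.tendsto 0
      rw [show Real.exp (2 * 0) = 1 by norm_num] at h
      exact h.mono_left nhdsWithin_le_nhds
    have hupper : Filter.Tendsto (fun x => ww Y (2 * x))
        (nhdsWithin 0 (Set.Ici 0)) (nhds 0) := by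
      have := (hsq.add hg).mul hexp
      simpa [ww] using this
    refine tendsto_of_tendsto_of_tendsto_of_le_of_le' tendsto_const_nhds hupper ?_ ?_
    · filter_upwards [eventually_mem_nhdsWithin] with x hx
      exact wInt_nonneg Y hLag hLya hAttr hx
    · filter_upwards [eventually_mem_nhdsWithin] with x hx
      exact wInt_le Y hLag hLya hAttr hx
  · -- s > 0
    apply ContinuousAt.continuousWithinAt
    have hcont : ContinuousAt (fun x : ℝ => x⁻¹ * (FF Y (2 * x) - FF Y x)) s := by
      apply ContinuousAt.mul
      · exact continuousAt_inv₀ h0.ne'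
      · exact (((FF_cont Y hLag hLya hAttr).comp (continuous_const.mul continuous_id)).sub
          (FF_cont Y hLag hLya hAttr)).continuousAt
    refine hcont.congr ?_
    filter_upwards [isOpen_Ioi.mem_nhds h0] with x hx
    exact (wInt_eq Y hLag hLya hAttr hx).symm

lemma al_contOn : ContinuousOn (al Y) (Set.Ici 0) :=
  continuousOn_id.add (wInt_contOn Y hLag hLya hAttr)

lemma Y_zero_small (t : ℝ) (ht : 0 ≤ t) : ‖Y t 0‖ ≤ 0 := by
  refine le_of_forall_pos_le_add (fun ε hε => ?_)
  obtain ⟨δ, hδ, hδ'⟩ := hLya ε hε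
  have := hδ' 0 (by simpa using hδ) t ht
  linarith

lemma est : ∀ (x₀ : EuclideanSpace ℝ (Fin n)) (t : ℝ), 0 ≤ t → ‖Y t x₀‖ ≤ sig Y ‖x₀‖ t := by
  intro x₀ t ht
  have hs : (0:ℝ) ≤ ‖x₀‖ := norm_nonneg _
  rcases eq_or_lt_of_le hs with h0 | h0
  · -- ‖x₀‖ = 0
    have hx0 : x₀ = 0 := by rwa [eq_comm, norm_eq_zero] at h0
    subst hx0
    refine (Y_zero_small Y hLag hLya hAttr t ht).trans ?_
    exact mul_nonneg (al_nonneg Y hLag hLya hAttr hs)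
      (le_min zero_le_one (lam_pos Y hLag hLya hAttr t).le)
  · -- ‖x₀‖ > 0
    rcases le_total 1 (lam Y t) with hl | hl
    · rw [sig, min_eq_left hl, mul_one]
      exact (le_gg Y hLag hLya hAttr le_rfl ht).trans (gg_le_al Y hLag hLya hAttr hs)
    · rw [sig, min_eq_right hl]
      calc ‖Y t x₀‖ ≤ hh Y ‖x₀‖ t := le_hh Y hLag hLya hAttr le_rfl le_rfl ht
      _ = hh Y ‖x₀‖ t / al Y ‖x₀‖ * al Y ‖x₀‖ :=
        (div_mul_cancel₀ _ (al_pos Y hLag hLya hAttr h0).ne').symm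
      _ ≤ lam0 Y t * al Y ‖x₀‖ :=
        mul_le_mul_of_nonneg_right (lam0_ge Y hLag hLya hAttr h0) (al_nonneg Y hLag hLya hAttr hs)
      _ ≤ lam Y t * al Y ‖x₀‖ :=
        mul_le_mul_of_nonneg_right (le_add_of_nonneg_right (Real.exp_pos _).le)
          (al_nonneg Y hLag hLya hAttr hs)
      _ = al Y ‖x₀‖ * lam Y t := mul_comm _ _

end Lemmas

end UGAOSProof

/-- UGAOS (Lagrange output stability, Lyapunov output stability and uniform global output
attractivity) holds if and only if a class KL estimate holds. -/
theorem ugaos_iff_KL_estimate {n k : ℕ} (hn : 0 < n) (hk : 0 < k)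
    (Y : ℝ → EuclideanSpace ℝ (Fin n) → EuclideanSpace ℝ (Fin k)) :
    ((∀ R : ℝ, 0 < R → ∃ C : ℝ, ∀ x₀ : EuclideanSpace ℝ (Fin n),
        ‖x₀‖ < R → ∀ t : ℝ, 0 ≤ t → ‖Y t x₀‖ ≤ C) ∧
     (∀ ε : ℝ, 0 < ε → ∃ δ : ℝ, 0 < δ ∧ ∀ x₀ : EuclideanSpace ℝ (Fin n),
        ‖x₀‖ < δ → ∀ t : ℝ, 0 ≤ t → ‖Y t x₀‖ ≤ ε) ∧
     (∀ ε R : ℝ, 0 < ε → 0 < R → ∃ T : ℝ, 0 < T ∧ ∀ x₀ : EuclideanSpace ℝ (Fin n),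
        ‖x₀‖ < R → ∀ t : ℝ, T ≤ t → ‖Y t x₀‖ ≤ ε))
    ↔ ∃ σ : ℝ → ℝ → ℝ, IsClassKL σ ∧
        ∀ (x₀ : EuclideanSpace ℝ (Fin n)) (t : ℝ), 0 ≤ t → ‖Y t x₀‖ ≤ σ ‖x₀‖ t := by
  open UGAOSProof in
  constructor
  · rintro ⟨hLag, hLya, hAttr⟩
    refine ⟨sig Y, ⟨?_, ?_, ?_⟩, est Y hLag hLya hAttr⟩
    · intro s t hs ht
      exact mul_nonneg (al_nonneg Y hLag hLya hAttr hs)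
        (le_min zero_le_one (lam_pos Y hLag hLya hAttr t).le)
    · intro t ht
      refine ⟨?_, ?_, ?_⟩
      · exact (al_contOn Y hLag hLya hAttr).mul continuousOn_const
      · intro a ha b hb hab
        exact mul_lt_mul_of_pos_right (al_strict Y hLag hLya hAttr ha hb hab)
          (lt_min one_pos (lam_pos Y hLag hLya hAttr t))
      · rw [sig, al_zero Y hLag hLya hAttr, zero_mul]
    · intro s hs
      constructor
      · intro t₁ _ t₂ _ h12
        exact mul_le_mul_of_nonneg_left
          (min_le_min le_rfl (lam_anti Y hLag hLya hAttr h12)) (al_nonneg Y hLag hLya hAttr hs)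
      · have hmin : Filter.Tendsto (fun t => min 1 (lam Y t)) Filter.atTop (nhds 0) := by
          have := (tendsto_const_nhds (x := (1:ℝ)) (f := Filter.atTop)).min
            (lam_tendsto Y hLag hLya hAttr)
          simpa using this
        have := hmin.const_mul (al Y s)
        simpa [sig] using this
  · rintro ⟨σ, ⟨hnn, hS, hT⟩, hest⟩
    refine ⟨?_, ?_, ?_⟩
    · intro R hR
      refine ⟨σ R 0, fun x₀ hx t ht => ?_⟩
      calc ‖Y t x₀‖ ≤ σ ‖x₀‖ t := hest x₀ t ht
      _ ≤ σ ‖x₀‖ 0 := (hT ‖x₀‖ (norm_nonneg _)).1 Set.self_mem_Ici ht ht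
      _ ≤ σ R 0 := ((hS 0 le_rfl).2.1 (norm_nonneg x₀) (le_of_lt (lt_of_le_of_lt (norm_nonneg x₀) hx)) hx).le
    · intro ε hε
      have hc : Filter.Tendsto (fun s => σ s 0) (nhdsWithin 0 (Set.Ici 0)) (nhds 0) := by
        have h1 := (hS 0 le_rfl).1 0 Set.self_mem_Ici
        rw [ContinuousWithinAt, (hS 0 le_rfl).2.2] at h1
        exact h1
      rw [Metric.tendsto_nhdsWithin_nhds] at hc
      obtain ⟨δ, hδ, hδ'⟩ := hc ε hε
      refine ⟨δ, hδ, fun x₀ hx t ht => ?_⟩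
      have h1 := hδ' (Set.mem_Ici.2 (norm_nonneg x₀))
        (by rw [Real.dist_eq, sub_zero, abs_of_nonneg (norm_nonneg _)]; exact hx)
      rw [Real.dist_eq, sub_zero] at h1
      have h2 : σ ‖x₀‖ 0 ≤ ε := (le_abs_self _).trans h1.le
      calc ‖Y t x₀‖ ≤ σ ‖x₀‖ t := hest x₀ t ht
      _ ≤ σ ‖x₀‖ 0 := (hT ‖x₀‖ (norm_nonneg _)).1 Set.self_mem_Ici ht ht
      _ ≤ ε := h2
    · intro ε R hε hR
      have htd := (hT R hR.le).2
      have hev : ∀ᶠ t in Filter.atTop, σ R t < ε := htd.eventually (gt_mem_nhds hε)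
      obtain ⟨T₀, hT₀⟩ := Filter.eventually_atTop.1 hev
      refine ⟨max T₀ 1, lt_of_lt_of_le one_pos (le_max_right _ _), fun x₀ hx t ht => ?_⟩
      have ht0 : (0:ℝ) ≤ t := le_trans (le_trans zero_le_one (le_max_right _ _)) ht
      calc ‖Y t x₀‖ ≤ σ ‖x₀‖ t := hest x₀ t ht0
      _ ≤ σ R t := ((hS t ht0).2.1 (norm_nonneg x₀) (lt_of_le_of_lt (norm_nonneg x₀) hx).le hx).le
      _ ≤ ε := (hT₀ t (le_trans (le_max_left _ _) ht)).le

end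
end

section
/- Let n, p be positive natural numbers and let h : ℝ^n × ℝ^p → ℝ be a C^∞ map that satisfies h(0,θ) = 0 for all θ ∈ ℝ^p. Then there exists a C^∞ map ρ : ℝ^n × ℝ^p → [1,∞) such that |h(x,θ)| ≤ ρ(x,θ)·|x| for all (x,θ) ∈ ℝ^n × ℝ^p, where |x| denotes the Euclidean norm of x. -/
open scoped ContDiff
open intervalIntegral Manifold

noncomputable section

/-- If `h : ℝⁿ × ℝᵖ → ℝ` is `C^∞` and `h(0,θ) = 0` for all `θ`, then there is a `C^∞` map
`ρ : ℝⁿ × ℝᵖ → [1,∞)` with `|h(x,θ)| ≤ ρ(x,θ)·|x|` everywhere. -/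
theorem exists_smooth_bound_factor {n p : ℕ} (hn : 0 < n) (hp : 0 < p)
    (h : EuclideanSpace ℝ (Fin n) × EuclideanSpace ℝ (Fin p) → ℝ)
    (hsmooth : ContDiff ℝ ∞ h)
    (h0 : ∀ θ : EuclideanSpace ℝ (Fin p), h (0, θ) = 0) :
    ∃ ρ : EuclideanSpace ℝ (Fin n) × EuclideanSpace ℝ (Fin p) → ℝ,
      ContDiff ℝ ∞ ρ ∧ (∀ z, 1 ≤ ρ z) ∧
      ∀ (x : EuclideanSpace ℝ (Fin n)) (θ : EuclideanSpace ℝ (Fin p)),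
        |h (x, θ)| ≤ ρ (x, θ) * ‖x‖ := by
  -- the derivative is continuous
  have hder : Continuous (fderiv ℝ h) := hsmooth.continuous_fderiv (by norm_num)
  -- define f z = ∫ t in 0..1, ‖fderiv h (t•z.1, z.2)‖
  set f : EuclideanSpace ℝ (Fin n) × EuclideanSpace ℝ (Fin p) → ℝ := fun z => ∫ t in (0:ℝ)..1, ‖fderiv ℝ h (t • z.1, z.2)‖ with hf
  have hFcont : Continuous (Function.uncurry fun (z : EuclideanSpace ℝ (Fin n) × EuclideanSpace ℝ (Fin p)) (t : ℝ) =>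
      ‖fderiv ℝ h (t • z.1, z.2)‖) := by
    apply Continuous.norm
    apply hder.comp
    exact ((continuous_snd).smul (continuous_fst.fst)).prodMk continuous_fst.snd
  have hfcont : Continuous f :=
    intervalIntegral.continuous_parametric_intervalIntegral_of_continuous' hFcont 0 1
  -- key bound
  have key : ∀ (x : EuclideanSpace ℝ (Fin n)) (θ : EuclideanSpace ℝ (Fin p)),
      |h (x, θ)| ≤ f (x, θ) * ‖x‖ := by
    intro x θ
    have hderiv : ∀ t ∈ Set.uIcc (0:ℝ) 1,
        HasDerivAt (fun t : ℝ => h (t • x, θ)) (fderiv ℝ h (t • x, θ) (x, 0)) t := by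
      intro t _
      have h1 : HasFDerivAt h (fderiv ℝ h (t • x, θ)) (t • x, θ) :=
        (hsmooth.differentiable (by norm_num)).differentiableAt.hasFDerivAt
      have h2 : HasDerivAt (fun t : ℝ => ((t • x, θ) : EuclideanSpace ℝ (Fin n) × EuclideanSpace ℝ (Fin p))) ((x, 0) : EuclideanSpace ℝ (Fin n) × EuclideanSpace ℝ (Fin p)) t := by
        have : HasDerivAt (fun t : ℝ => t • x) x t := by
          simpa using (hasDerivAt_id t).smul_const x
        exact this.prodMk (hasDerivAt_const t θ)
      exact h1.comp_hasDerivAt t h2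
    have hint : IntervalIntegrable (fun t => fderiv ℝ h (t • x, θ) (x, 0)) MeasureTheory.volume 0 1 := by
      apply Continuous.intervalIntegrable
      have : Continuous fun t : ℝ => fderiv ℝ h (t • x, θ) := by
        apply hder.comp; fun_prop
      exact (this.clm_apply continuous_const)
    have heq : h (x, θ) = ∫ t in (0:ℝ)..1, fderiv ℝ h (t • x, θ) (x, 0) := by
      have := intervalIntegral.integral_eq_sub_of_hasDerivAt hderiv hint
      rw [this]
      simp [h0 θ]
    rw [heq]
    calc |∫ t in (0:ℝ)..1, fderiv ℝ h (t • x, θ) (x, 0)|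
        ≤ ∫ t in (0:ℝ)..1, ‖fderiv ℝ h (t • x, θ) (x, 0)‖ := by
          simpa using intervalIntegral.norm_integral_le_integral_norm (f := fun t => fderiv ℝ h (t • x, θ) (x, 0)) (by norm_num : (0:ℝ) ≤ 1)
      _ ≤ ∫ t in (0:ℝ)..1, ‖fderiv ℝ h (t • x, θ)‖ * ‖x‖ := by
          apply intervalIntegral.integral_mono_on (by norm_num)
          · exact hint.norm
          · apply Continuous.intervalIntegrable
            have : Continuous fun t : ℝ => fderiv ℝ h (t • x, θ) := by
              apply hder.comp; fun_prop
            exact this.norm.mul continuous_const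
          · intro t _
            calc ‖fderiv ℝ h (t • x, θ) (x, 0)‖
                ≤ ‖fderiv ℝ h (t • x, θ)‖ * ‖((x, 0) : EuclideanSpace ℝ (Fin n) × EuclideanSpace ℝ (Fin p))‖ :=
                  ContinuousLinearMap.le_opNorm _ _
              _ = ‖fderiv ℝ h (t • x, θ)‖ * ‖x‖ := by
                  congr 1
                  simp [Prod.norm_def]
      _ = f (x, θ) * ‖x‖ := by
          rw [hf]
          simp [intervalIntegral.integral_mul_const]
  -- now find a smooth majorant of max(f, 1)
  obtain ⟨g, hg⟩ := exists_contMDiffMap_forall_mem_convex_of_local (𝓘(ℝ, EuclideanSpace ℝ (Fin n) × EuclideanSpace ℝ (Fin p))) (n := ⊤) (M := EuclideanSpace ℝ (Fin n) × EuclideanSpace ℝ (Fin p))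
    (t := fun z => Set.Ici (max (f z) 1)) (fun z => convex_Ici _)
    (fun z => by
      refine ⟨{y | f y < f z + 1}, ?_, fun _ => max (f z) 1 + 1, contMDiffOn_const, ?_⟩
      · exact (isOpen_lt hfcont continuous_const).mem_nhds (by simp)
      · intro y hy
        simp only [Set.mem_Ici]
        have : f y < f z + 1 := hy
        rcases le_total (f y) 1 with H | H
        · calc max (f y) 1 = 1 := max_eq_right H
            _ ≤ max (f z) 1 + 1 := by have := le_max_right (f z) 1; linarith
        · calc max (f y) 1 = f y := max_eq_left H
            _ ≤ max (f z) 1 + 1 := by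
              have := le_max_left (f z) 1; linarith)
  refine ⟨g, ?_, fun z => le_trans (le_max_right _ _) (hg z), fun x θ => ?_⟩
  · exact contMDiff_iff_contDiff.mp g.contMDiff
  · calc |h (x, θ)| ≤ f (x, θ) * ‖x‖ := key x θ
      _ ≤ g (x, θ) * ‖x‖ := by
          apply mul_le_mul_of_nonneg_right _ (norm_nonneg x)
          exact le_trans (le_max_left _ _) (hg (x, θ))

end
end

section
/- Let n, p be positive natural numbers, let h : ℝ^n × ℝ^p → ℝ be a C^∞ map with h(0,θ) = 0 for all θ ∈ ℝ^p, and let T : ℝ^n × ℝ^p → ℝ^n be a smooth parameterized family of diffeomorphisms of ℝ^n. Then there exists a C^∞ map ρ : ℝ^n × ℝ^p → [1,∞) such that |h(x,θ)| ≤ ρ(x,θ)·|T(x,θ)| for all (x,θ) ∈ ℝ^n × ℝ^p, where |·| denotes the Euclidean norm. -/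
open scoped ContDiff
open Topology Manifold

noncomputable section

/-- A smooth parameterized family of diffeomorphisms: a `C^∞` map `T : E × F → E` with
`T(0,θ) = 0` for all `θ`, admitting a `C^∞` parameterized inverse. -/
def IsSmoothParamFamilyDiffeo {E F : Type*} [NormedAddCommGroup E] [NormedSpace ℝ E]
    [NormedAddCommGroup F] [NormedSpace ℝ F] (T : E × F → E) : Prop :=
  ContDiff ℝ ∞ T ∧ (∀ θ : F, T (0, θ) = 0) ∧
  ∃ S : E × F → E, ContDiff ℝ ∞ S ∧
    (∀ (z : E) (θ : F), T (S (z, θ), θ) = z) ∧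
    (∀ (x : E) (θ : F), S (T (x, θ), θ) = x)

/-- If `h : ℝⁿ × ℝᵖ → ℝ` is `C^∞` with `h(0,θ) = 0`, and `T` is a smooth parameterized family of
diffeomorphisms of `ℝⁿ`, then there is a `C^∞` map `ρ : ℝⁿ × ℝᵖ → [1,∞)` with
`|h(x,θ)| ≤ ρ(x,θ)·|T(x,θ)|` everywhere. -/
theorem exists_smooth_bound_factor_diffeo {n p : ℕ} (hn : 0 < n) (hp : 0 < p)
    (h : EuclideanSpace ℝ (Fin n) × EuclideanSpace ℝ (Fin p) → ℝ)
    (hsmooth : ContDiff ℝ ∞ h)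
    (h0 : ∀ θ : EuclideanSpace ℝ (Fin p), h (0, θ) = 0)
    (T : EuclideanSpace ℝ (Fin n) × EuclideanSpace ℝ (Fin p) → EuclideanSpace ℝ (Fin n))
    (hT : IsSmoothParamFamilyDiffeo T) :
    ∃ ρ : EuclideanSpace ℝ (Fin n) × EuclideanSpace ℝ (Fin p) → ℝ,
      ContDiff ℝ ∞ ρ ∧ (∀ z, 1 ≤ ρ z) ∧
      ∀ (x : EuclideanSpace ℝ (Fin n)) (θ : EuclideanSpace ℝ (Fin p)),
        |h (x, θ)| ≤ ρ (x, θ) * ‖T (x, θ)‖ := by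
  classical
  obtain ⟨hTsmooth, hT0, S, hSsmooth, hTS, hST⟩ := hT
  -- g(z,θ) = h(S(z,θ),θ)
  set g : EuclideanSpace ℝ (Fin n) × EuclideanSpace ℝ (Fin p) → ℝ :=
    fun q => h (S q, q.2) with hg_def
  have hgsmooth : ContDiff ℝ ∞ g := by
    exact hsmooth.comp (hSsmooth.prodMk contDiff_snd)
  have hone : (∞ : WithTop ℕ∞) ≠ 0 := by simp
  have hS0 : ∀ θ, S (0, θ) = 0 := by
    intro θ
    have := hST 0 θ
    rwa [hT0 θ] at this
  have hg0 : ∀ θ, g (0, θ) = 0 := by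
    intro θ
    simp only [hg_def, hS0 θ]
    exact h0 θ
  have hgh : ∀ x θ, h (x, θ) = g (T (x, θ), θ) := by
    intro x θ
    simp only [hg_def, hST x θ]
  have hgdiff : Differentiable ℝ g := hgsmooth.differentiable hone
  have hgderiv : Continuous fun q => ‖fderiv ℝ g q‖ :=
    (hgsmooth.continuous_fderiv hone).norm
  -- family of convex target sets
  set t : EuclideanSpace ℝ (Fin n) × EuclideanSpace ℝ (Fin p) → Set ℝ := fun q =>
    {r : ℝ | 1 ≤ r ∧ |h q| ≤ r * ‖T q‖} with ht_def
  have htconv : ∀ q, Convex ℝ (t q) := by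
    intro q
    have heq : t q = Set.Ici (1 : ℝ) ∩ {r | |h q| ≤ r * ‖T q‖} := by
      ext r; constructor
      · rintro ⟨h1, h2⟩; exact ⟨h1, h2⟩
      · rintro ⟨h1, h2⟩; exact ⟨h1, h2⟩
    rw [heq]
    refine (convex_Ici 1).inter ?_
    rcases eq_or_lt_of_le (norm_nonneg (T q)) with hTe | hTp
    · have : {r : ℝ | |h q| ≤ r * ‖T q‖} = Set.univ ∨
          {r : ℝ | |h q| ≤ r * ‖T q‖} = ∅ := by
        by_cases hc : |h q| ≤ 0
        · left; ext r
          simp only [Set.mem_setOf_eq, Set.mem_univ, iff_true, ← hTe, mul_zero]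
          exact hc
        · right; ext r
          simp only [Set.mem_setOf_eq, Set.mem_empty_iff_false, iff_false, ← hTe, mul_zero]
          exact hc
      rcases this with h1 | h1 <;> rw [h1]
      · exact convex_univ
      · exact convex_empty
    · have : {r : ℝ | |h q| ≤ r * ‖T q‖} = Set.Ici (|h q| / ‖T q‖) := by
        ext r
        simp only [Set.mem_setOf_eq, Set.mem_Ici, div_le_iff₀ hTp]
      rw [this]; exact convex_Ici _
  -- local constant bounds
  have Hloc : ∀ q : EuclideanSpace ℝ (Fin n) × EuclideanSpace ℝ (Fin p),
      ∃ c : ℝ, ∀ᶠ y in nhds q, c ∈ t y := by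
    rintro ⟨x₀, θ₀⟩
    set R : ℝ := ‖T (x₀, θ₀)‖ + 1 with hR
    have hRpos : (0 : ℝ) < R := by positivity
    set K : Set (EuclideanSpace ℝ (Fin n) × EuclideanSpace ℝ (Fin p)) :=
      Metric.closedBall (0 : EuclideanSpace ℝ (Fin n)) R ×ˢ Metric.closedBall θ₀ 1 with hK
    have hKcomp : IsCompact K :=
      (isCompact_closedBall _ _).prod (isCompact_closedBall _ _)
    have hKconv : Convex ℝ K :=
      (convex_closedBall _ _).prod (convex_closedBall _ _)
    have hKne : K.Nonempty :=
      ⟨(0, θ₀), by simp [hK, hRpos.le]⟩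
    obtain ⟨m, hmK, hm⟩ := hKcomp.exists_isMaxOn hKne hgderiv.continuousOn
    set C : ℝ := max 1 (‖fderiv ℝ g m‖) with hC
    have hC1 : (1 : ℝ) ≤ C := le_max_left _ _
    refine ⟨C, ?_⟩
    have hU : {y : EuclideanSpace ℝ (Fin n) × EuclideanSpace ℝ (Fin p) |
        ‖T y‖ < R ∧ y.2 ∈ Metric.closedBall θ₀ 1} ∈ nhds (x₀, θ₀) := by
      have hcont : Continuous fun y : EuclideanSpace ℝ (Fin n) × EuclideanSpace ℝ (Fin p) =>
        ‖T y‖ := hTsmooth.continuous.norm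
      have h1 : {y : EuclideanSpace ℝ (Fin n) × EuclideanSpace ℝ (Fin p) | ‖T y‖ < R} ∈
          nhds (x₀, θ₀) :=
        (isOpen_lt hcont continuous_const).mem_nhds (by simp [hR])
      have h2 : {y : EuclideanSpace ℝ (Fin n) × EuclideanSpace ℝ (Fin p) |
          y.2 ∈ Metric.closedBall θ₀ 1} ∈ nhds (x₀, θ₀) := by
        have : Metric.closedBall θ₀ 1 ∈ nhds θ₀ :=
          Metric.closedBall_mem_nhds _ one_pos
        exact continuous_snd.continuousAt.preimage_mem_nhds this
      filter_upwards [h1, h2] with y hy1 hy2 using ⟨hy1, hy2⟩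
    filter_upwards [hU] with y hy
    obtain ⟨hy1, hy2⟩ := hy
    refine ⟨hC1, ?_⟩
    have key : |g (T y, y.2)| ≤ C * ‖T y‖ := by
      have hmem1 : (T y, y.2) ∈ K := by
        refine ⟨?_, hy2⟩
        simpa only [Metric.mem_closedBall, dist_zero_right] using hy1.le
      have hmem0 : ((0 : EuclideanSpace ℝ (Fin n)), y.2) ∈ K := by
        refine ⟨?_, hy2⟩
        simp [hRpos.le]
      have hbound : ∀ w ∈ K, ‖fderiv ℝ g w‖ ≤ C :=
        fun w hw => le_trans (hm hw) (le_max_right _ _)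
      have hmv := hKconv.norm_image_sub_le_of_norm_fderiv_le
        (fun w _ => hgdiff w) hbound hmem0 hmem1
      have hnorm : ‖((T y, y.2) : EuclideanSpace ℝ (Fin n) × EuclideanSpace ℝ (Fin p)) -
          (0, y.2)‖ = ‖T y‖ := by
        simp [Prod.norm_def]
      rw [hnorm, hg0 y.2, sub_zero] at hmv
      simpa [Real.norm_eq_abs] using hmv
    calc |h y| = |g (T y, y.2)| := by rw [← hgh y.1 y.2]
      _ ≤ C * ‖T y‖ := key
  -- glue via smooth partition of unity
  obtain ⟨ρ, hρ⟩ := exists_contMDiffMap_forall_mem_convex_of_local_const (n := ⊤)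
    (𝓘(ℝ, EuclideanSpace ℝ (Fin n) × EuclideanSpace ℝ (Fin p))) htconv Hloc
  refine ⟨ρ, ?_, fun z => (hρ z).1, fun x θ => (hρ (x, θ)).2⟩
  exact contMDiff_iff_contDiff.mp ρ.contMDiff

end
end

section
/- Let n, p be positive natural numbers and let T : ℝ^n × ℝ^p → ℝ^n be a smooth parameterized family of diffeomorphisms of ℝ^n. Then for every bounded set Θ ⊂ ℝ^p there exist class K∞ functions a, b : [0,∞) → [0,∞) such that a(|x|) ≤ |T(x,θ)| ≤ b(|x|) for all x ∈ ℝ^n and all θ ∈ Θ, where |·| denotes the Euclidean norm. -/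
open scoped ContDiff

noncomputable section

open Filter

lemma exists_upper_B {E F : Type*} [NormedAddCommGroup E] [NormedSpace ℝ E] [ProperSpace E]
    [NormedAddCommGroup F] [NormedSpace ℝ F]
    (T : E × F → E) (hT : ContDiff ℝ ∞ T) (h0 : ∀ θ : F, T (0, θ) = 0)
    (K : Set F) (hK : IsCompact K) (hne : K.Nonempty) :
    ∃ B : ℝ → ℝ, Continuous B ∧ StrictMono B ∧ B 0 = 0 ∧
      Tendsto B atTop atTop ∧ Function.Surjective B ∧
      ∀ (x : E) (θ : F), θ ∈ K → ‖T (x, θ)‖ ≤ B ‖x‖ := by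
  obtain ⟨θ₀, hθ₀⟩ := hne
  have h1e : (1 : WithTop ℕ∞) ≤ ∞ := by exact_mod_cast le_top
  set g : E × F → ℝ := fun q => ‖(fderiv ℝ T q).comp (ContinuousLinearMap.inl ℝ E F)‖ with hg_def
  have hg : Continuous g :=
    ((hT.continuous_fderiv (by simp)).clm_comp continuous_const).norm
  set D : ℝ → ℝ := fun r => sSup (g '' (Metric.closedBall (0 : E) (max r 0) ×ˢ K)) with hD_def
  have hcomp : ∀ r : ℝ, IsCompact (Metric.closedBall (0 : E) (max r 0) ×ˢ K) :=
    fun r => (isCompact_closedBall _ _).prod hK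
  have hmem0 : ∀ r : ℝ, ((0 : E), θ₀) ∈ Metric.closedBall (0 : E) (max r 0) ×ˢ K := by
    intro r
    exact ⟨Metric.mem_closedBall_self (le_max_right _ _), hθ₀⟩
  have hbdd : ∀ r : ℝ, BddAbove (g '' (Metric.closedBall (0 : E) (max r 0) ×ˢ K)) :=
    fun r => ((hcomp r).image hg).bddAbove
  have hDnn : ∀ r : ℝ, 0 ≤ D r := by
    intro r
    exact le_trans (norm_nonneg _) (le_csSup (hbdd r) (Set.mem_image_of_mem g (hmem0 r)))
  have hDmono : Monotone D := by
    intro r r' h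
    apply csSup_le_csSup (hbdd r') ⟨g (0, θ₀), Set.mem_image_of_mem g (hmem0 r)⟩
    exact Set.image_mono (Set.prod_mono_left
      (Metric.closedBall_subset_closedBall (max_le_max h le_rfl)))
  -- key pointwise bound
  have key : ∀ (x : E) (θ : F), θ ∈ K → ‖T (x, θ)‖ ≤ D ‖x‖ * ‖x‖ := by
    intro x θ hθ
    have hmvt : ‖T (x, θ) - T (0, θ)‖ ≤ D ‖x‖ * ‖x - 0‖ := by
      apply Convex.norm_image_sub_le_of_norm_hasFDerivWithin_le
        (f := fun y => T (y, θ))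
        (f' := fun y => (fderiv ℝ T (y, θ)).comp (ContinuousLinearMap.inl ℝ E F))
        (s := Metric.closedBall (0 : E) ‖x‖)
      · intro y hy
        exact (((hT.differentiable (by simp)) (y, θ)).hasFDerivAt.comp y
          (hasFDerivAt_prodMk_left y θ)).hasFDerivWithinAt
      · intro y hy
        apply le_csSup (hbdd ‖x‖)
        refine ⟨(y, θ), ⟨?_, hθ⟩, rfl⟩
        simpa [max_eq_left (norm_nonneg x)] using hy
      · exact convex_closedBall _ _
      · exact Metric.mem_closedBall_self (norm_nonneg x)
      · simpa using Metric.mem_closedBall.2 (by simp)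
    simpa [h0 θ, sub_zero] using hmvt
  have hint : ∀ a b : ℝ, IntervalIntegrable D MeasureTheory.volume a b :=
    fun a b => hDmono.intervalIntegrable
  set P : ℝ → ℝ := fun t => ∫ s in (0 : ℝ)..t, D s with hP_def
  have hPcont : Continuous P := intervalIntegral.continuous_primitive hint 0
  have hPdiff : ∀ a b : ℝ, P b - P a = ∫ s in a..b, D s := by
    intro a b
    have := intervalIntegral.integral_add_adjacent_intervals (hint 0 a) (hint a b)
    simp only [hP_def]
    linarith [this]
  set ℓ : ℝ → ℝ := fun r => P (r + 1) - P r with hℓ_def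
  have hℓeq : ∀ r, ℓ r = ∫ s in r..(r + 1), D s := fun r => hPdiff r (r + 1)
  have hℓcont : Continuous ℓ :=
    (hPcont.comp (continuous_id.add continuous_const)).sub hPcont
  have hℓge : ∀ r, D r ≤ ℓ r := by
    intro r
    rw [hℓeq]
    have h1 : D r = ∫ _ in r..(r + 1), D r := by simp
    rw [h1]
    exact intervalIntegral.integral_mono_on (by linarith) intervalIntegrable_const
      (hint r (r + 1)) (fun s hs => hDmono hs.1)
  have hℓnn : ∀ r, 0 ≤ ℓ r := fun r => le_trans (hDnn r) (hℓge r)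
  have hℓmono : Monotone ℓ := by
    intro r r' h
    have e1 : ℓ r' - ℓ r = (∫ s in (r + 1)..(r' + 1), D s) - ∫ s in r..r', D s := by
      rw [hℓ_def]
      simp only []
      rw [← hPdiff (r + 1) (r' + 1), ← hPdiff r r']
      ring
    have e2 : (∫ s in (r + 1)..(r' + 1), D s) = ∫ s in r..r', D (s + 1) := by
      rw [intervalIntegral.integral_comp_add_right (fun s => D s) 1]
    have hint' : IntervalIntegrable (fun s => D (s + 1)) MeasureTheory.volume r r' :=
      (hDmono.comp (fun a b hab => by simpa using hab : Monotone fun s : ℝ => s + 1)).intervalIntegrable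
    have e3 : (∫ s in r..r', D s) ≤ ∫ s in r..r', D (s + 1) :=
      intervalIntegral.integral_mono_on h (hint r r') hint'
        (fun s _ => hDmono (by linarith))
    have : 0 ≤ ℓ r' - ℓ r := by rw [e1, e2]; linarith
    linarith
  refine ⟨fun r => r * (1 + ℓ (max r 0)), ?_, ?_, ?_, ?_, ?_, ?_⟩
  · exact continuous_id.mul (continuous_const.add
      (hℓcont.comp (continuous_id.max continuous_const)))
  · intro r r' h
    show r * (1 + ℓ (max r 0)) < r' * (1 + ℓ (max r' 0))
    have hpos : ∀ t : ℝ, 0 < 1 + ℓ (max t 0) := fun t => by linarith [hℓnn (max t 0)]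
    rcases le_or_gt r' 0 with hr' | hr'
    · rw [max_eq_right hr', max_eq_right (le_trans h.le hr')]
      have hpos0 : (0:ℝ) < 1 + ℓ 0 := by linarith [hℓnn 0]
      exact mul_lt_mul_of_pos_right h hpos0
    · rcases le_or_gt r 0 with hr | hr
      · have h1 : r * (1 + ℓ (max r 0)) ≤ 0 := mul_nonpos_of_nonpos_of_nonneg hr (hpos r).le
        have h2 : 0 < r' * (1 + ℓ (max r' 0)) := mul_pos hr' (hpos r')
        linarith
      · rw [max_eq_left hr.le, max_eq_left (le_trans hr.le h.le)]
        have := hℓmono h.le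
        nlinarith [hℓnn r, hℓnn r']
  · simp
  · apply tendsto_atTop_mono' atTop ?_ tendsto_id
    filter_upwards [eventually_ge_atTop (0 : ℝ)] with r hr
    simp only [id_eq]
    nlinarith [hℓnn (max r 0)]
  · apply Continuous.surjective
    · exact continuous_id.mul (continuous_const.add
        (hℓcont.comp (continuous_id.max continuous_const)))
    · apply tendsto_atTop_mono' atTop ?_ tendsto_id
      filter_upwards [eventually_ge_atTop (0 : ℝ)] with r hr
      simp only [id_eq]
      nlinarith [hℓnn (max r 0)]
    · apply tendsto_atBot_mono' atBot ?_ tendsto_id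
      filter_upwards [eventually_le_atBot (0 : ℝ)] with r hr
      have : max r 0 = 0 := max_eq_right hr
      rw [this]
      simp only [id_eq]
      nlinarith [hℓnn 0]
  · intro x θ hθ
    have h1 := key x θ hθ
    have h2 := hℓge ‖x‖
    have h3 : max ‖x‖ 0 = ‖x‖ := max_eq_left (norm_nonneg x)
    show ‖T (x, θ)‖ ≤ ‖x‖ * (1 + ℓ (max ‖x‖ 0))
    rw [h3]
    nlinarith [norm_nonneg x, hDnn ‖x‖]

/-- A function `a : [0,∞) → [0,∞)` is of class `K∞` if it is continuous, strictly increasing,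
vanishes at `0` and tends to infinity. -/
def IsClassKInf (a : ℝ → ℝ) : Prop :=
  ContinuousOn a (Set.Ici 0) ∧ StrictMonoOn a (Set.Ici 0) ∧ a 0 = 0 ∧
  (∀ s, 0 ≤ s → 0 ≤ a s) ∧ Filter.Tendsto a Filter.atTop Filter.atTop

/-- For a smooth parameterized family of diffeomorphisms `T` and a bounded parameter set `Θ`,
there are class `K∞` bounds `a(|x|) ≤ |T(x,θ)| ≤ b(|x|)` valid for all `x` and all `θ ∈ Θ`. -/
theorem smoothParamFamilyDiffeo_Kinf_bounds {n p : ℕ} (hn : 0 < n) (hp : 0 < p)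
    (T : EuclideanSpace ℝ (Fin n) × EuclideanSpace ℝ (Fin p) → EuclideanSpace ℝ (Fin n))
    (hT : IsSmoothParamFamilyDiffeo T)
    (Θ : Set (EuclideanSpace ℝ (Fin p))) (hΘ : Bornology.IsBounded Θ) :
    ∃ a b : ℝ → ℝ, IsClassKInf a ∧ IsClassKInf b ∧
      ∀ (x : EuclideanSpace ℝ (Fin n)) (θ : EuclideanSpace ℝ (Fin p)), θ ∈ Θ →
        a ‖x‖ ≤ ‖T (x, θ)‖ ∧ ‖T (x, θ)‖ ≤ b ‖x‖ := by
  obtain ⟨hTc, h0T, S, hSc, hTS, hST⟩ := hT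
  have h0S : ∀ θ, S (0, θ) = 0 := by
    intro θ
    have := hST 0 θ
    rwa [h0T θ] at this
  set K : Set (EuclideanSpace ℝ (Fin p)) := insert 0 (closure Θ) with hK_def
  have hKcomp : IsCompact K := hΘ.isCompact_closure.insert 0
  have hKne : K.Nonempty := ⟨0, Set.mem_insert _ _⟩
  have hΘK : Θ ⊆ K := fun θ hθ => Set.mem_insert_of_mem _ (subset_closure hθ)
  obtain ⟨b, hbcont, hbmono, hb0, hbtop, -, hbbound⟩ :=
    exists_upper_B T hTc h0T K hKcomp hKne
  obtain ⟨B, hBcont, hBmono, hB0, -, hBsurj, hBbound⟩ :=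
    exists_upper_B S hSc h0S K hKcomp hKne
  set e : ℝ ≃o ℝ := StrictMono.orderIsoOfSurjective B hBmono hBsurj with he_def
  have hecoe : ∀ r, e r = B r := fun r => rfl
  set a : ℝ → ℝ := fun s => e.symm s with ha_def
  have ha0 : a 0 = 0 := by
    rw [ha_def]
    simp only []
    rw [OrderIso.symm_apply_eq]
    rw [hecoe, hB0]
  have hamono : StrictMono a := e.symm.strictMono
  refine ⟨a, b, ⟨?_, ?_, ?_, ?_, ?_⟩, ⟨?_, ?_, ?_, ?_, ?_⟩, ?_⟩
  · exact e.symm.toHomeomorph.continuous.continuousOn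
  · exact hamono.strictMonoOn _
  · exact ha0
  · intro s hs
    rw [← ha0]
    exact hamono.monotone hs
  · rw [tendsto_atTop_atTop]
    intro c
    refine ⟨B c, fun s hs => ?_⟩
    have := hamono.monotone hs
    rw [ha_def] at this ⊢
    simp only [] at this ⊢
    rw [← hecoe c, e.symm_apply_apply] at this
    exact this
  · exact hbcont.continuousOn
  · exact hbmono.strictMonoOn _
  · exact hb0
  · intro s hs
    rw [← hb0]
    exact hbmono.monotone hs
  · exact hbtop
  · intro x θ hθ
    refine ⟨?_, hbbound x θ (hΘK hθ)⟩
    have h1 : ‖x‖ ≤ B ‖T (x, θ)‖ := by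
      have := hBbound (T (x, θ)) θ (hΘK hθ)
      rwa [hST x θ] at this
    have h2 : a ‖x‖ ≤ a (B ‖T (x, θ)‖) := hamono.monotone h1
    simp only [ha_def] at h2
    rw [← hecoe, e.symm_apply_apply] at h2
    exact h2


end
end

section
/- (Theorem 1.) Consider the system ẋ = f(x) + g(x)u + g(x)⟨φ(x),θ⟩ on ℝ^n, where f, g : ℝ^n → ℝ^n and φ : ℝ^n → ℝ^p are locally Lipschitz with f(0) = 0 and φ(0) = 0, u ∈ ℝ is the control input and θ ∈ ℝ^p is a constant unknown parameter vector. Assume: (H1) there exist a C² function P : ℝ^n → [0,∞) and a continuous function Q : ℝ^n → [0,∞), both positive definite and radially unbounded, and a locally Lipschitz function k : ℝ^n → ℝ with k(0) = 0, such that ∇P(x)·f(x) + (∇P(x)·g(x))·k(x) ≤ −Q(x) for all x ∈ ℝ^n; (H2) there exists a locally Lipschitz function μ : ℝ^n → (0,∞) such that |φ(x)|² ≤ μ(x)·Q(x) for all x ∈ ℝ^n. Let ρ be a class K∞ function with ρ(P(x)) ≤ Q(x) for all x ∈ ℝ^n, let δ > 0, r ≥ 0, λ ∈ (0,1), and let Γ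 ∈ ℝ^{p×p} be a symmetric positive definite matrix. Consider the closed-loop system obtained with the adaptive feedback u = k(x) − ⟨φ(x),θ̂⟩ − (δ/2·|φ(x)|² + μ(x)·(r + |θ̂|²))·(∇P(x)·g(x)) and update law θ̂' = (∇P(x)·g(x))·Γφ(x). Then there exists a class KL function σ (depending only on ρ and λ) such that for every θ ∈ ℝ^p and every continuously differentiable solution (x(·), θ̂(·)) : [0,∞) → ℝ^n × ℝ^p of the closed-loop system, setting α = ρ^{-1}((1−λ)^{-1}·δ^{-1}·(|θ|² − r)^+), the estimate (P(x(t)) − α)^+ ≤ σ((P(x(0)) − α)^+, t) holds for all t ≥ 0. -/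
open scoped RealInnerProductSpace

noncomputable section

/-- A continuous function `P : ℝⁿ → [0,∞)` is positive definite and radially unbounded. -/
def PosDefRadUnbounded {n : ℕ} (P : EuclideanSpace ℝ (Fin n) → ℝ) : Prop :=
  P 0 = 0 ∧ (∀ x, x ≠ 0 → 0 < P x) ∧ (∀ x, 0 ≤ P x) ∧
  Filter.Tendsto P (Bornology.cobounded (EuclideanSpace ℝ (Fin n))) Filter.atTop

variable {ρ : ℝ → ℝ} {c s t : ℝ}

def σKL (ρ : ℝ → ℝ) (c : ℝ) (s t : ℝ) : ℝ :=
  if 0 ≤ s then sSup {y | 0 ≤ y ∧ y + c * t * ρ y ≤ s} else s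

variable {ρ : ℝ → ℝ} {c s t : ℝ}

theorem σKL_spec (hρ : IsClassKInf ρ) (hc : 0 < c) (hs : 0 ≤ s) (ht : 0 ≤ t) :
    0 ≤ σKL ρ c s t ∧ σKL ρ c s t + c * t * ρ (σKL ρ c s t) = s := by
  obtain ⟨hcont, hmono, h0, hnn, -⟩ := hρ
  set h : ℝ → ℝ := fun y => y + c * t * ρ y with hh
  set S : Set ℝ := {y | 0 ≤ y ∧ y + c * t * ρ y ≤ s} with hS
  have hσ : σKL ρ c s t = sSup S := by simp [σKL, hs, hS]
  have h0S : (0 : ℝ) ∈ S := by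
    refine ⟨le_refl 0, ?_⟩
    simp [h0, hs]
  have hne : S.Nonempty := ⟨0, h0S⟩
  have hub : ∀ y ∈ S, y ≤ s := by
    intro y hy
    have h1 : 0 ≤ c * t * ρ y := by
      have := hnn y hy.1
      positivity
    linarith [hy.2]
  have hbdd : BddAbove S := ⟨s, hub⟩
  have hy0 : 0 ≤ sSup S := le_csSup hbdd h0S
  have hys : sSup S ≤ s := csSup_le hne hub
  -- continuity of h on Ici 0
  have hhc : ContinuousOn h (Set.Ici 0) := by
    apply ContinuousOn.add continuousOn_id
    exact (continuousOn_const.mul continuousOn_const).mul hcont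
  have hsub : S ⊆ Set.Ici 0 := fun y hy => hy.1
  -- h (sSup S) ≤ s
  have hle : h (sSup S) ≤ s := by
    have hcw : ContinuousWithinAt h S (sSup S) :=
      (hhc (sSup S) hy0).mono hsub
    have hclos : sSup S ∈ closure S := csSup_mem_closure hne hbdd
    have : h (sSup S) ∈ closure (h '' S) := hcw.mem_closure_image hclos
    have himg : h '' S ⊆ Set.Iic s := by
      rintro _ ⟨y, hy, rfl⟩; exact hy.2
    have := closure_mono himg this
    rwa [closure_Iic] at this
  have hge : s ≤ h (sSup S) := by
    by_contra hlt
    push_neg at hlt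
    have hcw : ContinuousWithinAt h (Set.Ioi (sSup S)) (sSup S) := by
      refine (hhc (sSup S) hy0).mono ?_
      intro y hy; exact le_trans hy0 (le_of_lt hy)
    have hev : ∀ᶠ y in nhdsWithin (sSup S) (Set.Ioi (sSup S)), h y < s :=
      hcw.eventually_lt_const hlt
    obtain ⟨y, hy1, hy2⟩ := (hev.and eventually_mem_nhdsWithin).exists
    have hyS : y ∈ S := ⟨le_trans hy0 (le_of_lt hy2), le_of_lt hy1⟩
    exact absurd (le_csSup hbdd hyS) (not_le.2 hy2)
  exact ⟨by rw [hσ]; exact hy0, by rw [hσ]; exact le_antisymm hle hge⟩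

theorem σKL_le_of_mem (hρ : IsClassKInf ρ) (hs : 0 ≤ s) {y : ℝ}
    (hy0 : 0 ≤ y) (hy : y + c * t * ρ y ≤ s) (hct : 0 ≤ c * t) :
    y ≤ σKL ρ c s t := by
  obtain ⟨hcont, hmono, h0, hnn, -⟩ := hρ
  have hσ : σKL ρ c s t = sSup {z | 0 ≤ z ∧ z + c * t * ρ z ≤ s} := by simp [σKL, hs]
  rw [hσ]
  refine le_csSup ⟨s, ?_⟩ ⟨hy0, hy⟩
  intro z hz
  have h1 : 0 ≤ c * t * ρ z := mul_nonneg hct (hnn z hz.1)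
  linarith [hz.2]

theorem hmonoH (hρ : IsClassKInf ρ) (hct : 0 ≤ c * t) {y1 y2 : ℝ}
    (h1 : 0 ≤ y1) (h2 : y1 ≤ y2) : y1 + c * t * ρ y1 ≤ y2 + c * t * ρ y2 := by
  have hm := hρ.2.1.monotoneOn (Set.mem_Ici.2 h1) (Set.mem_Ici.2 (le_trans h1 h2)) h2
  nlinarith [mul_nonneg hct (sub_nonneg.2 hm)]

theorem σKL_monotone (hρ : IsClassKInf ρ) (hc : 0 < c) (ht : 0 ≤ t) :
    Monotone (fun s => σKL ρ c s t) := by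
  intro s1 s2 h12
  simp only
  rcases le_or_gt 0 s1 with hs1 | hs1
  · have hs2 : 0 ≤ s2 := le_trans hs1 h12
    obtain ⟨hy1, he1⟩ := σKL_spec hρ hc hs1 ht
    obtain ⟨hy2, he2⟩ := σKL_spec hρ hc hs2 ht
    by_contra hlt
    push_neg at hlt
    have hm := hρ.2.1.monotoneOn (Set.mem_Ici.2 hy2) (Set.mem_Ici.2 hy1) hlt.le
    nlinarith [mul_nonneg (mul_nonneg hc.le ht) (sub_nonneg.2 hm)]
  · rcases le_or_gt 0 s2 with hs2 | hs2
    · obtain ⟨hy2, -⟩ := σKL_spec hρ hc hs2 ht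
      have h1 : σKL ρ c s1 t = s1 := by simp [σKL, not_le.2 hs1]
      rw [h1]; linarith
    · simp only [σKL, not_le.2 hs1, not_le.2 hs2, if_false]
      exact h12

theorem σKL_surjective (hρ : IsClassKInf ρ) (hc : 0 < c) (ht : 0 ≤ t) :
    Function.Surjective (fun s => σKL ρ c s t) := by
  intro v
  rcases le_or_gt 0 v with hv | hv
  · refine ⟨v + c * t * ρ v, ?_⟩
    have hnn := hρ.2.2.2.1 v hv
    have hct : (0:ℝ) ≤ c * t := by positivity
    have hs : 0 ≤ v + c * t * ρ v := by positivity
    obtain ⟨hy, he⟩ := σKL_spec hρ hc hs ht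
    simp only
    rcases lt_trichotomy (σKL ρ c (v + c * t * ρ v) t) v with h | h | h
    · exfalso
      have hm := hρ.2.1.monotoneOn (Set.mem_Ici.2 hy) (Set.mem_Ici.2 hv) (le_of_lt h)
      nlinarith [mul_nonneg hct (sub_nonneg.2 hm)]
    · exact h
    · exfalso
      have hm := hρ.2.1.monotoneOn (Set.mem_Ici.2 hv) (Set.mem_Ici.2 hy) (le_of_lt h)
      nlinarith [mul_nonneg hct (sub_nonneg.2 hm)]
  · exact ⟨v, by simp [σKL, not_le.2 hv]⟩

theorem σKL_continuous (hρ : IsClassKInf ρ) (hc : 0 < c) (ht : 0 ≤ t) :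
    Continuous (fun s => σKL ρ c s t) :=
  (σKL_monotone hρ hc ht).continuous_of_surjective (σKL_surjective hρ hc ht)

theorem σKL_strictMonoOn (hρ : IsClassKInf ρ) (hc : 0 < c) (ht : 0 ≤ t) :
    StrictMonoOn (fun s => σKL ρ c s t) (Set.Ici 0) := by
  intro s1 hs1 s2 hs2 h12
  simp only
  obtain ⟨hy1, he1⟩ := σKL_spec hρ hc (Set.mem_Ici.1 hs1) ht
  obtain ⟨hy2, he2⟩ := σKL_spec hρ hc (Set.mem_Ici.1 hs2) ht
  by_contra hle
  push_neg at hle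
  have := hmonoH (c := c) (t := t) hρ (by positivity) hy2 hle
  rw [he1, he2] at this
  linarith

theorem σKL_zero (hρ : IsClassKInf ρ) (hc : 0 < c) (ht : 0 ≤ t) :
    σKL ρ c 0 t = 0 := by
  obtain ⟨hy, he⟩ := σKL_spec hρ hc (le_refl 0) ht
  have hnn := hρ.2.2.2.1 _ hy
  nlinarith [mul_nonneg (mul_nonneg hc.le ht) hnn]

theorem σKL_antitoneOn (hρ : IsClassKInf ρ) (hc : 0 < c) (hs : 0 ≤ s) :
    AntitoneOn (fun t => σKL ρ c s t) (Set.Ici 0) := by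
  intro t1 ht1 t2 ht2 h12
  simp only
  have ht1' : (0:ℝ) ≤ t1 := Set.mem_Ici.1 ht1
  have ht2' : (0:ℝ) ≤ t2 := Set.mem_Ici.1 ht2
  obtain ⟨hy2, he2⟩ := σKL_spec hρ hc hs ht2'
  refine σKL_le_of_mem hρ hs hy2 ?_ (by positivity)
  have hnn := hρ.2.2.2.1 _ hy2
  nlinarith [mul_nonneg (mul_nonneg hc.le (sub_nonneg.2 h12)) hnn]

theorem σKL_tendsto (hρ : IsClassKInf ρ) (hc : 0 < c) (hs : 0 ≤ s) :
    Filter.Tendsto (fun t => σKL ρ c s t) Filter.atTop (nhds 0) := by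
  rw [Metric.tendsto_atTop]
  intro ε hε
  have hρε : 0 < ρ (ε / 2) := by
    have := hρ.2.1 (Set.self_mem_Ici) (Set.mem_Ici.2 (by linarith : (0:ℝ) ≤ ε/2)) (by linarith)
    rw [hρ.2.2.1] at this
    exact this
  refine ⟨max 1 (s / (c * ρ (ε / 2))), fun t ht => ?_⟩
  have ht1 : (1:ℝ) ≤ t := le_trans (le_max_left _ _) ht
  have ht0 : 0 ≤ t := by linarith
  have ht2 : s / (c * ρ (ε / 2)) ≤ t := le_trans (le_max_right _ _) ht
  obtain ⟨hy, he⟩ := σKL_spec hρ hc hs ht0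
  have hle : σKL ρ c s t ≤ ε / 2 := by
    by_contra hgt
    push_neg at hgt
    have hm := hρ.2.1.monotoneOn (Set.mem_Ici.2 (by linarith : (0:ℝ) ≤ ε/2))
      (Set.mem_Ici.2 hy) (le_of_lt hgt)
    have hst : s ≤ c * ρ (ε / 2) * t := by
      rw [div_le_iff₀ (by positivity)] at ht2
      linarith
    nlinarith [mul_nonneg (mul_nonneg hc.le ht0) (sub_nonneg.2 hm)]
  rw [Real.dist_eq, abs_sub_comm, abs_of_nonpos (by linarith)]
  simp only [neg_sub, sub_zero]
  linarith

theorem σKL_nonneg (hρ : IsClassKInf ρ) (hc : 0 < c) (hs : 0 ≤ s) (ht : 0 ≤ t) :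
    0 ≤ σKL ρ c s t := (σKL_spec hρ hc hs ht).1

theorem σKL_isClassKL (hρ : IsClassKInf ρ) (hc : 0 < c) : IsClassKL (σKL ρ c) :=
  ⟨fun s t hs ht => σKL_nonneg hρ hc hs ht,
   fun t ht => ⟨(σKL_continuous hρ hc ht).continuousOn, σKL_strictMonoOn hρ hc ht,
     σKL_zero hρ hc ht⟩,
   fun s hs => ⟨σKL_antitoneOn hρ hc hs, σKL_tendsto hρ hc hs⟩⟩

theorem young1 {δ lam B b sT T ρPx : ℝ} (hδ : 0 < δ) (hsT2 : sT ^ 2 = T)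
    (hTle : T ≤ (1 - lam) * δ * ρPx) :
    B * (b * sT) ≤ δ / 2 * (B ^ 2 * b ^ 2) + (1 - lam) / 2 * ρPx := by
  have h2δ : (0:ℝ) < 2 * δ := by linarith
  have h : (2 * δ) * (B * (b * sT)) ≤
      (2 * δ) * (δ / 2 * (B ^ 2 * b ^ 2) + (1 - lam) / 2 * ρPx) := by
    nlinarith [sq_nonneg (δ * (B * b) - sT)]
  exact le_of_mul_le_mul_left h h2δ

theorem young2 {m B b sr rr q : ℝ} (hm : 0 < m) (hsr2 : sr ^ 2 = rr)
    (hb2 : b ^ 2 ≤ m * q) :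
    B * (b * sr) ≤ m * B ^ 2 * rr + q / 4 := by
  subst hsr2
  have h4m : (0:ℝ) < 4 * m := by linarith
  have h : (4 * m) * (B * (b * sr)) ≤ (4 * m) * (m * B ^ 2 * sr ^ 2 + q / 4) := by
    nlinarith [sq_nonneg (2 * m * (B * sr) - b)]
  exact le_of_mul_le_mul_left h h4m

theorem sqrt_add_bound {nθ T r : ℝ} (hT : 0 ≤ T) (hr : 0 ≤ r) (hnθ0 : 0 ≤ nθ)
    (hnθ : nθ ^ 2 ≤ T + r) : nθ ≤ Real.sqrt T + Real.sqrt r := by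
  have hsT0 : 0 ≤ Real.sqrt T := Real.sqrt_nonneg T
  have hsr0 : 0 ≤ Real.sqrt r := Real.sqrt_nonneg r
  have hsT2 : Real.sqrt T ^ 2 = T := Real.sq_sqrt hT
  have hsr2 : Real.sqrt r ^ 2 = r := Real.sq_sqrt hr
  nlinarith [mul_nonneg hsT0 hsr0, sq_nonneg (Real.sqrt T + Real.sqrt r - nθ),
    sq_nonneg (Real.sqrt T + Real.sqrt r + nθ)]

/-- The pointwise algebraic estimate (Young inequalities). -/
theorem key_alg {A b m q T r δ lam th nθ ρPx : ℝ}
    (hδ : 0 < δ) (hm : 0 < m) (hq : 0 ≤ q) (hb : 0 ≤ b) (hb2 : b ^ 2 ≤ m * q)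
    (hT : 0 ≤ T) (hr : 0 ≤ r) (hth : 0 ≤ th) (hnθ0 : 0 ≤ nθ) (hnθ : nθ ^ 2 ≤ T + r)
    (hlam0 : 0 < lam) (hlam1 : lam < 1)
    (hρq : ρPx ≤ q) (hρnn : 0 ≤ ρPx) (hTle : T ≤ (1 - lam) * δ * ρPx)
    {pf kA X Y : ℝ} (hkq : pf + kA ≤ -q)
    (hX : X ≤ |A| * (b * nθ)) (hY : Y ≤ |A| * (b * th)) :
    pf + kA + X + Y - (δ / 2 * b ^ 2 + m * (r + th ^ 2)) * A ^ 2 ≤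
      -(lam / 2 * ρPx) := by
  have hB0 : 0 ≤ |A| := abs_nonneg A
  have hB2 : |A| ^ 2 = A ^ 2 := sq_abs A
  have hnθle : nθ ≤ Real.sqrt T + Real.sqrt r := sqrt_add_bound hT hr hnθ0 hnθ
  have y1 : |A| * (b * Real.sqrt T) ≤ δ / 2 * (|A| ^ 2 * b ^ 2) + (1 - lam) / 2 * ρPx :=
    young1 hδ (Real.sq_sqrt hT) hTle
  have y2 : |A| * (b * Real.sqrt r) ≤ m * |A| ^ 2 * r + q / 4 :=
    young2 hm (Real.sq_sqrt hr) hb2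
  have y3 : |A| * (b * th) ≤ m * |A| ^ 2 * th ^ 2 + q / 4 :=
    young2 hm rfl hb2
  have hXle : X ≤ |A| * (b * Real.sqrt T) + |A| * (b * Real.sqrt r) := by
    have h := mul_le_mul_of_nonneg_left (mul_le_mul_of_nonneg_left hnθle hb) hB0
    calc X ≤ |A| * (b * nθ) := hX
    _ ≤ |A| * (b * (Real.sqrt T + Real.sqrt r)) := h
    _ = |A| * (b * Real.sqrt T) + |A| * (b * Real.sqrt r) := by ring
  have e1 : δ / 2 * (|A| ^ 2 * b ^ 2) = δ / 2 * b ^ 2 * A ^ 2 := by rw [hB2]; ring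
  have e2 : m * |A| ^ 2 * r = m * r * A ^ 2 := by rw [hB2]; ring
  have e3 : m * |A| ^ 2 * th ^ 2 = m * th ^ 2 * A ^ 2 := by rw [hB2]; ring
  have e4 : (δ / 2 * b ^ 2 + m * (r + th ^ 2)) * A ^ 2 =
      δ / 2 * b ^ 2 * A ^ 2 + m * r * A ^ 2 + m * th ^ 2 * A ^ 2 := by ring
  linarith [hXle, hY, y1, y2, y3, hkq, hρq, e1, e2, e3, e4]

set_option maxHeartbeats 1000000 in
/-- Theorem 1: for the matched-uncertainty system `ẋ = f(x) + g(x)u + g(x)⟨φ(x),θ⟩` with the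
modified adaptive controller (nonlinear damping depending on both `x` and `θ̂`), a global KL
estimate holds for `(P(x(t)) − α)⁺` where `α = ρ⁻¹((1−λ)⁻¹ δ⁻¹ (|θ|² − r)⁺)`. -/
theorem theorem1 {n p : ℕ} (hn : 0 < n) (hp : 0 < p)
    (f g : EuclideanSpace ℝ (Fin n) → EuclideanSpace ℝ (Fin n))
    (φ : EuclideanSpace ℝ (Fin n) → EuclideanSpace ℝ (Fin p))
    (hf : LocallyLipschitz f) (hg : LocallyLipschitz g) (hφ : LocallyLipschitz φ)
    (hf0 : f 0 = 0) (hφ0 : φ 0 = 0)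
    (P Q : EuclideanSpace ℝ (Fin n) → ℝ)
    (hP : ContDiff ℝ 2 P) (hPpos : PosDefRadUnbounded P)
    (hQc : Continuous Q) (hQpos : PosDefRadUnbounded Q)
    (k : EuclideanSpace ℝ (Fin n) → ℝ) (hk : LocallyLipschitz k) (hk0 : k 0 = 0)
    (hkQ : ∀ x, ⟪gradient P x, f x⟫ + ⟪gradient P x, g x⟫ * k x ≤ -Q x)
    (μ : EuclideanSpace ℝ (Fin n) → ℝ) (hμ : LocallyLipschitz μ) (hμpos : ∀ x, 0 < μ x)
    (hμQ : ∀ x, ‖φ x‖ ^ 2 ≤ μ x * Q x)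
    (ρ : ℝ → ℝ) (hρ : IsClassKInf ρ) (hρPQ : ∀ x, ρ (P x) ≤ Q x)
    (δ : ℝ) (hδ : 0 < δ) (r : ℝ) (hr : 0 ≤ r) (lam : ℝ) (hlam : lam ∈ Set.Ioo (0 : ℝ) 1)
    (Γ : Matrix (Fin p) (Fin p) ℝ) (hΓ : Γ.PosDef) :
    ∃ σ : ℝ → ℝ → ℝ, IsClassKL σ ∧
      ∀ (θ : EuclideanSpace ℝ (Fin p))
        (x : ℝ → EuclideanSpace ℝ (Fin n)) (θh : ℝ → EuclideanSpace ℝ (Fin p)),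
        (∀ t, 0 ≤ t →
          HasDerivAt x (f (x t) +
            ((k (x t) - ⟪φ (x t), θh t⟫ -
                (δ / 2 * ‖φ (x t)‖ ^ 2 + μ (x t) * (r + ‖θh t‖ ^ 2)) *
                  ⟪gradient P (x t), g (x t)⟫)
              + ⟪φ (x t), θ⟫) • g (x t)) t) →
        (∀ t, 0 ≤ t →
          HasDerivAt θh (⟪gradient P (x t), g (x t)⟫ •
            (WithLp.toLp 2 (Γ.mulVec (fun j => φ (x t) j)) : EuclideanSpace ℝ (Fin p))) t) →
        ∀ α : ℝ, 0 ≤ α → ρ α = (1 - lam)⁻¹ * δ⁻¹ * max (‖θ‖ ^ 2 - r) 0 →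
        ∀ t, 0 ≤ t → max (P (x t) - α) 0 ≤ σ (max (P (x 0) - α) 0) t := by
  obtain ⟨hlam0, hlam1⟩ := hlam
  have hc : (0:ℝ) < lam / 2 := by linarith
  refine ⟨σKL ρ (lam / 2), σKL_isClassKL hρ hc, ?_⟩
  intro θ x θh hx hθh α hα hρα t ht
  have hPnn : ∀ z, 0 ≤ P z := hPpos.2.2.1
  set T : ℝ := max (‖θ‖ ^ 2 - r) 0 with hTdef
  have hT0 : 0 ≤ T := le_max_right _ _
  have hTeq : T = (1 - lam) * δ * ρ α := by
    have h1 : (1:ℝ) - lam ≠ 0 := by linarith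
    have h2 : δ ≠ 0 := ne_of_gt hδ
    rw [hρα]
    field_simp
  set D : ℝ → ℝ := fun τ => ⟪gradient P (x τ), f (x τ) +
      ((k (x τ) - ⟪φ (x τ), θh τ⟫ -
          (δ / 2 * ‖φ (x τ)‖ ^ 2 + μ (x τ) * (r + ‖θh τ‖ ^ 2)) *
            ⟪gradient P (x τ), g (x τ)⟫)
        + ⟪φ (x τ), θ⟫) • g (x τ)⟫ with hDdef
  have hVD : ∀ τ, 0 ≤ τ → HasDerivAt (fun u => P (x u)) (D τ) τ := by
    intro τ hτ
    have hPd : DifferentiableAt ℝ P (x τ) := (hP.differentiable two_ne_zero).differentiableAt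
    have hfd := hPd.hasGradientAt.hasFDerivAt
    have hcomp := hfd.comp_hasDerivAt τ (hx τ hτ)
    rw [hDdef]
    simpa [InnerProductSpace.toDual_apply_apply, Function.comp_def] using hcomp
  have hDle : ∀ τ, 0 ≤ τ → α ≤ P (x τ) → D τ ≤ -(lam / 2 * ρ (P (x τ))) := by
    intro τ hτ hαP
    have hραle : ρ α ≤ ρ (P (x τ)) :=
      hρ.2.1.monotoneOn (Set.mem_Ici.2 hα) (Set.mem_Ici.2 (hPnn _)) hαP
    have hρnn : 0 ≤ ρ (P (x τ)) := hρ.2.2.2.1 _ (hPnn _)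
    have hTle : T ≤ (1 - lam) * δ * ρ (P (x τ)) := by
      rw [hTeq]
      have h3 : (0:ℝ) ≤ (1 - lam) * δ := by nlinarith
      nlinarith [mul_le_mul_of_nonneg_left hραle h3]
    have hDeq : D τ = (⟪gradient P (x τ), f (x τ)⟫ + ⟪gradient P (x τ), g (x τ)⟫ * k (x τ))
        + ⟪φ (x τ), θ⟫ * ⟪gradient P (x τ), g (x τ)⟫
        + -(⟪φ (x τ), θh τ⟫ * ⟪gradient P (x τ), g (x τ)⟫)
        - (δ / 2 * ‖φ (x τ)‖ ^ 2 + μ (x τ) * (r + ‖θh τ‖ ^ 2)) *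
            ⟪gradient P (x τ), g (x τ)⟫ ^ 2 := by
      rw [hDdef]
      simp only [inner_add_right, real_inner_smul_right]
      ring
    have hnθ : ‖θ‖ ^ 2 ≤ T + r := by
      have := le_max_left (‖θ‖ ^ 2 - r) 0
      rw [← hTdef] at this
      linarith
    have hX : ⟪φ (x τ), θ⟫ * ⟪gradient P (x τ), g (x τ)⟫ ≤
        |⟪gradient P (x τ), g (x τ)⟫| * (‖φ (x τ)‖ * ‖θ‖) := by
      calc ⟪φ (x τ), θ⟫ * ⟪gradient P (x τ), g (x τ)⟫
          ≤ |⟪φ (x τ), θ⟫ * ⟪gradient P (x τ), g (x τ)⟫| := le_abs_self _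
        _ = |⟪φ (x τ), θ⟫| * |⟪gradient P (x τ), g (x τ)⟫| := abs_mul _ _
        _ ≤ (‖φ (x τ)‖ * ‖θ‖) * |⟪gradient P (x τ), g (x τ)⟫| :=
            mul_le_mul_of_nonneg_right (abs_real_inner_le_norm _ _) (abs_nonneg _)
        _ = |⟪gradient P (x τ), g (x τ)⟫| * (‖φ (x τ)‖ * ‖θ‖) := by ring
    have hY : -(⟪φ (x τ), θh τ⟫ * ⟪gradient P (x τ), g (x τ)⟫) ≤
        |⟪gradient P (x τ), g (x τ)⟫| * (‖φ (x τ)‖ * ‖θh τ‖) := by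
      calc -(⟪φ (x τ), θh τ⟫ * ⟪gradient P (x τ), g (x τ)⟫)
          ≤ |⟪φ (x τ), θh τ⟫ * ⟪gradient P (x τ), g (x τ)⟫| := neg_le_abs _
        _ = |⟪φ (x τ), θh τ⟫| * |⟪gradient P (x τ), g (x τ)⟫| := abs_mul _ _
        _ ≤ (‖φ (x τ)‖ * ‖θh τ‖) * |⟪gradient P (x τ), g (x τ)⟫| :=
            mul_le_mul_of_nonneg_right (abs_real_inner_le_norm _ _) (abs_nonneg _)
        _ = |⟪gradient P (x τ), g (x τ)⟫| * (‖φ (x τ)‖ * ‖θh τ‖) := by ring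
    rw [hDeq]
    exact key_alg hδ (hμpos _) (hQpos.2.2.1 _) (norm_nonneg _) (hμQ _) hT0 hr
      (norm_nonneg _) (norm_nonneg _) hnθ hlam0 hlam1 (hρPQ _) hρnn hTle
      (hkQ (x τ)) hX hY
  have hVcontIcc : ∀ t1 t2 : ℝ, 0 ≤ t1 → ContinuousOn (fun τ => P (x τ)) (Set.Icc t1 t2) :=
    fun t1 t2 ht1 τ hτ => ((hVD τ (le_trans ht1 hτ.1)).continuousAt).continuousWithinAt
  have claim1 : ∀ t1 t2, 0 ≤ t1 → t1 ≤ t2 → P (x t2) ≤ max (P (x t1)) α := by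
    intro t1 t2 ht1 h12
    by_contra hM
    push_neg at hM
    set M := max (P (x t1)) α with hMdef
    set Aset := {τ | τ ∈ Set.Icc t1 t2 ∧ P (x τ) ≤ M} with hAdef
    have ht1A : t1 ∈ Aset := ⟨⟨le_refl _, h12⟩, le_max_left _ _⟩
    have hne : Aset.Nonempty := ⟨t1, ht1A⟩
    have hbdd : BddAbove Aset := ⟨t2, fun τ hτ => hτ.1.2⟩
    set τs := sSup Aset with hτsdef
    have hτs1 : t1 ≤ τs := le_csSup hbdd ht1A
    have hτs2 : τs ≤ t2 := csSup_le hne (fun τ hτ => hτ.1.2)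
    have hτs0 : 0 ≤ τs := le_trans ht1 hτs1
    have hVτs : P (x τs) ≤ M := by
      have hclos : τs ∈ closure Aset := csSup_mem_closure hne hbdd
      have hcw : ContinuousWithinAt (fun τ => P (x τ)) Aset τs :=
        ((hVcontIcc t1 t2 ht1) τs ⟨hτs1, hτs2⟩).mono (fun τ hτ => hτ.1)
      have h1 : P (x τs) ∈ closure ((fun τ => P (x τ)) '' Aset) :=
        hcw.mem_closure_image hclos
      have h2 : ((fun τ => P (x τ)) '' Aset) ⊆ Set.Iic M := by
        rintro _ ⟨τ, hτ, rfl⟩; exact hτ.2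
      have h3 := closure_mono h2 h1
      rwa [closure_Iic] at h3
    have hτslt : τs < t2 := lt_of_le_of_ne hτs2 (by
      intro heq
      rw [heq] at hVτs
      linarith)
    have hgt : ∀ τ, τs < τ → τ ≤ t2 → M < P (x τ) := by
      intro τ hτ1 hτ2
      by_contra hle
      push_neg at hle
      have hmem : τ ∈ Aset := ⟨⟨le_trans hτs1 hτ1.le, hτ2⟩, hle⟩
      exact absurd (le_csSup hbdd hmem) (not_le.2 hτ1)
    have hanti : AntitoneOn (fun τ => P (x τ)) (Set.Icc τs t2) := by
      apply antitoneOn_of_deriv_nonpos (convex_Icc _ _)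
      · exact hVcontIcc τs t2 hτs0
      · intro τ hτ
        rw [interior_Icc] at hτ
        exact ((hVD τ (le_trans hτs0 hτ.1.le)).differentiableAt).differentiableWithinAt
      · intro τ hτ
        rw [interior_Icc] at hτ
        have hτ0 : 0 ≤ τ := le_trans hτs0 hτ.1.le
        have hPα : α ≤ P (x τ) :=
          le_trans (le_max_right _ _) (hgt τ hτ.1 hτ.2.le).le
        rw [(hVD τ hτ0).deriv]
        have hb := hDle τ hτ0 hPα
        have hρnn : 0 ≤ ρ (P (x τ)) := hρ.2.2.2.1 _ (hPnn _)
        nlinarith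
    have hfin := hanti (Set.left_mem_Icc.2 hτslt.le) (Set.right_mem_Icc.2 hτslt.le) hτslt.le
    simp only at hfin
    linarith
  set s0 := max (P (x 0) - α) 0 with hs0def
  have hs00 : 0 ≤ s0 := le_max_right _ _
  obtain ⟨hy0, hyeq⟩ := σKL_spec hρ hc hs00 ht
  set y := σKL ρ (lam / 2) s0 t with hydef
  by_contra hcon
  push_neg at hcon
  have hWt : y < P (x t) - α := by
    by_contra hle
    push_neg at hle
    have hmax : max (P (x t) - α) 0 ≤ y := max_le hle hy0
    linarith
  have hall : ∀ τ, 0 ≤ τ → τ ≤ t → α + y < P (x τ) := by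
    intro τ hτ1 hτ2
    have h1 := claim1 τ t hτ1 hτ2
    rcases le_or_gt (P (x τ)) α with h | h
    · have h2 : max (P (x τ)) α ≤ α := max_le h le_rfl
      linarith
    · have h3 : max (P (x τ)) α = P (x τ) := max_eq_left h.le
      rw [h3] at h1
      linarith
  have hρy_mono : ∀ τ, 0 ≤ τ → τ ≤ t → ρ y ≤ ρ (P (x τ)) := fun τ h1 h2 =>
    hρ.2.1.monotoneOn (Set.mem_Ici.2 hy0) (Set.mem_Ici.2 (hPnn _))
      (by linarith [hall τ h1 h2])
  have hanti : AntitoneOn (fun τ => P (x τ) + (lam / 2 * ρ y) * τ) (Set.Icc 0 t) := by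
    apply antitoneOn_of_deriv_nonpos (convex_Icc _ _)
    · exact (hVcontIcc 0 t le_rfl).add ((continuous_const.mul continuous_id).continuousOn)
    · intro τ hτ
      rw [interior_Icc] at hτ
      have hd : HasDerivAt (fun τ => P (x τ) + (lam / 2 * ρ y) * τ)
          (D τ + lam / 2 * ρ y) τ := by
        have h := (hVD τ hτ.1.le).add ((hasDerivAt_id τ).const_mul (lam / 2 * ρ y))
        simp only [mul_one] at h
        exact h
      exact hd.differentiableAt.differentiableWithinAt
    · intro τ hτ
      rw [interior_Icc] at hτ
      have hτ0 : 0 ≤ τ := hτ.1.le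
      have hd : HasDerivAt (fun τ => P (x τ) + (lam / 2 * ρ y) * τ)
          (D τ + lam / 2 * ρ y) τ := by
        have := (hVD τ hτ0).add ((hasDerivAt_id τ).const_mul (lam / 2 * ρ y))
        simp only [mul_one] at this
        exact this
      rw [hd.deriv]
      have hb := hDle τ hτ0 (by linarith [hall τ hτ0 hτ.2.le])
      have hmo := hρy_mono τ hτ0 hτ.2.le
      nlinarith
  have hfin := hanti (Set.left_mem_Icc.2 ht) (Set.right_mem_Icc.2 ht) ht
  simp only at hfin
  have h1 : P (x 0) - α ≤ s0 := le_max_left _ _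
  have h2 : (lam / 2 * ρ y) * t = lam / 2 * t * ρ y := by ring
  linarith

end
end

section
/- Let f, g : ℝ^n → ℝ^n and φ : ℝ^n → ℝ^p be locally Lipschitz with f(0) = 0 and φ(0) = 0, let P : ℝ^n → [0,∞) be a C¹ positive definite and radially unbounded function, let Q : ℝ^n → [0,∞) be continuous, positive definite and radially unbounded, let k : ℝ^n → ℝ satisfy k(0) = 0 and ∇P(x)·f(x) + (∇P(x)·g(x))·k(x) ≤ −Q(x) for all x, let μ : ℝ^n → (0,∞) satisfy |φ(x)|² ≤ μ(x)·Q(x) for all x, and let ρ be a class K∞ function with ρ(P(x)) ≤ Q(x) for all x. Then for every δ > 0 and r ≥ 0 and for all x ∈ ℝ^n and θ̂, θ ∈ ℝ^p, the following pointwise inequality holds: ∇P(x)·f(x) + (∇P(x)·g(x))·( k(x) − ⟨φ(x),θ̂⟩ − (δ/2·|φ(x)|² + μ(x)·(r + |θ̂|²))·(∇P(x)·g(x)) + ⟨φ(x),θ⟩ ) ≤ −½·ρ(P(x)) + (1/(2δ))·(|θ|² − r)^+. -/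
open scoped RealInnerProductSpace

noncomputable section

lemma aux_core (A c h tn s t δ m Qx ρx F K I1 I2 : ℝ)
    (hδ : 0 < δ) (hm : 0 < m) (hc : 0 ≤ c)
    (hI1 : |I1| ≤ c * tn) (hI2 : |I2| ≤ c * h)
    (htn : tn ≤ s + t)
    (hQ : F + A * K ≤ -Qx) (hρ : (1/2) * ρx + c^2/(2*m) ≤ Qx) :
    F + A * (K - I2 - (δ/2*c^2 + m*(t^2 + h^2))*A + I1)
      ≤ -(1/2) * ρx + s^2/(2*δ) := by
  set B := |A| with hBdef
  have hB0 : 0 ≤ B := abs_nonneg A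
  have hA2 : A^2 = B^2 := (sq_abs A).symm
  have key1 : A * I1 ≤ B * (c * tn) := by
    calc A * I1 ≤ |A * I1| := le_abs_self _
    _ = B * |I1| := by rw [abs_mul]
    _ ≤ B * (c * tn) := mul_le_mul_of_nonneg_left hI1 hB0
  have key2 : -(A * I2) ≤ B * (c * h) := by
    calc -(A * I2) ≤ |A * I2| := neg_le_abs _
    _ = B * |I2| := by rw [abs_mul]
    _ ≤ B * (c * h) := mul_le_mul_of_nonneg_left hI2 hB0
  have h3 : B * (c * tn) ≤ B*c*s + B*c*t := by
    have h' : B * c * tn ≤ B * c * (s + t) :=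
      mul_le_mul_of_nonneg_left htn (mul_nonneg hB0 hc)
    nlinarith [h']
  have h4 : B*c*s - δ/2*(B^2*c^2) ≤ s^2/(2*δ) := by
    rw [le_div_iff₀ (by positivity)]
    nlinarith [sq_nonneg (δ*(B*c) - s)]
  have h5 : B*c*t - m*(B^2*t^2) ≤ c^2/(4*m) := by
    rw [le_div_iff₀ (by positivity)]
    nlinarith [sq_nonneg (2*m*(B*t) - c)]
  have h6 : B*c*h - m*(B^2*h^2) ≤ c^2/(4*m) := by
    rw [le_div_iff₀ (by positivity)]
    nlinarith [sq_nonneg (2*m*(B*h) - c)]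
  have hdiv : c^2/(2*m) = c^2/(4*m) + c^2/(4*m) := by ring
  have expand : F + A * (K - I2 - (δ/2*c^2 + m*(t^2 + h^2))*A + I1)
      = F + A*K + (-(A*I2)) + (A*I1)
        - (δ/2*(B^2*c^2) + m*(B^2*t^2) + m*(B^2*h^2)) := by
    rw [← hA2]; ring
  rw [expand]
  linarith [key1, key2, h3, h4, h5, h6, hQ, hρ]

/-- The key pointwise Lyapunov inequality for the modified adaptive controller of Theorem 1. -/
theorem lyapunov_decay_inequality {n p : ℕ}
    (f g : EuclideanSpace ℝ (Fin n) → EuclideanSpace ℝ (Fin n))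
    (φ : EuclideanSpace ℝ (Fin n) → EuclideanSpace ℝ (Fin p))
    (hf : LocallyLipschitz f) (hg : LocallyLipschitz g) (hφ : LocallyLipschitz φ)
    (hf0 : f 0 = 0) (hφ0 : φ 0 = 0)
    (P : EuclideanSpace ℝ (Fin n) → ℝ) (hP : ContDiff ℝ 1 P) (hPpos : PosDefRadUnbounded P)
    (Q : EuclideanSpace ℝ (Fin n) → ℝ) (hQc : Continuous Q) (hQpos : PosDefRadUnbounded Q)
    (k : EuclideanSpace ℝ (Fin n) → ℝ) (hk0 : k 0 = 0)
    (hkQ : ∀ x, ⟪gradient P x, f x⟫ + ⟪gradient P x, g x⟫ * k x ≤ -Q x)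
    (μ : EuclideanSpace ℝ (Fin n) → ℝ) (hμpos : ∀ x, 0 < μ x)
    (hμQ : ∀ x, ‖φ x‖ ^ 2 ≤ μ x * Q x)
    (ρ : ℝ → ℝ) (hρ : IsClassKInf ρ) (hρPQ : ∀ x, ρ (P x) ≤ Q x) :
    ∀ (δ : ℝ), 0 < δ → ∀ (r : ℝ), 0 ≤ r →
      ∀ (x : EuclideanSpace ℝ (Fin n)) (θh θ : EuclideanSpace ℝ (Fin p)),
        ⟪gradient P x, f x⟫ + ⟪gradient P x, g x⟫ *
            (k x - ⟪φ x, θh⟫ -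
              (δ / 2 * ‖φ x‖ ^ 2 + μ x * (r + ‖θh‖ ^ 2)) * ⟪gradient P x, g x⟫
              + ⟪φ x, θ⟫)
          ≤ -(1 / 2) * ρ (P x) + (1 / (2 * δ)) * max (‖θ‖ ^ 2 - r) 0 := by
  intro δ hδ r hr x θh θ
  set s := Real.sqrt (max (‖θ‖ ^ 2 - r) 0) with hsdef
  set t := Real.sqrt r with htdef
  have hs2 : s ^ 2 = max (‖θ‖ ^ 2 - r) 0 := Real.sq_sqrt (le_max_right _ _)
  have ht2 : t ^ 2 = r := Real.sq_sqrt hr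
  have hθst : ‖θ‖ ≤ s + t := by
    have h1 : ‖θ‖ ^ 2 ≤ (s + t) ^ 2 := by
      nlinarith [le_max_left (‖θ‖ ^ 2 - r) 0, hs2, ht2,
        mul_nonneg (Real.sqrt_nonneg (max (‖θ‖ ^ 2 - r) 0)) (Real.sqrt_nonneg r)]
    calc ‖θ‖ = Real.sqrt (‖θ‖ ^ 2) := (Real.sqrt_sq (norm_nonneg θ)).symm
    _ ≤ Real.sqrt ((s + t) ^ 2) := Real.sqrt_le_sqrt h1
    _ = s + t := Real.sqrt_sq (by positivity)
  have hρ' : (1/2) * ρ (P x) + ‖φ x‖ ^ 2 / (2 * μ x) ≤ Q x := by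
    have hm := hμpos x
    have h1 : ‖φ x‖ ^ 2 / (2 * μ x) ≤ Q x / 2 := by
      rw [div_le_div_iff₀ (by positivity) two_pos]
      nlinarith [hμQ x]
    linarith [hρPQ x, h1]
  have main := aux_core (⟪gradient P x, g x⟫) (‖φ x‖) (‖θh‖) (‖θ‖) s t δ (μ x)
    (Q x) (ρ (P x)) (⟪gradient P x, f x⟫) (k x) (⟪φ x, θ⟫) (⟪φ x, θh⟫)
    hδ (hμpos x) (norm_nonneg _) (abs_real_inner_le_norm _ _)
    (abs_real_inner_le_norm _ _) hθst (hkQ x) hρ'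
  have e1 : s ^ 2 / (2 * δ) = (1 / (2 * δ)) * max (‖θ‖ ^ 2 - r) 0 := by
    rw [hs2]; ring
  rw [← e1, show r = t ^ 2 from ht2.symm]
  convert main using 4

end
end

section
/- Let ρ be a class K∞ function, let λ ∈ (0,1) and α ≥ 0, and let p : [0,∞) → [0,∞) be a differentiable function satisfying p'(t) ≤ −½·ρ(p(t)) + ((1−λ)/2)·ρ(α) for all t ≥ 0. Then the function W(t) := ½·((p(t) − α)^+)² is differentiable on [0,∞) and satisfies W'(t) ≤ −ρ̃(W(t)) for all t ≥ 0, where ρ̃(s) := λ·√(s/2)·ρ(√(2s)) is a class K∞ function. -/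
noncomputable section

lemma my_tendsto_sqrt_atTop : Filter.Tendsto Real.sqrt Filter.atTop Filter.atTop := by
  apply Filter.tendsto_atTop_atTop.mpr
  intro b
  refine ⟨b ^ 2, fun x hx => ?_⟩
  calc b ≤ |b| := le_abs_self b
  _ = Real.sqrt (b ^ 2) := (Real.sqrt_sq_eq_abs b).symm
  _ ≤ Real.sqrt x := Real.sqrt_le_sqrt hx

lemma hasDerivAt_relu_sq (α x : ℝ) :
    HasDerivAt (fun y => (1 / 2 : ℝ) * (max (y - α) 0) ^ 2) (max (x - α) 0) x := by
  rcases lt_trichotomy x α with h | h | h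
  · have h0 : max (x - α) 0 = 0 := max_eq_right (by linarith)
    rw [h0]
    apply (hasDerivAt_const x (0 : ℝ)).congr_of_eventuallyEq
    filter_upwards [Iio_mem_nhds h] with y hy
    have : max (y - α) 0 = 0 := max_eq_right (by simp only [Set.mem_Iio] at hy; linarith)
    simp [this]
  · subst h
    have h0 : max (x - x) 0 = 0 := by simp
    rw [h0]
    rw [hasDerivAt_iff_tendsto]
    have key : ∀ y : ℝ, ‖y - x‖⁻¹ *
        ‖(1 / 2 : ℝ) * (max (y - x) 0) ^ 2 - (1 / 2 : ℝ) * (max (x - x) 0) ^ 2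
          - (y - x) • (0 : ℝ)‖ ≤ (1 / 2 : ℝ) * |y - x| := by
      intro y
      have h1 : (max (y - x) 0) ^ 2 ≤ (y - x) ^ 2 := by
        rcases le_total (y - x) 0 with hc | hc
        · rw [max_eq_right hc]; nlinarith [sq_nonneg (y - x)]
        · rw [max_eq_left hc]
      have h2 : ‖(1 / 2 : ℝ) * (max (y - x) 0) ^ 2 - (1 / 2 : ℝ) * (max (x - x) 0) ^ 2
          - (y - x) • (0 : ℝ)‖ = (1 / 2 : ℝ) * (max (y - x) 0) ^ 2 := by
        simp [Real.norm_eq_abs, abs_of_nonneg]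
      rw [h2]
      rcases eq_or_ne y x with rfl | hne
      · simp
      · have hyx : (0 : ℝ) < |y - x| := abs_pos.mpr (sub_ne_zero.mpr hne)
        rw [Real.norm_eq_abs, inv_mul_le_iff₀ hyx]
        nlinarith [sq_abs (y - x)]
    apply squeeze_zero (fun y => by positivity) key
    have : Filter.Tendsto (fun y : ℝ => (1 / 2 : ℝ) * |y - x|) (nhds x)
        (nhds ((1 / 2 : ℝ) * |x - x|)) := by
      apply Filter.Tendsto.const_mul
      exact (continuous_abs.comp (continuous_id.sub continuous_const)).tendsto x
    simpa using this
  · have h0 : max (x - α) 0 = x - α := max_eq_left (by linarith)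
    rw [h0]
    have hd : HasDerivAt (fun y : ℝ => (1 / 2 : ℝ) * (y - α) ^ 2) (x - α) x := by
      have := (((hasDerivAt_id x).sub_const α).pow 2).const_mul (1 / 2 : ℝ)
      exact this.congr_deriv (by simp)
    apply hd.congr_of_eventuallyEq
    filter_upwards [Ioi_mem_nhds h] with y hy
    have : max (y - α) 0 = y - α := max_eq_left (by simp only [Set.mem_Ioi] at hy; linarith)
    rw [this]

/-- Comparison step in the proof of Theorem 1: if `p' ≤ −½ρ(p) + ((1−λ)/2)ρ(α)`, then
`W = ½((p−α)⁺)²` is differentiable and satisfies `W' ≤ −ρ̃(W)` for the class `K∞` function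
`ρ̃(s) = λ√(s/2)·ρ(√(2s))`. -/
theorem comparison_W_decay (ρ : ℝ → ℝ) (hρ : IsClassKInf ρ)
    (lam : ℝ) (hlam : lam ∈ Set.Ioo (0 : ℝ) 1) (α : ℝ) (hα : 0 ≤ α)
    (p p' : ℝ → ℝ) (hpnn : ∀ t, 0 ≤ t → 0 ≤ p t)
    (hp : ∀ t, 0 ≤ t → HasDerivAt p (p' t) t)
    (hp' : ∀ t, 0 ≤ t → p' t ≤ -(1 / 2) * ρ (p t) + ((1 - lam) / 2) * ρ α) :
    (∀ t, 0 ≤ t →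
      DifferentiableAt ℝ (fun s => (1 / 2) * (max (p s - α) 0) ^ 2) t ∧
      deriv (fun s => (1 / 2) * (max (p s - α) 0) ^ 2) t ≤
        -(lam * Real.sqrt (((1 / 2) * (max (p t - α) 0) ^ 2) / 2) *
          ρ (Real.sqrt (2 * ((1 / 2) * (max (p t - α) 0) ^ 2))))) ∧
    IsClassKInf (fun s => lam * Real.sqrt (s / 2) * ρ (Real.sqrt (2 * s))) := by
  obtain ⟨hρc, hρm, hρ0, hρnn, hρt⟩ := hρ
  obtain ⟨hlam0, hlam1⟩ := hlam
  constructor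
  · intro t ht
    have hd : HasDerivAt (fun s => (1 / 2 : ℝ) * (max (p s - α) 0) ^ 2)
        (max (p t - α) 0 * p' t) t :=
      (hasDerivAt_relu_sq α (p t)).comp t (hp t ht)
    refine ⟨hd.differentiableAt, ?_⟩
    rw [hd.deriv]
    rcases le_or_gt (p t - α) 0 with hle | hlt
    · rw [max_eq_right hle]
      simp [hρ0]
    · set x := p t - α with hx
      rw [max_eq_left hlt.le]
      have hsq1 : Real.sqrt ((1 / 2 : ℝ) * x ^ 2 / 2) = x / 2 := by
        rw [show (1 / 2 : ℝ) * x ^ 2 / 2 = (x / 2) ^ 2 by ring,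
          Real.sqrt_sq (by linarith)]
      have hsq2 : Real.sqrt (2 * ((1 / 2 : ℝ) * x ^ 2)) = x := by
        rw [show 2 * ((1 / 2 : ℝ) * x ^ 2) = x ^ 2 by ring, Real.sqrt_sq hlt.le]
      rw [hsq1, hsq2]
      have hpt : 0 ≤ p t := hpnn t ht
      have hαpt : α ≤ p t := by linarith
      have hxpt : x ≤ p t := by simp [hx]; linarith
      have h1 : ρ α ≤ ρ (p t) := hρm.monotoneOn hα hpt hαpt
      have h2 : ρ x ≤ ρ (p t) := hρm.monotoneOn hlt.le hpt hxpt
      have hb := hp' t ht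
      have hmul : x * p' t ≤ x * (-(1 / 2) * ρ (p t) + (1 - lam) / 2 * ρ α) :=
        mul_le_mul_of_nonneg_left hb hlt.le
      have key : x * (-(1 / 2) * ρ (p t) + (1 - lam) / 2 * ρ α) ≤
          -(lam * (x / 2) * ρ x) := by
        nlinarith [mul_nonneg (mul_nonneg hlt.le (by linarith : (0:ℝ) ≤ 1 - lam))
            (by linarith : (0:ℝ) ≤ ρ (p t) - ρ α),
          mul_nonneg (mul_nonneg hlam0.le hlt.le)
            (by linarith : (0:ℝ) ≤ ρ (p t) - ρ x)]
      linarith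
  · refine ⟨?_, ?_, ?_, ?_, ?_⟩
    · apply ContinuousOn.mul
      · exact (continuous_const.mul
          (Real.continuous_sqrt.comp (continuous_id.div_const 2))).continuousOn
      · exact hρc.comp
          (Real.continuous_sqrt.comp (continuous_const.mul continuous_id)).continuousOn
          (fun s _ => Real.sqrt_nonneg _)
    · intro s hs t ht hst
      simp only [Set.mem_Ici] at hs ht
      have htpos : 0 < t := lt_of_le_of_lt hs hst
      have hρtpos : 0 < ρ (Real.sqrt (2 * t)) := by
        have : ρ 0 < ρ (Real.sqrt (2 * t)) := hρm Set.self_mem_Ici (Real.sqrt_nonneg _)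
          (Real.sqrt_pos.mpr (by linarith))
        rwa [hρ0] at this
      rcases eq_or_lt_of_le hs with rfl | hs'
      · have he : lam * Real.sqrt ((0:ℝ) / 2) * ρ (Real.sqrt (2 * 0)) = 0 := by
          rw [zero_div, Real.sqrt_zero, mul_zero, zero_mul]
        show lam * Real.sqrt ((0:ℝ) / 2) * ρ (Real.sqrt (2 * 0)) <
          lam * Real.sqrt (t / 2) * ρ (Real.sqrt (2 * t))
        rw [he]
        have h5 : 0 < Real.sqrt (t / 2) := Real.sqrt_pos.mpr (by linarith)
        exact mul_pos (mul_pos hlam0 h5) hρtpos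
      · have h1 : lam * Real.sqrt (s / 2) < lam * Real.sqrt (t / 2) :=
          mul_lt_mul_of_pos_left
            (Real.sqrt_lt_sqrt (by linarith) (by linarith)) hlam0
        have h2 : ρ (Real.sqrt (2 * s)) < ρ (Real.sqrt (2 * t)) :=
          hρm (Real.sqrt_nonneg _) (Real.sqrt_nonneg _)
            (Real.sqrt_lt_sqrt (by linarith) (by linarith))
        have h3 : 0 ≤ lam * Real.sqrt (s / 2) := by positivity
        have h4 : 0 ≤ ρ (Real.sqrt (2 * s)) := hρnn _ (Real.sqrt_nonneg _)
        exact mul_lt_mul'' h1 h2 h3 h4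
    · simp [hρ0]
    · intro s hs
      have := hρnn _ (Real.sqrt_nonneg (2 * s))
      positivity
    · apply Filter.Tendsto.atTop_mul_atTop₀
      · apply Filter.Tendsto.const_mul_atTop hlam0
        exact my_tendsto_sqrt_atTop.comp
          (Filter.tendsto_id.atTop_div_const (by norm_num))
      · exact hρt.comp (my_tendsto_sqrt_atTop.comp
          (Filter.Tendsto.const_mul_atTop (by norm_num) Filter.tendsto_id))

end
end

section
/- Let n be a positive natural number and let P, Q : ℝ^n → [0,∞) be continuous functions that are both positive definite and radially unbounded. Then there exists a class K∞ function ρ such that ρ(P(x)) ≤ Q(x) for all x ∈ ℝ^n. -/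
noncomputable section

open Filter MeasureTheory Set Topology

/-- For any two continuous, positive definite and radially unbounded functions `P, Q` there is a
class `K∞` function `ρ` with `ρ(P(x)) ≤ Q(x)` for all `x`. -/
theorem exists_Kinf_between {n : ℕ} (hn : 0 < n)
    (P Q : EuclideanSpace ℝ (Fin n) → ℝ)
    (hPc : Continuous P) (hPpos : PosDefRadUnbounded P)
    (hQc : Continuous Q) (hQpos : PosDefRadUnbounded Q) :
    ∃ ρ : ℝ → ℝ, IsClassKInf ρ ∧ ∀ x, ρ (P x) ≤ Q x := by
  classical
  obtain ⟨hP0, hPpos', hPnn, hPtop⟩ := hPpos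
  obtain ⟨hQ0, hQpos', hQnn, hQtop⟩ := hQpos
  haveI : Nonempty (Fin n) := ⟨⟨0, hn⟩⟩
  -- far-field lower bound for Q
  have hQfar : ∀ c : ℝ, ∃ r : ℝ, ∀ x : EuclideanSpace ℝ (Fin n), r ≤ ‖x‖ → c ≤ Q x := by
    intro c
    have h := hQtop.eventually (eventually_ge_atTop c)
    rw [← comap_norm_atTop] at h
    obtain ⟨r, hr⟩ := eventually_atTop.1 (Filter.eventually_comap.mp h)
    exact ⟨r, fun x hx => hr ‖x‖ hx x rfl⟩
  -- the sets {x | s ≤ P x}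
  have hne : ∀ s : ℝ, {x : EuclideanSpace ℝ (Fin n) | s ≤ P x}.Nonempty := fun s =>
    (hPtop.eventually (eventually_ge_atTop s)).exists
  set θ : ℝ → ℝ := fun s => sInf (Q '' {x | s ≤ P x}) with hθdef
  have hbdd : ∀ s : ℝ, BddBelow (Q '' {x | s ≤ P x}) := by
    intro s
    refine ⟨0, ?_⟩
    rintro y ⟨x, -, rfl⟩
    exact hQnn x
  have hθ_le : ∀ x, θ (P x) ≤ Q x := fun x => csInf_le (hbdd _) ⟨x, Set.mem_setOf_eq ▸ le_refl (P x), rfl⟩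
  have hθ_nonneg : ∀ s, 0 ≤ θ s := by
    intro s
    refine le_csInf ((hne s).image Q) ?_
    rintro y ⟨x, -, rfl⟩
    exact hQnn x
  have hθ_mono : Monotone θ := by
    intro a b hab
    exact csInf_le_csInf (hbdd a) ((hne b).image Q)
      (Set.image_mono (fun x hx => le_trans hab hx))
  have hθ_pos : ∀ s : ℝ, 0 < s → 0 < θ s := by
    intro s hs
    obtain ⟨r, hr⟩ := hQfar 1
    set K := Metric.closedBall (0 : EuclideanSpace ℝ (Fin n)) r ∩ {x | s ≤ P x} with hK
    have hKc : IsCompact K :=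
      (isCompact_closedBall _ _).inter_right (isClosed_le continuous_const hPc)
    by_cases hKne : K.Nonempty
    · obtain ⟨x₀, hx₀K, hx₀min⟩ := hKc.exists_isMinOn hKne hQc.continuousOn
      have hx₀ne : x₀ ≠ 0 := by
        intro h
        have h2 : s ≤ P x₀ := hx₀K.2
        rw [h, hP0] at h2
        exact absurd h2 (not_le.mpr hs)
      have hQx₀ : 0 < Q x₀ := hQpos' x₀ hx₀ne
      have : 0 < min (Q x₀) 1 := lt_min hQx₀ one_pos
      refine lt_of_lt_of_le this (le_csInf ((hne s).image Q) ?_)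
      rintro y ⟨x, hx, rfl⟩
      by_cases hxr : r ≤ ‖x‖
      · exact le_trans (min_le_right _ _) (hr x hxr)
      · have hxK : x ∈ K := ⟨Metric.mem_closedBall.2 (by
          simpa using le_of_lt (not_le.mp hxr)), hx⟩
        exact le_trans (min_le_left _ _) (hx₀min hxK)
    · refine lt_of_lt_of_le one_pos (le_csInf ((hne s).image Q) ?_)
      rintro y ⟨x, hx, rfl⟩
      by_cases hxr : r ≤ ‖x‖
      · exact hr x hxr
      · exact absurd ⟨Metric.mem_closedBall.2 (by
          simpa using le_of_lt (not_le.mp hxr)), hx⟩ (fun h => hKne ⟨x, h⟩)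
  have hθ_top : Tendsto θ atTop atTop := by
    rw [tendsto_atTop]
    intro M
    obtain ⟨r, hr⟩ := hQfar M
    obtain ⟨C, hC⟩ : ∃ C : ℝ, ∀ x ∈ Metric.closedBall (0 : EuclideanSpace ℝ (Fin n)) r,
        P x ≤ C := by
      obtain ⟨C, hC⟩ := (isCompact_closedBall (0 : EuclideanSpace ℝ (Fin n)) r).bddAbove_image
        hPc.continuousOn
      exact ⟨C, fun x hx => hC ⟨x, hx, rfl⟩⟩
    have key : M ≤ θ (C + 1) := by
      refine le_csInf ((hne _).image Q) ?_
      rintro y ⟨x, hx, rfl⟩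
      refine hr x ?_
      by_contra hxr
      have hxK : x ∈ Metric.closedBall (0 : EuclideanSpace ℝ (Fin n)) r :=
        Metric.mem_closedBall.2 (by simpa using le_of_lt (not_le.mp hxr))
      have := hC x hxK
      linarith [Set.mem_setOf_eq ▸ hx]
    filter_upwards [eventually_ge_atTop (C + 1)] with s hs
    exact le_trans key (hθ_mono hs)
  -- the auxiliary function ψ
  set ψ : ℝ → ℝ := fun t => min (θ t) (max t 0) with hψdef
  have hψ_mono : Monotone ψ := hθ_mono.min (monotone_id.max monotone_const)
  have hψ_nonneg : ∀ t, 0 ≤ ψ t := fun t => le_min (hθ_nonneg t) (le_max_right _ _)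
  have hψ_le_id : ∀ t, 0 ≤ t → ψ t ≤ t := fun t ht =>
    le_trans (min_le_right _ _) (by simp [ht])
  have hψ_le_θ : ∀ t, ψ t ≤ θ t := fun t => min_le_left _ _
  have hψ_pos : ∀ t : ℝ, 0 < t → 0 < ψ t := fun t ht =>
    lt_min (hθ_pos t ht) (lt_of_lt_of_le ht (le_max_left _ _))
  have hψ_top : Tendsto ψ atTop atTop := by
    rw [tendsto_atTop]
    intro b
    filter_upwards [(tendsto_atTop.1 hθ_top) b, eventually_ge_atTop b] with s h1 h2
    exact le_min h1 (le_trans h2 (le_max_left _ _))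
  have hint : ∀ a b : ℝ, IntervalIntegrable ψ volume a b := fun a b =>
    (hψ_mono.monotoneOn _).intervalIntegrable
  set F : ℝ → ℝ := fun s => ∫ t in (0:ℝ)..s, ψ t with hFdef
  have hF0 : F 0 = 0 := intervalIntegral.integral_same
  have hFc : Continuous F := intervalIntegral.continuous_primitive hint 0
  have hF_nonneg : ∀ s, 0 ≤ s → 0 ≤ F s := fun s hs =>
    intervalIntegral.integral_nonneg hs (fun u _ => hψ_nonneg u)
  -- F b - F a = ∫ a..b
  have hF_add : ∀ a b : ℝ, F a + ∫ t in a..b, ψ t = F b := fun a b =>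
    intervalIntegral.integral_add_adjacent_intervals (hint 0 a) (hint a b)
  have h_lower : ∀ a b : ℝ, a ≤ b → (b - a) * ψ a ≤ ∫ t in a..b, ψ t := by
    intro a b hab
    have := intervalIntegral.integral_mono_on hab (intervalIntegrable_const (c := ψ a))
      (hint a b) (fun x hx => hψ_mono hx.1)
    simpa [smul_eq_mul] using this
  have h_upper : ∀ a b : ℝ, a ≤ b → (∫ t in a..b, ψ t) ≤ (b - a) * ψ b := by
    intro a b hab
    have := intervalIntegral.integral_mono_on hab (hint a b)
      (intervalIntegrable_const (c := ψ b)) (fun x hx => hψ_mono hx.2)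
    simpa [smul_eq_mul] using this
  -- key strict inequality : F a < a * ψ a for a > 0
  have hkey : ∀ a : ℝ, 0 < a → F a < a * ψ a := by
    intro a ha
    set ε := min a (ψ a) with hε
    have hε_pos : 0 < ε := lt_min ha (hψ_pos a ha)
    have hεa : ε ≤ a := min_le_left _ _
    have hεψ : ε ≤ ψ a := min_le_right _ _
    have h1 : (∫ t in (0:ℝ)..ε, ψ t) ≤ ε ^ 2 / 2 := by
      have := intervalIntegral.integral_mono_on (le_of_lt hε_pos) (hint 0 ε)
        (continuous_id.intervalIntegrable _ _) (fun x hx => hψ_le_id x hx.1)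
      simpa [integral_id] using this
    have h2 : (∫ t in ε..a, ψ t) ≤ (a - ε) * ψ a := h_upper ε a hεa
    have hsplit : F a = (∫ t in (0:ℝ)..ε, ψ t) + ∫ t in ε..a, ψ t :=
      (intervalIntegral.integral_add_adjacent_intervals (hint 0 ε) (hint ε a)).symm
    have : ε ^ 2 / 2 < ε * ψ a := by nlinarith
    calc F a ≤ ε ^ 2 / 2 + (a - ε) * ψ a := by rw [hsplit]; exact add_le_add h1 h2
      _ < ε * ψ a + (a - ε) * ψ a := by linarith
      _ = a * ψ a := by ring
  set ρ : ℝ → ℝ := fun s => F s / s with hρdef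
  have hρ0 : ρ 0 = 0 := by simp [hρdef, hF0]
  have hρ_nonneg : ∀ s, 0 ≤ s → 0 ≤ ρ s := fun s hs => div_nonneg (hF_nonneg s hs) hs
  have hρ_le_ψ : ∀ s, 0 ≤ s → ρ s ≤ ψ s := by
    intro s hs
    rcases eq_or_lt_of_le hs with h | h
    · simp [← h, hρ0, hψ_nonneg 0]
    · rw [hρdef]
      rw [div_le_iff₀ h]
      have := h_lower 0 s (le_of_lt h)  -- not the right one; use upper bound
      have h2 := h_upper 0 s (le_of_lt h)
      have : F s = ∫ t in (0:ℝ)..s, ψ t := rfl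
      rw [this]
      calc (∫ t in (0:ℝ)..s, ψ t) ≤ (s - 0) * ψ s := h_upper 0 s (le_of_lt h)
        _ = ψ s * s := by ring
  refine ⟨ρ, ⟨?_, ?_, hρ0, hρ_nonneg, ?_⟩, ?_⟩
  · -- continuity on Ici 0
    intro s hs
    rcases eq_or_lt_of_le (Set.mem_Ici.mp hs) with h | h
    · have hb : ∀ᶠ t in 𝓝[Set.Ici (0:ℝ)] 0, ρ t ∈ Set.Icc 0 t := by
        filter_upwards [self_mem_nhdsWithin] with t ht
        exact ⟨hρ_nonneg t ht, le_trans (hρ_le_ψ t ht) (hψ_le_id t ht)⟩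
      have htend : Tendsto ρ (𝓝[Set.Ici (0:ℝ)] 0) (𝓝 0) := by
        refine tendsto_of_tendsto_of_tendsto_of_le_of_le' tendsto_const_nhds
          ((continuous_id.tendsto 0).mono_left nhdsWithin_le_nhds) ?_ ?_
        · filter_upwards [hb] with t ht using ht.1
        · filter_upwards [hb] with t ht using ht.2
      rw [← h]
      unfold ContinuousWithinAt
      rw [hρ0]
      exact htend
    · exact (ContinuousAt.continuousWithinAt
        ((hFc.continuousAt).div continuousAt_id (ne_of_gt h)))
  · -- strict monotonicity on Ici 0
    intro a ha b hb hab
    rcases eq_or_lt_of_le (Set.mem_Ici.mp ha) with h | h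
    · rw [← h, hρ0]
      have hbpos : 0 < b := h ▸ hab
      have hFb : 0 < F b := by
        refine intervalIntegral.intervalIntegral_pos_of_pos_on (hint 0 b) ?_ hbpos
        intro x hx
        exact hψ_pos x hx.1
      exact div_pos hFb hbpos
    · have hbpos : 0 < b := lt_trans h hab
      rw [hρdef]
      rw [div_lt_div_iff₀ h hbpos]
      have h1 : F a + (b - a) * ψ a ≤ F b := by
        rw [← hF_add a b]
        exact add_le_add_right (h_lower a b (le_of_lt hab)) _
      have h2 : F a < a * ψ a := hkey a h
      nlinarith
  · -- tendsto atTop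
    have hcomp : Tendsto (fun s : ℝ => ψ (s / 2) / 2) atTop atTop :=
      (hψ_top.comp (tendsto_id.atTop_div_const two_pos)).atTop_div_const two_pos
    refine tendsto_atTop_mono' atTop ?_ hcomp
    filter_upwards [eventually_gt_atTop (0:ℝ)] with s hs
    have h2 : (0:ℝ) < s / 2 := by linarith
    have hlow : (s / 2) * ψ (s / 2) ≤ F s := by
      have := h_lower (s/2) s (by linarith)
      have hsplit := hF_add (s/2) s
      have hF2 : 0 ≤ F (s/2) := hF_nonneg _ (le_of_lt h2)
      have : (s - s/2) * ψ (s/2) ≤ ∫ t in (s/2)..s, ψ t := this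
      nlinarith [hF_nonneg (s/2) (le_of_lt h2)]
    show ψ (s / 2) / 2 ≤ F s / s
    rw [div_le_div_iff₀ two_pos hs]
    nlinarith
  · -- final bound
    intro x
    have hPx : 0 ≤ P x := hPnn x
    calc ρ (P x) ≤ ψ (P x) := hρ_le_ψ _ hPx
      _ ≤ θ (P x) := hψ_le_θ _
      _ ≤ Q x := hθ_le x

end
end

section
/- (Base case of the backstepping design.) Let p be a positive natural number and m a natural number, and consider the scalar system ẋ₁ = f₁(x₁) + g₁(x₁)·x₂ + Σ_{j=1}^p φ_{1,j}(x₁)·θ_j, where f₁, g₁, φ_{1,j} : ℝ → ℝ are C^∞ with f₁(0) = 0, φ_{1,j}(0) = 0 and g₁(x₁) ≠ 0 for all x₁, x₂ ∈ ℝ is the input and θ ∈ ℝ^p is a constant unknown parameter vector. Let r ≥ 0, α, ω, ε > 0 and γ_j > 0 (j = 1,…,p) be constants, and let ρ_j : ℝ → [1,∞) be C^∞ functions with |φ_{1,j}(x₁)| ≤ ρ_j(x₁)·|x₁| for all x₁ ∈ ℝ. Define M̃(x₁,θ̂) := α + ω + (2^{m−2}/ε)·Σ_{j=1}^p φ_{1,j}(x₁)²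 + ½·Σ_{j=1}^p (1 + 2√r + θ̂_j²)·ρ_j(x₁), k(x₁,θ̂) := −(1/g₁(x₁))·( f₁(x₁) + Σ_{j=1}^p φ_{1,j}(x₁)·θ̂_j + M̃(x₁,θ̂)·x₁ ), and w_j(x₁,θ̂) := γ_j·x₁·φ_{1,j}(x₁) for j = 1,…,p. Then for all (x₁,θ̂,θ) ∈ ℝ × ℝ^p × ℝ^p: (a) x₁·( f₁(x₁) + g₁(x₁)·k(x₁,θ̂) + Σ_{j=1}^p φ_{1,j}(x₁)·θ_j ) + Σ_{j=1}^p (1/γ_j)·(θ̂_j − θ_j)·w_j(x₁,θ̂) ≤ −α·x₁², and (b) x₁·( f₁(x₁) + g₁(x₁)·k(x₁,θ̂) + Σ_{j=1}^p φ_{1,j}(x₁)·θ_j ) ≤ −ω·x₁² + 2^{−m}·ε·(|θ|² − r)^+. -/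
open scoped ContDiff

noncomputable section

set_option maxHeartbeats 1600000 in
/-- Base case of the backstepping design: the scalar controller with nonlinear damping term
`M̃ (x₁, θ̂)` satisfies the two Lyapunov-type inequalities. -/
theorem backstepping_base_case {p : ℕ} (hp : 0 < p) (m : ℕ)
    (f₁ g₁ : ℝ → ℝ) (φ : Fin p → ℝ → ℝ)
    (hf : ContDiff ℝ ∞ f₁) (hg : ContDiff ℝ ∞ g₁) (hφ : ∀ j, ContDiff ℝ ∞ (φ j))
    (hf0 : f₁ 0 = 0) (hφ0 : ∀ j, φ j 0 = 0) (hgne : ∀ x, g₁ x ≠ 0)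
    (r α omeg ε : ℝ) (hr : 0 ≤ r) (hα : 0 < α) (homeg : 0 < omeg) (hε : 0 < ε)
    (γ : Fin p → ℝ) (hγ : ∀ j, 0 < γ j)
    (ρ : Fin p → ℝ → ℝ) (hρs : ∀ j, ContDiff ℝ ∞ (ρ j)) (hρ1 : ∀ j x, 1 ≤ ρ j x)
    (hρb : ∀ j x, |φ j x| ≤ ρ j x * |x|)
    (Mt : ℝ → EuclideanSpace ℝ (Fin p) → ℝ)
    (hMt : ∀ x θh, Mt x θh = α + omeg + ((2 : ℝ) ^ ((m : ℤ) - 2) / ε) * ∑ j, (φ j x) ^ 2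
        + (1 / 2) * ∑ j, (1 + 2 * Real.sqrt r + (θh j) ^ 2) * ρ j x)
    (k : ℝ → EuclideanSpace ℝ (Fin p) → ℝ)
    (hk : ∀ x θh, k x θh = -(1 / g₁ x) * (f₁ x + ∑ j, φ j x * θh j + Mt x θh * x))
    (w : ℝ → EuclideanSpace ℝ (Fin p) → Fin p → ℝ)
    (hw : ∀ x θh j, w x θh j = γ j * x * φ j x) :
    ∀ (x : ℝ) (θh θ : EuclideanSpace ℝ (Fin p)),
      (x * (f₁ x + g₁ x * k x θh + ∑ j, φ j x * θ j)
          + ∑ j, (1 / γ j) * (θh j - θ j) * w x θh j ≤ -α * x ^ 2) ∧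
      (x * (f₁ x + g₁ x * k x θh + ∑ j, φ j x * θ j)
        ≤ -omeg * x ^ 2 + (2 : ℝ) ^ (-(m : ℤ)) * ε * max (‖θ‖ ^ 2 - r) 0) := by
  intro x θh θ
  have hgx := hgne x
  set c : ℝ := (2 : ℝ) ^ ((m : ℤ) - 2) / ε with hc_def
  have hc : 0 < c := div_pos (by positivity) hε
  set A : ℝ := ∑ j, (φ j x) ^ 2 with hA_def
  have hA0 : 0 ≤ A := Finset.sum_nonneg fun j _ => sq_nonneg _
  set P : ℝ := ∑ j, ρ j x with hP_def
  have hP0 : 0 ≤ P := Finset.sum_nonneg fun j _ => le_trans zero_le_one (hρ1 j x)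
  set B : ℝ := ∑ j, (1 + 2 * Real.sqrt r + (θh j) ^ 2) * ρ j x with hB_def
  have hB0 : 0 ≤ B := Finset.sum_nonneg fun j _ => by
    have := hρ1 j x
    have hsr : 0 ≤ Real.sqrt r := Real.sqrt_nonneg r
    nlinarith [sq_nonneg (θh j)]
  have hBsplit : B = (∑ j, (1 + (θh j) ^ 2) * ρ j x) + 2 * Real.sqrt r * P := by
    rw [hB_def, hP_def, Finset.mul_sum, ← Finset.sum_add_distrib]
    exact Finset.sum_congr rfl fun j _ => by ring
  -- the drift term simplifies
  have hE : x * (f₁ x + g₁ x * k x θh + ∑ j, φ j x * θ j)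
      = x * (∑ j, φ j x * θ j) - x * (∑ j, φ j x * θh j) - Mt x θh * x ^ 2 := by
    rw [hk]
    field_simp
    ring
  have hMval : Mt x θh = α + omeg + c * A + (1 / 2) * B := by
    rw [hMt, hc_def, hA_def, hB_def]
  constructor
  · -- part (a)
    have hWsum : (∑ j, (1 / γ j) * (θh j - θ j) * w x θh j)
        = x * (∑ j, φ j x * θh j) - x * (∑ j, φ j x * θ j) := by
      rw [Finset.mul_sum, Finset.mul_sum, ← Finset.sum_sub_distrib]
      refine Finset.sum_congr rfl fun j _ => ?_
      rw [hw]
      have hγj := (hγ j).ne'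
      field_simp
    rw [hE, hWsum, hMval]
    nlinarith [mul_nonneg (mul_nonneg hc.le hA0) (sq_nonneg x),
      mul_nonneg hB0 (sq_nonneg x), mul_nonneg homeg.le (sq_nonneg x)]
  · -- part (b)
    set s : ℝ := max (‖θ‖ ^ 2 - r) 0 with hs_def
    have hs0 : 0 ≤ s := le_max_right _ _
    have hθs : ‖θ‖ ^ 2 ≤ r + s := by
      have h : ‖θ‖ ^ 2 - r ≤ s := le_max_left _ _
      linarith
    -- norm of θ as a sum of squares
    have hnorm : ‖θ‖ = Real.sqrt (∑ j, (θ j) ^ 2) := by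
      rw [EuclideanSpace.norm_eq]
      congr 1
      exact Finset.sum_congr rfl fun j _ => by
        simp [Real.norm_eq_abs, sq_abs]
    -- ‖θ‖ ≤ √r + √s
    have hθbound : ‖θ‖ ≤ Real.sqrt r + Real.sqrt s := by
      have h1 : 0 ≤ Real.sqrt r := Real.sqrt_nonneg r
      have h2 : 0 ≤ Real.sqrt s := Real.sqrt_nonneg s
      have hr2 : Real.sqrt r ^ 2 = r := Real.sq_sqrt hr
      have hs2 : Real.sqrt s ^ 2 = s := Real.sq_sqrt hs0
      nlinarith [norm_nonneg θ, mul_nonneg h1 h2]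
    -- Cauchy–Schwarz: x * ∑ φ θ ≤ a ‖θ‖, where a = √(x²A)
    set a : ℝ := Real.sqrt (x ^ 2 * A) with ha_def
    have ha0 : 0 ≤ a := Real.sqrt_nonneg _
    have ha2 : a ^ 2 = x ^ 2 * A := Real.sq_sqrt (by positivity)
    have hCS : x * (∑ j, φ j x * θ j) ≤ a * ‖θ‖ := by
      have h1 : x * (∑ j, φ j x * θ j) = ∑ j, (x * φ j x) * θ j := by
        rw [Finset.mul_sum]; exact Finset.sum_congr rfl fun j _ => by ring
      have h2 : (∑ j, (x * φ j x) * θ j) ^ 2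
          ≤ (∑ j, (x * φ j x) ^ 2) * ∑ j, (θ j) ^ 2 :=
        Finset.sum_mul_sq_le_sq_mul_sq _ _ _
      have h3 : (∑ j, (x * φ j x) ^ 2) = x ^ 2 * A := by
        rw [hA_def, Finset.mul_sum]; exact Finset.sum_congr rfl fun j _ => by ring
      have h4 : a * ‖θ‖ = Real.sqrt ((x ^ 2 * A) * ∑ j, (θ j) ^ 2) := by
        rw [ha_def, hnorm, ← Real.sqrt_mul (by positivity)]
      rw [h1, h4]
      calc (∑ j, (x * φ j x) * θ j) ≤ |∑ j, (x * φ j x) * θ j| := le_abs_self _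
        _ = Real.sqrt ((∑ j, (x * φ j x) * θ j) ^ 2) := (Real.sqrt_sq_eq_abs _).symm
        _ ≤ Real.sqrt ((x ^ 2 * A) * ∑ j, (θ j) ^ 2) := by
            apply Real.sqrt_le_sqrt; rw [← h3]; exact h2
    -- a ≤ x² P
    have haP : a ≤ x ^ 2 * P := by
      have h1 : A ≤ x ^ 2 * ∑ j, (ρ j x) ^ 2 := by
        rw [hA_def, Finset.mul_sum]
        refine Finset.sum_le_sum fun j _ => ?_
        nlinarith [hρb j x, abs_nonneg (φ j x), abs_nonneg x, sq_abs (φ j x), sq_abs x,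
          mul_nonneg (le_trans zero_le_one (hρ1 j x)) (abs_nonneg x)]
      have h2 : (∑ j, (ρ j x) ^ 2) ≤ P ^ 2 := by
        rw [hP_def]
        exact Finset.sum_sq_le_sq_sum_of_nonneg fun j _ => le_trans zero_le_one (hρ1 j x)
      have h3 : x ^ 2 * A ≤ (x ^ 2 * P) ^ 2 := by
        calc x ^ 2 * A ≤ x ^ 2 * (x ^ 2 * ∑ j, (ρ j x) ^ 2) :=
              mul_le_mul_of_nonneg_left h1 (sq_nonneg x)
          _ ≤ x ^ 2 * (x ^ 2 * P ^ 2) :=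
              mul_le_mul_of_nonneg_left
                (mul_le_mul_of_nonneg_left h2 (sq_nonneg x)) (sq_nonneg x)
          _ = (x ^ 2 * P) ^ 2 := by ring
      calc a ≤ Real.sqrt ((x ^ 2 * P) ^ 2) := Real.sqrt_le_sqrt h3
        _ = x ^ 2 * P := Real.sqrt_sq (by positivity)
    -- Young's inequality for a·√s
    have hpow : c * ((2 : ℝ) ^ (-(m : ℤ)) * ε) = 1 / 4 := by
      have he : ((m : ℤ) - 2) + (-(m : ℤ)) = -2 := by ring
      have h : (2 : ℝ) ^ ((m : ℤ) - 2) * (2 : ℝ) ^ (-(m : ℤ)) = (4 : ℝ)⁻¹ := by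
        rw [← zpow_add₀ (by norm_num : (2:ℝ) ≠ 0), he]; norm_num
      calc c * ((2 : ℝ) ^ (-(m : ℤ)) * ε)
          = (2 : ℝ) ^ ((m : ℤ) - 2) * (2 : ℝ) ^ (-(m : ℤ)) * (ε / ε) := by
            rw [hc_def]; ring
        _ = (4 : ℝ)⁻¹ * 1 := by rw [h, div_self hε.ne']
        _ = 1 / 4 := by norm_num
    have hYoung : a * Real.sqrt s ≤ c * (x ^ 2 * A) + (2 : ℝ) ^ (-(m : ℤ)) * ε * s := by
      have hv2 : Real.sqrt s ^ 2 = s := Real.sq_sqrt hs0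
      have ht : (2 : ℝ) ^ (-(m : ℤ)) * ε = 1 / (4 * c) := by
        rw [eq_div_iff (by positivity : (4 : ℝ) * c ≠ 0)]
        linear_combination 4 * hpow
      have key : 4 * c * (a * Real.sqrt s) ≤ 4 * (c * c) * (x ^ 2 * A) + s := by
        nlinarith [sq_nonneg (2 * c * a - Real.sqrt s), ha2, hv2]
      have h2 : a * Real.sqrt s ≤ (4 * (c * c) * (x ^ 2 * A) + s) / (4 * c) := by
        rw [le_div_iff₀ (by positivity : (0 : ℝ) < 4 * c)]
        nlinarith [key]
      have h3 : (4 * (c * c) * (x ^ 2 * A) + s) / (4 * c)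
          = c * (x ^ 2 * A) + 1 / (4 * c) * s := by
        field_simp
      rw [mul_assoc, show (2 : ℝ) ^ (-(m : ℤ)) * (ε * s) = (2 : ℝ) ^ (-(m : ℤ)) * ε * s by ring,
        ht]
      linarith [h2, h3.le, h3.ge]
    -- bound for the θ̂ term
    have hθh : -(x * ∑ j, φ j x * θh j) ≤ (1 / 2) * x ^ 2 * ∑ j, (1 + (θh j) ^ 2) * ρ j x := by
      rw [Finset.mul_sum, ← Finset.sum_neg_distrib, Finset.mul_sum]
      refine Finset.sum_le_sum fun j _ => ?_
      have k0 : -(x * (φ j x * θh j)) ≤ |x| * |θh j| * |φ j x| := by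
        calc -(x * (φ j x * θh j)) ≤ |x * (φ j x * θh j)| := neg_le_abs _
          _ = |x| * |θh j| * |φ j x| := by rw [abs_mul, abs_mul]; ring
      have k1 : |x| * |θh j| * |φ j x| ≤ |x| * |θh j| * (ρ j x * |x|) :=
        mul_le_mul_of_nonneg_left (hρb j x) (mul_nonneg (abs_nonneg x) (abs_nonneg (θh j)))
      have k2 : 0 ≤ ρ j x * x ^ 2 :=
        mul_nonneg (le_trans zero_le_one (hρ1 j x)) (sq_nonneg x)
      have k4 : -(x * (φ j x * θh j)) ≤ ρ j x * x ^ 2 * |θh j| := by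
        calc -(x * (φ j x * θh j)) ≤ |x| * |θh j| * |φ j x| := k0
          _ ≤ |x| * |θh j| * (ρ j x * |x|) := k1
          _ = ρ j x * |x| ^ 2 * |θh j| := by ring
          _ = ρ j x * x ^ 2 * |θh j| := by rw [sq_abs]
      have k5 : ρ j x * x ^ 2 * |θh j| ^ 2 = ρ j x * x ^ 2 * θh j ^ 2 := by rw [sq_abs]
      nlinarith [k4, k5, mul_nonneg k2 (sq_nonneg (1 - |θh j|))]
    -- combine everything
    rw [hE, hMval]
    have hsum1 : a * ‖θ‖ ≤ a * (Real.sqrt r + Real.sqrt s) :=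
      mul_le_mul_of_nonneg_left hθbound ha0
    have hsum2 : a * Real.sqrt r ≤ Real.sqrt r * (x ^ 2 * P) :=
      by nlinarith [Real.sqrt_nonneg r, haP]
    have hαx : 0 ≤ α * x ^ 2 := mul_nonneg hα.le (sq_nonneg x)
    have hBr : (∑ j, (1 + (θh j) ^ 2) * ρ j x) = B - 2 * Real.sqrt r * P := by
      rw [hBsplit]; ring
    rw [hBr] at hθh
    nlinarith [hCS, hsum1, hsum2, hYoung, hθh, hαx]

end
end

section
/- (Standard adaptive controller for the Moore–Greitzer model.) Let Q, γ₁, γ₂, μ > 0 be constants. For (x₁,x₂,θ̂₁,θ̂₂,θ₁,θ₂) ∈ ℝ⁶ define z := x₂ + θ̂₁x₁² + θ̂₂x₁³ + μx₁, w₁ := γ₁Q·x₁²·z·(2θ̂₁x₁ + 3θ̂₂x₁² + μ) + γ₁x₁³, w₂ := γ₂Q·x₁³·z·(2θ̂₁x₁ + 3θ̂₂x₁² + μ) + γ₂x₁⁴, u := −(Q^{-1} + μ²)·x₁ − w₁·x₁² − w₂·x₁³ − (2θ̂₁x₁ + 3θ̂₂x₁² + 2μ)·(θ̂₁x₁² +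 θ̂₂x₁³ + x₂), and V(x₁,x₂,θ̂₁,θ̂₂) := ½x₁² + (Q/2)·z² + (1/(2γ₁))·(θ̂₁ − θ₁)² + (1/(2γ₂))·(θ̂₂ − θ₂)². Then for all (x₁,x₂,θ̂₁,θ̂₂,θ₁,θ₂) ∈ ℝ⁶ the derivative of V along the closed-loop vector field of the system ẋ₁ = θ₁x₁² + θ₂x₁³ + x₂, ẋ₂ = u, θ̂₁' = w₁, θ̂₂' = w₂, namely the quantity (∂V/∂x₁)·(θ₁x₁² + θ₂x₁³ + x₂) + (∂V/∂x₂)·u + (∂V/∂θ̂₁)·w₁ + (∂V/∂θ̂₂)·w₂, is at most −μx₁² − μQ·z². -/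
noncomputable section

/-- Standard adaptive controller for the simplified Moore–Greitzer jet engine model: the
derivative of the Lyapunov function `V` along the closed-loop vector field is at most
`−μx₁² − μQz²`. -/
theorem moore_greitzer_standard_controller
    (Q γ₁ γ₂ μ : ℝ) (hQ : 0 < Q) (hγ₁ : 0 < γ₁) (hγ₂ : 0 < γ₂) (hμ : 0 < μ)
    (θ₁ θ₂ : ℝ)
    (z w₁ w₂ u V : ℝ → ℝ → ℝ → ℝ → ℝ)
    (hz : ∀ x₁ x₂ a b, z x₁ x₂ a b = x₂ + a * x₁ ^ 2 + b * x₁ ^ 3 + μ * x₁)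
    (hw₁ : ∀ x₁ x₂ a b, w₁ x₁ x₂ a b =
      γ₁ * Q * x₁ ^ 2 * z x₁ x₂ a b * (2 * a * x₁ + 3 * b * x₁ ^ 2 + μ) + γ₁ * x₁ ^ 3)
    (hw₂ : ∀ x₁ x₂ a b, w₂ x₁ x₂ a b =
      γ₂ * Q * x₁ ^ 3 * z x₁ x₂ a b * (2 * a * x₁ + 3 * b * x₁ ^ 2 + μ) + γ₂ * x₁ ^ 4)
    (hu : ∀ x₁ x₂ a b, u x₁ x₂ a b =
      -(Q⁻¹ + μ ^ 2) * x₁ - w₁ x₁ x₂ a b * x₁ ^ 2 - w₂ x₁ x₂ a b * x₁ ^ 3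
        - (2 * a * x₁ + 3 * b * x₁ ^ 2 + 2 * μ) * (a * x₁ ^ 2 + b * x₁ ^ 3 + x₂))
    (hV : ∀ x₁ x₂ a b, V x₁ x₂ a b =
      1 / 2 * x₁ ^ 2 + Q / 2 * (z x₁ x₂ a b) ^ 2
        + 1 / (2 * γ₁) * (a - θ₁) ^ 2 + 1 / (2 * γ₂) * (b - θ₂) ^ 2) :
    ∀ x₁ x₂ a b : ℝ,
      deriv (fun s => V s x₂ a b) x₁ * (θ₁ * x₁ ^ 2 + θ₂ * x₁ ^ 3 + x₂)
        + deriv (fun s => V x₁ s a b) x₂ * u x₁ x₂ a b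
        + deriv (fun s => V x₁ x₂ s b) a * w₁ x₁ x₂ a b
        + deriv (fun s => V x₁ x₂ a s) b * w₂ x₁ x₂ a b
      ≤ -μ * x₁ ^ 2 - μ * Q * (z x₁ x₂ a b) ^ 2 := by
  intro x₁ x₂ a b
  -- derivative in x₁
  have hg1 : HasDerivAt (fun s : ℝ => x₂ + a * s ^ 2 + b * s ^ 3 + μ * s)
      (2 * a * x₁ + 3 * b * x₁ ^ 2 + μ) x₁ := by
    have h := (((hasDerivAt_const x₁ x₂).add ((hasDerivAt_pow 2 x₁).const_mul a)).add
      ((hasDerivAt_pow 3 x₁).const_mul b)).add ((hasDerivAt_id x₁).const_mul μ)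
    refine h.congr_deriv ?_; push_cast; ring
  have hd1 : deriv (fun s => V s x₂ a b) x₁
      = x₁ + Q * (z x₁ x₂ a b) * (2 * a * x₁ + 3 * b * x₁ ^ 2 + μ) := by
    have h : HasDerivAt (fun s : ℝ => 1 / 2 * s ^ 2
        + Q / 2 * (x₂ + a * s ^ 2 + b * s ^ 3 + μ * s) ^ 2
        + 1 / (2 * γ₁) * (a - θ₁) ^ 2 + 1 / (2 * γ₂) * (b - θ₂) ^ 2)
        (x₁ + Q * (x₂ + a * x₁ ^ 2 + b * x₁ ^ 3 + μ * x₁)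
          * (2 * a * x₁ + 3 * b * x₁ ^ 2 + μ)) x₁ := by
      have h := ((((hasDerivAt_pow 2 x₁).const_mul (1/2 : ℝ)).add
        ((hg1.pow 2).const_mul (Q/2))).add
        (hasDerivAt_const x₁ (1 / (2 * γ₁) * (a - θ₁) ^ 2))).add
        (hasDerivAt_const x₁ (1 / (2 * γ₂) * (b - θ₂) ^ 2))
      refine h.congr_deriv ?_; push_cast; ring
    have : (fun s => V s x₂ a b) = fun s : ℝ => 1 / 2 * s ^ 2
        + Q / 2 * (x₂ + a * s ^ 2 + b * s ^ 3 + μ * s) ^ 2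
        + 1 / (2 * γ₁) * (a - θ₁) ^ 2 + 1 / (2 * γ₂) * (b - θ₂) ^ 2 := by
      funext s; rw [hV, hz]
    rw [this, h.deriv, hz]
  -- derivative in x₂
  have hd2 : deriv (fun s => V x₁ s a b) x₂ = Q * z x₁ x₂ a b := by
    have h : HasDerivAt (fun s : ℝ => 1 / 2 * x₁ ^ 2
        + Q / 2 * (s + a * x₁ ^ 2 + b * x₁ ^ 3 + μ * x₁) ^ 2
        + 1 / (2 * γ₁) * (a - θ₁) ^ 2 + 1 / (2 * γ₂) * (b - θ₂) ^ 2)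
        (Q * (x₂ + a * x₁ ^ 2 + b * x₁ ^ 3 + μ * x₁)) x₂ := by
      have hg : HasDerivAt (fun s : ℝ => s + a * x₁ ^ 2 + b * x₁ ^ 3 + μ * x₁) 1 x₂ := by
        have h := (((hasDerivAt_id x₂).add_const (a * x₁ ^ 2)).add_const
          (b * x₁ ^ 3)).add_const (μ * x₁)
        exact h
      have h := (((hasDerivAt_const x₂ (1 / 2 * x₁ ^ 2)).add ((hg.pow 2).const_mul (Q/2))).add
        (hasDerivAt_const x₂ (1 / (2 * γ₁) * (a - θ₁) ^ 2))).add
        (hasDerivAt_const x₂ (1 / (2 * γ₂) * (b - θ₂) ^ 2))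
      refine h.congr_deriv ?_; push_cast; ring
    have : (fun s => V x₁ s a b) = fun s : ℝ => 1 / 2 * x₁ ^ 2
        + Q / 2 * (s + a * x₁ ^ 2 + b * x₁ ^ 3 + μ * x₁) ^ 2
        + 1 / (2 * γ₁) * (a - θ₁) ^ 2 + 1 / (2 * γ₂) * (b - θ₂) ^ 2 := by
      funext s; rw [hV, hz]
    rw [this, h.deriv, hz]
  -- derivative in a
  have hd3 : deriv (fun s => V x₁ x₂ s b) a
      = Q * z x₁ x₂ a b * x₁ ^ 2 + (a - θ₁) / γ₁ := by
    have h : HasDerivAt (fun s : ℝ => 1 / 2 * x₁ ^ 2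
        + Q / 2 * (x₂ + s * x₁ ^ 2 + b * x₁ ^ 3 + μ * x₁) ^ 2
        + 1 / (2 * γ₁) * (s - θ₁) ^ 2 + 1 / (2 * γ₂) * (b - θ₂) ^ 2)
        (Q * (x₂ + a * x₁ ^ 2 + b * x₁ ^ 3 + μ * x₁) * x₁ ^ 2 + (a - θ₁) / γ₁) a := by
      have hg : HasDerivAt (fun s : ℝ => x₂ + s * x₁ ^ 2 + b * x₁ ^ 3 + μ * x₁) (x₁ ^ 2) a := by
        have h := (((hasDerivAt_const a x₂).add ((hasDerivAt_id a).mul_const (x₁ ^ 2))).add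
          (hasDerivAt_const a (b * x₁ ^ 3))).add (hasDerivAt_const a (μ * x₁))
        refine h.congr_deriv ?_
        ring
      have hs : HasDerivAt (fun s : ℝ => s - θ₁) 1 a := (hasDerivAt_id a).sub_const _
      have h := (((hasDerivAt_const a (1 / 2 * x₁ ^ 2)).add ((hg.pow 2).const_mul (Q/2))).add
        ((hs.pow 2).const_mul (1/(2*γ₁)))).add (hasDerivAt_const a (1 / (2 * γ₂) * (b - θ₂) ^ 2))
      refine h.congr_deriv ?_; push_cast; field_simp; ring
    have : (fun s => V x₁ x₂ s b) = fun s : ℝ => 1 / 2 * x₁ ^ 2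
        + Q / 2 * (x₂ + s * x₁ ^ 2 + b * x₁ ^ 3 + μ * x₁) ^ 2
        + 1 / (2 * γ₁) * (s - θ₁) ^ 2 + 1 / (2 * γ₂) * (b - θ₂) ^ 2 := by
      funext s; rw [hV, hz]
    rw [this, h.deriv, hz]
  -- derivative in b
  have hd4 : deriv (fun s => V x₁ x₂ a s) b
      = Q * z x₁ x₂ a b * x₁ ^ 3 + (b - θ₂) / γ₂ := by
    have h : HasDerivAt (fun s : ℝ => 1 / 2 * x₁ ^ 2
        + Q / 2 * (x₂ + a * x₁ ^ 2 + s * x₁ ^ 3 + μ * x₁) ^ 2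
        + 1 / (2 * γ₁) * (a - θ₁) ^ 2 + 1 / (2 * γ₂) * (s - θ₂) ^ 2)
        (Q * (x₂ + a * x₁ ^ 2 + b * x₁ ^ 3 + μ * x₁) * x₁ ^ 3 + (b - θ₂) / γ₂) b := by
      have hg : HasDerivAt (fun s : ℝ => x₂ + a * x₁ ^ 2 + s * x₁ ^ 3 + μ * x₁) (x₁ ^ 3) b := by
        have h := (((hasDerivAt_const b x₂).add (hasDerivAt_const b (a * x₁ ^ 2))).add
          ((hasDerivAt_id b).mul_const (x₁ ^ 3))).add (hasDerivAt_const b (μ * x₁))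
        refine h.congr_deriv ?_
        ring
      have hs : HasDerivAt (fun s : ℝ => s - θ₂) 1 b := (hasDerivAt_id b).sub_const _
      have h := (((hasDerivAt_const b (1 / 2 * x₁ ^ 2)).add ((hg.pow 2).const_mul (Q/2))).add
        (hasDerivAt_const b (1 / (2 * γ₁) * (a - θ₁) ^ 2))).add ((hs.pow 2).const_mul (1/(2*γ₂)))
      refine h.congr_deriv ?_; push_cast; field_simp; ring
    have : (fun s => V x₁ x₂ a s) = fun s : ℝ => 1 / 2 * x₁ ^ 2
        + Q / 2 * (x₂ + a * x₁ ^ 2 + s * x₁ ^ 3 + μ * x₁) ^ 2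
        + 1 / (2 * γ₁) * (a - θ₁) ^ 2 + 1 / (2 * γ₂) * (s - θ₂) ^ 2 := by
      funext s; rw [hV, hz]
    rw [this, h.deriv, hz]
  have key : deriv (fun s => V s x₂ a b) x₁ * (θ₁ * x₁ ^ 2 + θ₂ * x₁ ^ 3 + x₂)
        + deriv (fun s => V x₁ s a b) x₂ * u x₁ x₂ a b
        + deriv (fun s => V x₁ x₂ s b) a * w₁ x₁ x₂ a b
        + deriv (fun s => V x₁ x₂ a s) b * w₂ x₁ x₂ a b
      = -μ * x₁ ^ 2 - μ * Q * (z x₁ x₂ a b) ^ 2 := by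
    rw [hd1, hd2, hd3, hd4, hu, hw₁, hw₂, hz]
    field_simp
    ring
  exact le_of_eq key

end
end

section
/- (New adaptive controller for the Moore–Greitzer model.) Let Q, γ₁, γ₂, μ, ε > 0 and r ≥ 0 be constants. For (x₁,x₂,θ̂₁,θ̂₂,θ₁,θ₂) ∈ ℝ⁶ define M := 2μ + (θ̂₁² + θ̂₂² + r)/2 + x₁² + (1 + 1/(2ε))·x₁⁴ + (1/(2ε))·x₁⁶, z := x₂ + θ̂₁x₁² + θ̂₂x₁³ + M·x₁, φ := 2θ̂₁x₁ + 3θ̂₂x₁² + M + x₁²·(2 + 2·((2ε+1)/ε)·x₁² + (3/ε)·x₁⁴), G := μ + Q·x₁²·(1 + x₁²)·φ²·( x₁²/(2ε) + (θ̂₁² + θ̂₂² + r)/μ ), w₁ := γ₁·x₁²·(Q·z·φ + x₁), w₂ := γ₂·x₁³·(Q·z·φ + x₁), u := −Q^{-1}·x₁ − (x₁ + θ̂₁)·x₁·w₁ − (x₁² + θ̂₂)·x₁·w₂ − G·z + φ·(M·x₁ − z), U := ½x₁² + (Q/2)·z², and W := U + (1/(2γ₁))·(θ̂₁ − θ₁)²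 + (1/(2γ₂))·(θ̂₂ − θ₂)². Then for all (x₁,x₂,θ̂₁,θ̂₂,θ₁,θ₂) ∈ ℝ⁶, along the closed-loop vector field of the system ẋ₁ = θ₁x₁² + θ₂x₁³ + x₂, ẋ₂ = u, θ̂₁' = w₁, θ̂₂' = w₂, the derivative of W (i.e. the sum of its partial derivatives with respect to x₁, x₂, θ̂₁, θ̂₂ contracted with the closed-loop vector field) is at most −μ·U, and the derivative of U along the same vector field is at most −μ·U + ε·(θ₁² + θ₂² − r)^+, where (s)^+ denotes max(s,0). -/
noncomputable section

private lemma young (c d e : ℝ) (he : 0 < e) : c * d ≤ e / 2 * c ^ 2 + d ^ 2 / (2 * e) := by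
  have h : e / 2 * c ^ 2 + d ^ 2 / (2 * e) - c * d = (e * c - d) ^ 2 / (2 * e) := by
    field_simp; ring
  nlinarith [div_nonneg (sq_nonneg (e * c - d)) (by linarith : (0:ℝ) ≤ 2 * e)]

private lemma young' (c d μ : ℝ) (hμ : 0 < μ) : c * d ≤ c ^ 2 / μ + μ * d ^ 2 / 4 := by
  have h : c ^ 2 / μ + μ * d ^ 2 / 4 - c * d = (2 * c - μ * d) ^ 2 / (4 * μ) := by
    field_simp; ring
  nlinarith [div_nonneg (sq_nonneg (2 * c - μ * d)) (by linarith : (0:ℝ) ≤ 4 * μ)]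

private lemma decomp (θ₁ θ₂ m r : ℝ) (hm : 0 ≤ m) (hr : 0 ≤ r) (h : θ₁ ^ 2 + θ₂ ^ 2 ≤ m + r) :
    ∃ α₁ α₂ β₁ β₂ : ℝ, θ₁ = α₁ + β₁ ∧ θ₂ = α₂ + β₂ ∧ α₁ ^ 2 + α₂ ^ 2 ≤ m ∧ β₁ ^ 2 + β₂ ^ 2 ≤ r := by
  set s := Real.sqrt m with hs
  set t := Real.sqrt r with ht
  have hs0 : 0 ≤ s := Real.sqrt_nonneg m
  have ht0 : 0 ≤ t := Real.sqrt_nonneg r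
  have hs2 : s ^ 2 = m := Real.sq_sqrt hm
  have ht2 : t ^ 2 = r := Real.sq_sqrt hr
  by_cases hst : s + t = 0
  · have hs' : s = 0 := by linarith
    have ht' : t = 0 := by linarith
    have hm0 : m = 0 := by rw [← hs2, hs']; ring
    have hr0 : r = 0 := by rw [← ht2, ht']; ring
    have h1 : θ₁ = 0 := by nlinarith [sq_nonneg θ₁, sq_nonneg θ₂]
    have h2 : θ₂ = 0 := by nlinarith [sq_nonneg θ₁, sq_nonneg θ₂]
    exact ⟨0, 0, 0, 0, by simp [h1], by simp [h2], by simp [hm0], by simp [hr0]⟩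
  · have hstpos : 0 < s + t := lt_of_le_of_ne (by linarith) (Ne.symm hst)
    have hle : θ₁ ^ 2 + θ₂ ^ 2 ≤ (s + t) ^ 2 := by nlinarith [mul_nonneg hs0 ht0]
    refine ⟨θ₁ * s / (s + t), θ₂ * s / (s + t), θ₁ * t / (s + t), θ₂ * t / (s + t), ?_, ?_, ?_, ?_⟩
    · field_simp
    · field_simp
    · have e1 : (θ₁ * s / (s + t)) ^ 2 + (θ₂ * s / (s + t)) ^ 2
          = (θ₁ ^ 2 + θ₂ ^ 2) * (s / (s + t)) ^ 2 := by ring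
      have e2 : (s + t) ^ 2 * (s / (s + t)) ^ 2 = s ^ 2 := by field_simp
      calc (θ₁ * s / (s + t)) ^ 2 + (θ₂ * s / (s + t)) ^ 2
          = (θ₁ ^ 2 + θ₂ ^ 2) * (s / (s + t)) ^ 2 := e1
        _ ≤ (s + t) ^ 2 * (s / (s + t)) ^ 2 :=
            mul_le_mul_of_nonneg_right hle (by positivity)
        _ = s ^ 2 := e2
        _ = m := hs2
    · have e1 : (θ₁ * t / (s + t)) ^ 2 + (θ₂ * t / (s + t)) ^ 2
          = (θ₁ ^ 2 + θ₂ ^ 2) * (t / (s + t)) ^ 2 := by ring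
      have e2 : (s + t) ^ 2 * (t / (s + t)) ^ 2 = t ^ 2 := by field_simp
      calc (θ₁ * t / (s + t)) ^ 2 + (θ₂ * t / (s + t)) ^ 2
          = (θ₁ ^ 2 + θ₂ ^ 2) * (t / (s + t)) ^ 2 := e1
        _ ≤ (s + t) ^ 2 * (t / (s + t)) ^ 2 :=
            mul_le_mul_of_nonneg_right hle (by positivity)
        _ = t ^ 2 := e2
        _ = r := ht2

set_option maxHeartbeats 2000000 in
private lemma key (Q μ ε r θ₁ θ₂ a b X Z P : ℝ) (hQ : 0 < Q) (hμ : 0 < μ) (hε : 0 < ε)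
    (hr : 0 ≤ r) :
    ((θ₁ - a) * X ^ 2 + (θ₂ - b) * X ^ 3) * (X + Q * Z * P)
      - (2 * μ + (a ^ 2 + b ^ 2 + r) / 2 + X ^ 2 + (1 + 1 / (2 * ε)) * X ^ 4
          + (1 / (2 * ε)) * X ^ 6) * X ^ 2
      - Q * (μ + Q * X ^ 2 * (1 + X ^ 2) * P ^ 2 * (X ^ 2 / (2 * ε) + (a ^ 2 + b ^ 2 + r) / μ))
          * Z ^ 2
      ≤ -μ * (1 / 2 * X ^ 2 + Q / 2 * Z ^ 2) + ε * max (θ₁ ^ 2 + θ₂ ^ 2 - r) 0 := by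
  set m := max (θ₁ ^ 2 + θ₂ ^ 2 - r) 0 with hm
  have hm0 : 0 ≤ m := le_max_right _ _
  have hθm : θ₁ ^ 2 + θ₂ ^ 2 ≤ m + r := by
    have := le_max_left (θ₁ ^ 2 + θ₂ ^ 2 - r) 0
    linarith
  obtain ⟨α₁, α₂, β₁, β₂, h1, h2, hα, hβ⟩ := decomp θ₁ θ₂ m r hm0 hr hθm
  have y1 := young α₁ (X ^ 3) ε hε
  have y2 := young α₂ (X ^ 4) ε hε
  have y3 := young α₁ (Q * Z * P * X ^ 2) ε hε
  have y4 := young α₂ (Q * Z * P * X ^ 3) ε hε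
  have y5 := young (β₁ * X) (X ^ 2) 1 one_pos
  have y6 := young (β₂ * X) (X ^ 3) 1 one_pos
  have y7 := young' (Q * Z * P * β₁ * X) X μ hμ
  have y8 := young' (Q * Z * P * β₂ * X ^ 2) X μ hμ
  have y9 := young (-(a * X)) (X ^ 2) 1 one_pos
  have y10 := young (-(b * X)) (X ^ 3) 1 one_pos
  have y11 := young' (-(Q * Z * P * a * X)) X μ hμ
  have y12 := young' (-(Q * Z * P * b * X ^ 2)) X μ hμ
  have f1 : ε * (α₁ ^ 2 + α₂ ^ 2) ≤ ε * m := mul_le_mul_of_nonneg_left hα hε.le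
  have f2 : (β₁ ^ 2 + β₂ ^ 2) * X ^ 2 ≤ r * X ^ 2 :=
    mul_le_mul_of_nonneg_right hβ (sq_nonneg X)
  have hin1 : β₁ ^ 2 + a ^ 2 ≤ a ^ 2 + b ^ 2 + r := by nlinarith [sq_nonneg β₂, sq_nonneg b]
  have hin2 : β₂ ^ 2 + b ^ 2 ≤ a ^ 2 + b ^ 2 + r := by nlinarith [sq_nonneg β₁, sq_nonneg a]
  have f3 : (Q * Z * P * X) ^ 2 * (β₁ ^ 2 + a ^ 2) / μ
      ≤ (Q * Z * P * X) ^ 2 * (a ^ 2 + b ^ 2 + r) / μ := by gcongr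
  have f4 : (Q * Z * P * X ^ 2) ^ 2 * (β₂ ^ 2 + b ^ 2) / μ
      ≤ (Q * Z * P * X ^ 2) ^ 2 * (a ^ 2 + b ^ 2 + r) / μ := by gcongr
  have n1 : 0 ≤ μ * X ^ 2 := mul_nonneg hμ.le (sq_nonneg X)
  have n2 : 0 ≤ μ * (Q * Z ^ 2) := mul_nonneg hμ.le (mul_nonneg hQ.le (sq_nonneg Z))
  have hμ' : μ ≠ 0 := ne_of_gt hμ
  have hε' : ε ≠ 0 := ne_of_gt hε
  have hexp : Q * (μ + Q * X ^ 2 * (1 + X ^ 2) * P ^ 2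
        * (X ^ 2 / (2 * ε) + (a ^ 2 + b ^ 2 + r) / μ)) * Z ^ 2
      = μ * (Q * Z ^ 2) + (Q * Z * P * X) ^ 2 * (X ^ 2) / (2 * ε)
        + (Q * Z * P * X ^ 2) ^ 2 * (X ^ 2) / (2 * ε)
        + (Q * Z * P * X) ^ 2 * (a ^ 2 + b ^ 2 + r) / μ
        + (Q * Z * P * X ^ 2) ^ 2 * (a ^ 2 + b ^ 2 + r) / μ := by
    field_simp; ring
  rw [hexp, ← sub_nonneg]
  have t14 : (0:ℝ) ≤ (r * X ^ 2 - (β₁ ^ 2 + β₂ ^ 2) * X ^ 2) / 2 :=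
    div_nonneg (sub_nonneg.mpr f2) (by norm_num)
  have t17 : (0:ℝ) ≤ μ * X ^ 2 / 2 := div_nonneg n1 (by norm_num)
  have t18 : (0:ℝ) ≤ μ * (Q * Z ^ 2) / 2 := div_nonneg n2 (by norm_num)
  have grand := add_nonneg (add_nonneg (add_nonneg (add_nonneg (add_nonneg (add_nonneg
    (add_nonneg (add_nonneg (add_nonneg (add_nonneg (add_nonneg (add_nonneg (add_nonneg
    (add_nonneg (add_nonneg (add_nonneg (add_nonneg (sub_nonneg.mpr y1) (sub_nonneg.mpr y2))
    (sub_nonneg.mpr y3)) (sub_nonneg.mpr y4)) (sub_nonneg.mpr y5)) (sub_nonneg.mpr y6))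
    (sub_nonneg.mpr y7)) (sub_nonneg.mpr y8)) (sub_nonneg.mpr y9)) (sub_nonneg.mpr y10))
    (sub_nonneg.mpr y11)) (sub_nonneg.mpr y12)) (sub_nonneg.mpr f1)) t14)
    (sub_nonneg.mpr f3)) (sub_nonneg.mpr f4)) t17) t18
  refine grand.trans_eq ?_
  rw [h1, h2]
  ring

private lemma keyW (Q μ ε r a b X Z P : ℝ) (hQ : 0 < Q) (hμ : 0 < μ) (hε : 0 < ε)
    (hr : 0 ≤ r) :
    -((2 * μ + (a ^ 2 + b ^ 2 + r) / 2 + X ^ 2 + (1 + 1 / (2 * ε)) * X ^ 4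
          + (1 / (2 * ε)) * X ^ 6) * X ^ 2
      + Q * (μ + Q * X ^ 2 * (1 + X ^ 2) * P ^ 2 * (X ^ 2 / (2 * ε) + (a ^ 2 + b ^ 2 + r) / μ))
          * Z ^ 2)
      ≤ -μ * (1 / 2 * X ^ 2 + Q / 2 * Z ^ 2) := by
  have hC : (0:ℝ) ≤ a ^ 2 + b ^ 2 + r := by positivity
  have h1 : (0:ℝ) ≤ ((a ^ 2 + b ^ 2 + r) / 2 + X ^ 2 + (1 + 1 / (2 * ε)) * X ^ 4
      + (1 / (2 * ε)) * X ^ 6) * X ^ 2 := by positivity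
  have h2 : (0:ℝ) ≤ Q * (Q * X ^ 2 * (1 + X ^ 2) * P ^ 2
      * (X ^ 2 / (2 * ε) + (a ^ 2 + b ^ 2 + r) / μ)) * Z ^ 2 := by positivity
  have n1 : 0 ≤ μ * X ^ 2 := mul_nonneg hμ.le (sq_nonneg X)
  have n2 : 0 ≤ μ * (Q * Z ^ 2) := mul_nonneg hμ.le (mul_nonneg hQ.le (sq_nonneg Z))
  nlinarith [h1, h2, n1, n2]

private lemma hd_poly (c0 c1 c2 c3 c4 c5 c6 c7 x : ℝ) :
    HasDerivAt (fun s : ℝ => c0 + c1 * s ^ 1 + c2 * s ^ 2 + c3 * s ^ 3 + c4 * s ^ 4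
        + c5 * s ^ 5 + c6 * s ^ 6 + c7 * s ^ 7)
      (c1 + 2 * c2 * x + 3 * c3 * x ^ 2 + 4 * c4 * x ^ 3 + 5 * c5 * x ^ 4 + 6 * c6 * x ^ 5
        + 7 * c7 * x ^ 6) x := by
  have h := (((((((((hasDerivAt_pow 1 x).const_mul c1).const_add c0).add
    ((hasDerivAt_pow 2 x).const_mul c2)).add ((hasDerivAt_pow 3 x).const_mul c3)).add
    ((hasDerivAt_pow 4 x).const_mul c4)).add ((hasDerivAt_pow 5 x).const_mul c5)).add
    ((hasDerivAt_pow 6 x).const_mul c6)).add ((hasDerivAt_pow 7 x).const_mul c7))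
  refine h.congr_deriv ?_
  norm_num
  ring

private lemma hdF (A Q2 E B c0 c1 c2 c3 c4 c5 c6 c7 e0 e1 x : ℝ) :
    HasDerivAt (fun s : ℝ => A * s ^ 2
        + Q2 / 2 * (c0 + c1 * s ^ 1 + c2 * s ^ 2 + c3 * s ^ 3 + c4 * s ^ 4 + c5 * s ^ 5
            + c6 * s ^ 6 + c7 * s ^ 7) ^ 2
        + E * (e0 + e1 * s ^ 1) ^ 2 + B)
      (2 * A * x
        + Q2 * (c0 + c1 * x ^ 1 + c2 * x ^ 2 + c3 * x ^ 3 + c4 * x ^ 4 + c5 * x ^ 5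
            + c6 * x ^ 6 + c7 * x ^ 7)
          * (c1 + 2 * c2 * x + 3 * c3 * x ^ 2 + 4 * c4 * x ^ 3 + 5 * c5 * x ^ 4 + 6 * c6 * x ^ 5
            + 7 * c7 * x ^ 6)
        + E * (2 * (e0 + e1 * x) * e1)) x := by
  have hp := hd_poly c0 c1 c2 c3 c4 c5 c6 c7 x
  have hl := ((hasDerivAt_pow 1 x).const_mul e1).const_add e0
  have H := ((((hasDerivAt_pow 2 x).const_mul A).add ((hp.pow 2).const_mul (Q2 / 2))).add
    ((hl.pow 2).const_mul E)).add_const B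
  refine H.congr_deriv ?_
  norm_num
  ring

set_option maxHeartbeats 4000000 in
/-- New adaptive controller for the simplified Moore–Greitzer jet engine model: along the
closed-loop vector field the derivative of `W` is at most `−μU` and the derivative of `U` is at
most `−μU + ε(θ₁² + θ₂² − r)⁺`. -/
theorem moore_greitzer_new_controller
    (Q γ₁ γ₂ μ ε r : ℝ) (hQ : 0 < Q) (hγ₁ : 0 < γ₁) (hγ₂ : 0 < γ₂) (hμ : 0 < μ)
    (hε : 0 < ε) (hr : 0 ≤ r) (θ₁ θ₂ : ℝ)
    (M z φ G w₁ w₂ u U W : ℝ → ℝ → ℝ → ℝ → ℝ)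
    (hM : ∀ x₁ x₂ a b, M x₁ x₂ a b =
      2 * μ + (a ^ 2 + b ^ 2 + r) / 2 + x₁ ^ 2 + (1 + 1 / (2 * ε)) * x₁ ^ 4
        + (1 / (2 * ε)) * x₁ ^ 6)
    (hz : ∀ x₁ x₂ a b, z x₁ x₂ a b =
      x₂ + a * x₁ ^ 2 + b * x₁ ^ 3 + M x₁ x₂ a b * x₁)
    (hφ : ∀ x₁ x₂ a b, φ x₁ x₂ a b =
      2 * a * x₁ + 3 * b * x₁ ^ 2 + M x₁ x₂ a b
        + x₁ ^ 2 * (2 + 2 * ((2 * ε + 1) / ε) * x₁ ^ 2 + (3 / ε) * x₁ ^ 4))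
    (hG : ∀ x₁ x₂ a b, G x₁ x₂ a b =
      μ + Q * x₁ ^ 2 * (1 + x₁ ^ 2) * (φ x₁ x₂ a b) ^ 2 *
        (x₁ ^ 2 / (2 * ε) + (a ^ 2 + b ^ 2 + r) / μ))
    (hw₁ : ∀ x₁ x₂ a b, w₁ x₁ x₂ a b = γ₁ * x₁ ^ 2 * (Q * z x₁ x₂ a b * φ x₁ x₂ a b + x₁))
    (hw₂ : ∀ x₁ x₂ a b, w₂ x₁ x₂ a b = γ₂ * x₁ ^ 3 * (Q * z x₁ x₂ a b * φ x₁ x₂ a b + x₁))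
    (hu : ∀ x₁ x₂ a b, u x₁ x₂ a b =
      -Q⁻¹ * x₁ - (x₁ + a) * x₁ * w₁ x₁ x₂ a b - (x₁ ^ 2 + b) * x₁ * w₂ x₁ x₂ a b
        - G x₁ x₂ a b * z x₁ x₂ a b + φ x₁ x₂ a b * (M x₁ x₂ a b * x₁ - z x₁ x₂ a b))
    (hU : ∀ x₁ x₂ a b, U x₁ x₂ a b = 1 / 2 * x₁ ^ 2 + Q / 2 * (z x₁ x₂ a b) ^ 2)
    (hW : ∀ x₁ x₂ a b, W x₁ x₂ a b =
      U x₁ x₂ a b + 1 / (2 * γ₁) * (a - θ₁) ^ 2 + 1 / (2 * γ₂) * (b - θ₂) ^ 2) :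
    ∀ x₁ x₂ a b : ℝ,
      (deriv (fun s => W s x₂ a b) x₁ * (θ₁ * x₁ ^ 2 + θ₂ * x₁ ^ 3 + x₂)
          + deriv (fun s => W x₁ s a b) x₂ * u x₁ x₂ a b
          + deriv (fun s => W x₁ x₂ s b) a * w₁ x₁ x₂ a b
          + deriv (fun s => W x₁ x₂ a s) b * w₂ x₁ x₂ a b
        ≤ -μ * U x₁ x₂ a b) ∧
      (deriv (fun s => U s x₂ a b) x₁ * (θ₁ * x₁ ^ 2 + θ₂ * x₁ ^ 3 + x₂)
          + deriv (fun s => U x₁ s a b) x₂ * u x₁ x₂ a b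
          + deriv (fun s => U x₁ x₂ s b) a * w₁ x₁ x₂ a b
          + deriv (fun s => U x₁ x₂ a s) b * w₂ x₁ x₂ a b
        ≤ -μ * U x₁ x₂ a b + ε * max (θ₁ ^ 2 + θ₂ ^ 2 - r) 0) := by
  intro x₁ x₂ a b
  have hε' : ε ≠ 0 := ne_of_gt hε
  have hμ' : μ ≠ 0 := ne_of_gt hμ
  have hγ₁' : γ₁ ≠ 0 := ne_of_gt hγ₁
  have hγ₂' : γ₂ ≠ 0 := ne_of_gt hγ₂
  have hQc : Q * Q⁻¹ = 1 := mul_inv_cancel₀ (ne_of_gt hQ)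
  -- derivative in the x₁ direction (U)
  have hdU1 : deriv (fun s => U s x₂ a b) x₁ = x₁ + Q * z x₁ x₂ a b * φ x₁ x₂ a b := by
    have e : (fun s => U s x₂ a b) = (fun s : ℝ => 1 / 2 * s ^ 2
        + Q / 2 * (x₂ + (2 * μ + (a ^ 2 + b ^ 2 + r) / 2) * s ^ 1 + a * s ^ 2 + (b + 1) * s ^ 3
            + 0 * s ^ 4 + (1 + 1 / (2 * ε)) * s ^ 5 + 0 * s ^ 6 + 1 / (2 * ε) * s ^ 7) ^ 2
        + 0 * (0 + 0 * s ^ 1) ^ 2 + 0) := by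
      funext s
      rw [hU, hz, hM]
      ring
    rw [e, (hdF (1 / 2) Q 0 0 x₂ (2 * μ + (a ^ 2 + b ^ 2 + r) / 2) a (b + 1) 0
        (1 + 1 / (2 * ε)) 0 (1 / (2 * ε)) 0 0 x₁).deriv, hz, hφ, hM]
    field_simp
    ring
  -- derivative in the x₂ direction (U)
  have hdU2 : deriv (fun s => U x₁ s a b) x₂ = Q * z x₁ x₂ a b := by
    have e : (fun s => U x₁ s a b) = (fun s : ℝ => 0 * s ^ 2
        + Q / 2 * ((a * x₁ ^ 2 + b * x₁ ^ 3 + (2 * μ + (a ^ 2 + b ^ 2 + r) / 2 + x₁ ^ 2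
              + (1 + 1 / (2 * ε)) * x₁ ^ 4 + 1 / (2 * ε) * x₁ ^ 6) * x₁) + 1 * s ^ 1 + 0 * s ^ 2
            + 0 * s ^ 3 + 0 * s ^ 4 + 0 * s ^ 5 + 0 * s ^ 6 + 0 * s ^ 7) ^ 2
        + 0 * (0 + 0 * s ^ 1) ^ 2 + 1 / 2 * x₁ ^ 2) := by
      funext s
      rw [hU, hz, hM]
      ring
    rw [e, (hdF 0 Q 0 (1 / 2 * x₁ ^ 2)
        (a * x₁ ^ 2 + b * x₁ ^ 3 + (2 * μ + (a ^ 2 + b ^ 2 + r) / 2 + x₁ ^ 2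
          + (1 + 1 / (2 * ε)) * x₁ ^ 4 + 1 / (2 * ε) * x₁ ^ 6) * x₁)
        1 0 0 0 0 0 0 0 0 x₂).deriv, hz, hM]
    ring
  -- derivative in the a direction (U)
  have hdU3 : deriv (fun s => U x₁ x₂ s b) a = Q * z x₁ x₂ a b * (x₁ ^ 2 + a * x₁) := by
    have e : (fun s => U x₁ x₂ s b) = (fun s : ℝ => 0 * s ^ 2
        + Q / 2 * ((x₂ + b * x₁ ^ 3 + (2 * μ + (b ^ 2 + r) / 2 + x₁ ^ 2
              + (1 + 1 / (2 * ε)) * x₁ ^ 4 + 1 / (2 * ε) * x₁ ^ 6) * x₁) + x₁ ^ 2 * s ^ 1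
            + x₁ / 2 * s ^ 2 + 0 * s ^ 3 + 0 * s ^ 4 + 0 * s ^ 5 + 0 * s ^ 6 + 0 * s ^ 7) ^ 2
        + 0 * (0 + 0 * s ^ 1) ^ 2 + 1 / 2 * x₁ ^ 2) := by
      funext s
      rw [hU, hz, hM]
      ring
    rw [e, (hdF 0 Q 0 (1 / 2 * x₁ ^ 2)
        (x₂ + b * x₁ ^ 3 + (2 * μ + (b ^ 2 + r) / 2 + x₁ ^ 2
          + (1 + 1 / (2 * ε)) * x₁ ^ 4 + 1 / (2 * ε) * x₁ ^ 6) * x₁)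
        (x₁ ^ 2) (x₁ / 2) 0 0 0 0 0 0 0 a).deriv, hz, hM]
    ring
  -- derivative in the b direction (U)
  have hdU4 : deriv (fun s => U x₁ x₂ a s) b = Q * z x₁ x₂ a b * (x₁ ^ 3 + b * x₁) := by
    have e : (fun s => U x₁ x₂ a s) = (fun s : ℝ => 0 * s ^ 2
        + Q / 2 * ((x₂ + a * x₁ ^ 2 + (2 * μ + (a ^ 2 + r) / 2 + x₁ ^ 2
              + (1 + 1 / (2 * ε)) * x₁ ^ 4 + 1 / (2 * ε) * x₁ ^ 6) * x₁) + x₁ ^ 3 * s ^ 1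
            + x₁ / 2 * s ^ 2 + 0 * s ^ 3 + 0 * s ^ 4 + 0 * s ^ 5 + 0 * s ^ 6 + 0 * s ^ 7) ^ 2
        + 0 * (0 + 0 * s ^ 1) ^ 2 + 1 / 2 * x₁ ^ 2) := by
      funext s
      rw [hU, hz, hM]
      ring
    rw [e, (hdF 0 Q 0 (1 / 2 * x₁ ^ 2)
        (x₂ + a * x₁ ^ 2 + (2 * μ + (a ^ 2 + r) / 2 + x₁ ^ 2
          + (1 + 1 / (2 * ε)) * x₁ ^ 4 + 1 / (2 * ε) * x₁ ^ 6) * x₁)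
        (x₁ ^ 3) (x₁ / 2) 0 0 0 0 0 0 0 b).deriv, hz, hM]
    ring
  -- derivative in the x₁ direction (W)
  have hdW1 : deriv (fun s => W s x₂ a b) x₁ = x₁ + Q * z x₁ x₂ a b * φ x₁ x₂ a b := by
    have e : (fun s => W s x₂ a b) = (fun s : ℝ => 1 / 2 * s ^ 2
        + Q / 2 * (x₂ + (2 * μ + (a ^ 2 + b ^ 2 + r) / 2) * s ^ 1 + a * s ^ 2 + (b + 1) * s ^ 3
            + 0 * s ^ 4 + (1 + 1 / (2 * ε)) * s ^ 5 + 0 * s ^ 6 + 1 / (2 * ε) * s ^ 7) ^ 2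
        + 0 * (0 + 0 * s ^ 1) ^ 2
        + (1 / (2 * γ₁) * (a - θ₁) ^ 2 + 1 / (2 * γ₂) * (b - θ₂) ^ 2)) := by
      funext s
      rw [hW, hU, hz, hM]
      ring
    rw [e, (hdF (1 / 2) Q 0 (1 / (2 * γ₁) * (a - θ₁) ^ 2 + 1 / (2 * γ₂) * (b - θ₂) ^ 2)
        x₂ (2 * μ + (a ^ 2 + b ^ 2 + r) / 2) a (b + 1) 0
        (1 + 1 / (2 * ε)) 0 (1 / (2 * ε)) 0 0 x₁).deriv, hz, hφ, hM]
    field_simp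
    ring
  -- derivative in the x₂ direction (W)
  have hdW2 : deriv (fun s => W x₁ s a b) x₂ = Q * z x₁ x₂ a b := by
    have e : (fun s => W x₁ s a b) = (fun s : ℝ => 0 * s ^ 2
        + Q / 2 * ((a * x₁ ^ 2 + b * x₁ ^ 3 + (2 * μ + (a ^ 2 + b ^ 2 + r) / 2 + x₁ ^ 2
              + (1 + 1 / (2 * ε)) * x₁ ^ 4 + 1 / (2 * ε) * x₁ ^ 6) * x₁) + 1 * s ^ 1 + 0 * s ^ 2
            + 0 * s ^ 3 + 0 * s ^ 4 + 0 * s ^ 5 + 0 * s ^ 6 + 0 * s ^ 7) ^ 2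
        + 0 * (0 + 0 * s ^ 1) ^ 2
        + (1 / 2 * x₁ ^ 2 + 1 / (2 * γ₁) * (a - θ₁) ^ 2 + 1 / (2 * γ₂) * (b - θ₂) ^ 2)) := by
      funext s
      rw [hW, hU, hz, hM]
      ring
    rw [e, (hdF 0 Q 0 (1 / 2 * x₁ ^ 2 + 1 / (2 * γ₁) * (a - θ₁) ^ 2 + 1 / (2 * γ₂) * (b - θ₂) ^ 2)
        (a * x₁ ^ 2 + b * x₁ ^ 3 + (2 * μ + (a ^ 2 + b ^ 2 + r) / 2 + x₁ ^ 2
          + (1 + 1 / (2 * ε)) * x₁ ^ 4 + 1 / (2 * ε) * x₁ ^ 6) * x₁)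
        1 0 0 0 0 0 0 0 0 x₂).deriv, hz, hM]
    ring
  -- derivative in the a direction (W)
  have hdW3 : deriv (fun s => W x₁ x₂ s b) a
      = Q * z x₁ x₂ a b * (x₁ ^ 2 + a * x₁) + (a - θ₁) / γ₁ := by
    have e : (fun s => W x₁ x₂ s b) = (fun s : ℝ => 0 * s ^ 2
        + Q / 2 * ((x₂ + b * x₁ ^ 3 + (2 * μ + (b ^ 2 + r) / 2 + x₁ ^ 2
              + (1 + 1 / (2 * ε)) * x₁ ^ 4 + 1 / (2 * ε) * x₁ ^ 6) * x₁) + x₁ ^ 2 * s ^ 1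
            + x₁ / 2 * s ^ 2 + 0 * s ^ 3 + 0 * s ^ 4 + 0 * s ^ 5 + 0 * s ^ 6 + 0 * s ^ 7) ^ 2
        + 1 / (2 * γ₁) * (-θ₁ + 1 * s ^ 1) ^ 2
        + (1 / 2 * x₁ ^ 2 + 1 / (2 * γ₂) * (b - θ₂) ^ 2)) := by
      funext s
      rw [hW, hU, hz, hM]
      ring
    rw [e, (hdF 0 Q (1 / (2 * γ₁)) (1 / 2 * x₁ ^ 2 + 1 / (2 * γ₂) * (b - θ₂) ^ 2)
        (x₂ + b * x₁ ^ 3 + (2 * μ + (b ^ 2 + r) / 2 + x₁ ^ 2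
          + (1 + 1 / (2 * ε)) * x₁ ^ 4 + 1 / (2 * ε) * x₁ ^ 6) * x₁)
        (x₁ ^ 2) (x₁ / 2) 0 0 0 0 0 (-θ₁) 1 a).deriv, hz, hM]
    field_simp
    ring
  -- derivative in the b direction (W)
  have hdW4 : deriv (fun s => W x₁ x₂ a s) b
      = Q * z x₁ x₂ a b * (x₁ ^ 3 + b * x₁) + (b - θ₂) / γ₂ := by
    have e : (fun s => W x₁ x₂ a s) = (fun s : ℝ => 0 * s ^ 2
        + Q / 2 * ((x₂ + a * x₁ ^ 2 + (2 * μ + (a ^ 2 + r) / 2 + x₁ ^ 2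
              + (1 + 1 / (2 * ε)) * x₁ ^ 4 + 1 / (2 * ε) * x₁ ^ 6) * x₁) + x₁ ^ 3 * s ^ 1
            + x₁ / 2 * s ^ 2 + 0 * s ^ 3 + 0 * s ^ 4 + 0 * s ^ 5 + 0 * s ^ 6 + 0 * s ^ 7) ^ 2
        + 1 / (2 * γ₂) * (-θ₂ + 1 * s ^ 1) ^ 2
        + (1 / 2 * x₁ ^ 2 + 1 / (2 * γ₁) * (a - θ₁) ^ 2)) := by
      funext s
      rw [hW, hU, hz, hM]
      ring
    rw [e, (hdF 0 Q (1 / (2 * γ₂)) (1 / 2 * x₁ ^ 2 + 1 / (2 * γ₁) * (a - θ₁) ^ 2)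
        (x₂ + a * x₁ ^ 2 + (2 * μ + (a ^ 2 + r) / 2 + x₁ ^ 2
          + (1 + 1 / (2 * ε)) * x₁ ^ 4 + 1 / (2 * ε) * x₁ ^ 6) * x₁)
        (x₁ ^ 3) (x₁ / 2) 0 0 0 0 0 (-θ₂) 1 b).deriv, hz, hM]
    field_simp
    ring
  refine ⟨?_, ?_⟩
  · -- the W inequality
    rw [hdW1, hdW2, hdW3, hdW4]
    have hg1 : (a - θ₁) / γ₁ * w₁ x₁ x₂ a b
        = (a - θ₁) * (x₁ ^ 2 * (Q * z x₁ x₂ a b * φ x₁ x₂ a b + x₁)) := by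
      rw [hw₁]
      field_simp
    have hg2 : (b - θ₂) / γ₂ * w₂ x₁ x₂ a b
        = (b - θ₂) * (x₁ ^ 3 * (Q * z x₁ x₂ a b * φ x₁ x₂ a b + x₁)) := by
      rw [hw₂]
      field_simp
    have hWdot : (x₁ + Q * z x₁ x₂ a b * φ x₁ x₂ a b) * (θ₁ * x₁ ^ 2 + θ₂ * x₁ ^ 3 + x₂)
        + Q * z x₁ x₂ a b * u x₁ x₂ a b
        + (Q * z x₁ x₂ a b * (x₁ ^ 2 + a * x₁) + (a - θ₁) / γ₁) * w₁ x₁ x₂ a b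
        + (Q * z x₁ x₂ a b * (x₁ ^ 3 + b * x₁) + (b - θ₂) / γ₂) * w₂ x₁ x₂ a b
        = -(M x₁ x₂ a b * x₁ ^ 2 + Q * G x₁ x₂ a b * (z x₁ x₂ a b) ^ 2) := by
      rw [hu]
      linear_combination (-(x₁ + Q * z x₁ x₂ a b * φ x₁ x₂ a b)) * hz x₁ x₂ a b + hg1 + hg2
        - x₁ * z x₁ x₂ a b * hQc
    rw [hWdot, hM, hG, hU]
    exact keyW Q μ ε r a b x₁ (z x₁ x₂ a b) (φ x₁ x₂ a b) hQ hμ hε hr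
  · -- the U inequality
    rw [hdU1, hdU2, hdU3, hdU4]
    have hUdot : (x₁ + Q * z x₁ x₂ a b * φ x₁ x₂ a b) * (θ₁ * x₁ ^ 2 + θ₂ * x₁ ^ 3 + x₂)
        + Q * z x₁ x₂ a b * u x₁ x₂ a b
        + Q * z x₁ x₂ a b * (x₁ ^ 2 + a * x₁) * w₁ x₁ x₂ a b
        + Q * z x₁ x₂ a b * (x₁ ^ 3 + b * x₁) * w₂ x₁ x₂ a b
        = ((θ₁ - a) * x₁ ^ 2 + (θ₂ - b) * x₁ ^ 3) * (x₁ + Q * z x₁ x₂ a b * φ x₁ x₂ a b)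
          - M x₁ x₂ a b * x₁ ^ 2 - Q * G x₁ x₂ a b * (z x₁ x₂ a b) ^ 2 := by
      rw [hu]
      linear_combination (-(x₁ + Q * z x₁ x₂ a b * φ x₁ x₂ a b)) * hz x₁ x₂ a b
        - x₁ * z x₁ x₂ a b * hQc
    rw [hUdot, hM, hG, hU]
    exact key Q μ ε r θ₁ θ₂ a b x₁ (z x₁ x₂ a b) (φ x₁ x₂ a b) hQ hμ hε hr


end
end
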